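/- arXiv:1602.06031 — 6 statements merged into one kernel-verified Lean document; each statement's English description precedes it below -/
import Mathlib

section
/- Let n ≥ 3 and k be an integer with 1 < k < n/2, and let p satisfy nk/(n-2k) < p < (n+2)k/(n-2k). Then the initial value problem -(1/k)·C(n-1,k-1)·(r^{n-k}|u'(r)|^{k-1}u'(r))' = r^{n-1}·u(r)^p on (0,∞), with u(r) > 0 for all r ≥ 0, u'(0) = 0 and u(0) = ρ > 0, has no regular solution u. -/
open MeasureTheory Real Set Filter Asymptotics

noncomputable section

namespace KHessianPaper

/-- The binomial coefficient `C(n-1, k-1)` as a real number. -/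
def binomC (n k : ℕ) : ℝ := ((n - 1).choose (k - 1) : ℝ)

/-- The flux `w(r) = r^{n-k} |u'(r)|^{k-1} u'(r)`. -/
def flux (n k : ℕ) (u : ℝ → ℝ) (r : ℝ) : ℝ :=
  r ^ (n - k) * |deriv u r| ^ (k - 1) * deriv u r

/-- `u` is a regular solution of the radial `k`-Hessian initial value problem
`-(1/k) C(n-1,k-1) (r^{n-k} |u'|^{k-1} u')' = r^{n-1} u^p`, `u > 0`, `u'(0) = 0`, `u(0) = ρ`. -/
structure IsRegularSolution (n k : ℕ) (p ρ : ℝ) (u : ℝ → ℝ) : Prop where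
  contDiffOn : ContDiffOn ℝ 1 u (Ici 0)
  deriv_zero : derivWithin u (Ici 0) 0 = 0
  init : u 0 = ρ
  pos : ∀ r : ℝ, 0 ≤ r → 0 < u r
  eqn : ∀ r : ℝ, 0 < r →
    HasDerivAt (flux n k u) (-((k : ℝ) / binomC n k) * r ^ (n - 1) * u r ^ p) r
  radial_smooth : ContDiff ℝ 2 (fun x : EuclideanSpace ℝ (Fin n) => -u ‖x‖)

/-- `φ : [0,∞) → ℝ` is the radial profile of a smooth compactly supported function on `ℝⁿ`. -/
def MemWStar (n : ℕ) (φ : ℝ → ℝ) : Prop :=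
  ∃ Φ : EuclideanSpace ℝ (Fin n) → ℝ,
    ContDiff ℝ (⊤ : ℕ∞) Φ ∧ HasCompactSupport Φ ∧ ∀ x, Φ x = φ ‖x‖

/-- The weak form of the equation tested against `φ`. -/
def WeakEqn (n k : ℕ) (p : ℝ) (u φ : ℝ → ℝ) : Prop :=
  ∫ r in Ioi (0 : ℝ),
      ((1 / (k : ℝ)) * binomC n k * r ^ (n - k) * |deriv u r| ^ (k - 1) * deriv u r
          * deriv φ r
        - r ^ (n - 1) * u r ^ p * φ r) = 0

/-- The second-variation quadratic form `Q_u(φ)`. -/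
def Qform (n k : ℕ) (p : ℝ) (u φ : ℝ → ℝ) : ℝ :=
  binomC n k * ∫ r in Ioi (0 : ℝ), r ^ (n - k) * |deriv u r| ^ (k - 1) * (deriv φ r) ^ 2
    - p * ∫ r in Ioi (0 : ℝ), r ^ (n - 1) * u r ^ (p - 1) * (φ r) ^ 2

/-- `u` is a positive stable solution of the radial `k`-Hessian equation. -/
def IsStableSolution (n k : ℕ) (p : ℝ) (u : ℝ → ℝ) : Prop :=
  (∀ r : ℝ, 0 < r → 0 < u r) ∧ ContDiffOn ℝ 1 u (Ioi 0) ∧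
  (∀ φ, MemWStar n φ → WeakEqn n k p u φ) ∧
  (∀ φ, MemWStar n φ → 0 ≤ Qform n k p u φ)

/-- `u` is a positive stable solution on `(R,∞)` of the radial `k`-Hessian equation. -/
def IsStableSolutionOn (n k : ℕ) (p : ℝ) (R : ℝ) (u : ℝ → ℝ) : Prop :=
  (∀ r : ℝ, 0 < r → 0 < u r) ∧ ContDiffOn ℝ 1 u (Ioi 0) ∧
  (∀ φ, MemWStar n φ → WeakEqn n k p u φ) ∧
  (∀ φ : ℝ → ℝ, ContDiff ℝ (⊤ : ℕ∞) φ → HasCompactSupport φ → tsupport φ ⊆ Ioi R →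
    0 ≤ Qform n k p u φ)

/-- The constant `A` in the singular solution `u_s(r) = A r^{-2k/(p-k)}`. -/
def Aconst (n k : ℕ) (p : ℝ) : ℝ :=
  ((1 / (k : ℝ)) * binomC n k) ^ (1 / (p - k))
    * (2 * (k : ℝ) / (p - (k : ℝ))) ^ ((k : ℝ) / (p - k))
    * ((n : ℝ) - 2 * p * k / (p - k)) ^ (1 / (p - k))

/-- The singular solution `u_s(r) = A r^{-2k/(p-k)}`. -/
def uSing (n k : ℕ) (p : ℝ) (r : ℝ) : ℝ := Aconst n k p * r ^ (-(2 * (k : ℝ) / (p - k)))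

/-- The Joseph–Lundgren exponent (finite form, relevant when `n > 2k+8`). -/
def pJL (n k : ℕ) : ℝ :=
  ((k : ℝ) * ((n : ℝ) ^ 2 - 2 * ((k : ℝ) + 3) * (n : ℝ) + 4 * (k : ℝ))
      + 4 * (k : ℝ) * Real.sqrt (2 * ((k : ℝ) + 1) * (n : ℝ) - 4 * (k : ℝ)))
    / (((n : ℝ) - 2 * (k : ℝ)) * ((n : ℝ) - 2 * (k : ℝ) - 8))

/-- The exponent `p* = k(n+2k)/(n-2k)`. -/
def pStar (n k : ℕ) : ℝ := (k : ℝ) * ((n : ℝ) + 2 * (k : ℝ)) / ((n : ℝ) - 2 * (k : ℝ))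

set_option maxHeartbeats 1000000 in
/-- no regular solution in the subcritical range `p_se < p < p_so`. -/
theorem no_regular_solution_subcritical (n k : ℕ) (p ρ : ℝ)
    (hn : 3 ≤ n) (hk1 : 1 < k) (hk2 : 2 * k < n) (hρ : 0 < ρ)
    (hp1 : (n : ℝ) * k / ((n : ℝ) - 2 * k) < p)
    (hp2 : p < ((n : ℝ) + 2) * k / ((n : ℝ) - 2 * k)) :
    ¬ ∃ u : ℝ → ℝ, IsRegularSolution n k p ρ u := by
  rintro ⟨u, hu⟩
  obtain ⟨hCD, hd0, hinit, hpos, heqn, hsm⟩ := hu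
  have hk0 : 0 < k := by omega
  have hkn : k < n := by omega
  -- u differentiable at r > 0 (with HasDerivAt)
  have hu_diff : ∀ r : ℝ, 0 < r → HasDerivAt u (deriv u r) r := by
    intro r hr
    have h1 : Ici (0:ℝ) ∈ nhds r := Ici_mem_nhds hr
    have := (hCD.differentiableOn one_ne_zero) r (le_of_lt hr)
    exact ((this.differentiableAt h1)).hasDerivAt
  -- continuity of u on Ici 0
  have hu_cont : ContinuousOn u (Ici 0) := hCD.continuousOn
  -- the second derivative exists at each r > 0
  have hu2 : ∀ r : ℝ, 0 < r → HasDerivAt (deriv u) (deriv (deriv u) r) r := by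
    intro r hr
    set v : EuclideanSpace ℝ (Fin n) := EuclideanSpace.single (⟨0, by omega⟩ : Fin n) (1:ℝ) with hv
    have hnv : ‖v‖ = 1 := by simp [hv]
    have hline : ContDiff ℝ 2 (fun t : ℝ => t • v) := (contDiff_id.smul contDiff_const)
    have hg : ContDiff ℝ 2 (fun t : ℝ => -u ‖t • v‖) := hsm.comp hline
    have hg2 : ContDiff ℝ 2 (fun t : ℝ => -(-u ‖t • v‖)) := hg.neg
    have hval : (fun t : ℝ => -(-u ‖t • v‖)) =ᶠ[nhds r] u := by
      filter_upwards [Ioi_mem_nhds hr] with t ht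
      simp only [norm_smul, hnv, mul_one, Real.norm_eq_abs, abs_of_pos (by exact mem_Ioi.mp ht), neg_neg]
    have hdd : ContDiff ℝ 1 (deriv (fun t : ℝ => -(-u ‖t • v‖))) := by
      rw [show (2:WithTop ℕ∞) = (1:WithTop ℕ∞) + 1 from by norm_num] at hg2
      exact (contDiff_succ_iff_deriv.mp hg2).2.2
    have hdeq : deriv (fun t : ℝ => -(-u ‖t • v‖)) =ᶠ[nhds r] deriv u := hval.deriv
    have : DifferentiableAt ℝ (deriv u) r := by
      have := (hdd.differentiable one_ne_zero) r
      exact this.congr_of_eventuallyEq hdeq.symm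
    exact this.hasDerivAt
  -- constants
  set lam : ℝ := (k:ℝ)/binomC n k with hlam_def
  have hC : 0 < binomC n k := by
    have : 0 < (n-1).choose (k-1) := Nat.choose_pos (by omega)
    unfold binomC
    exact_mod_cast this
  have hlam : 0 < lam := div_pos (by exact_mod_cast hk0) hC
  have hn2k : (0:ℝ) < (n:ℝ) - 2*k := by
    have : (2*k:ℕ) < n := hk2
    have := (Nat.cast_lt (α := ℝ)).mpr this
    push_cast at this ⊢; linarith
  have hpk : (k:ℝ) < p := by
    have h1 : (k:ℝ) ≤ (n:ℝ)*k/((n:ℝ)-2*k) := by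
      rw [le_div_iff₀ hn2k]
      have hk0' : (0:ℝ) < k := by exact_mod_cast hk0
      nlinarith
    linarith
  have hp0 : 0 < p := lt_trans (by exact_mod_cast hk0) hpk
  -- continuity of deriv u on Ioi 0
  have hd_cont : ∀ r : ℝ, 0 < r → ContinuousAt (deriv u) r := by
    intro r hr; exact (hu2 r hr).differentiableAt.continuousAt
  -- deriv u tends to 0 at 0+
  have hd0' : Tendsto (deriv u) (nhdsWithin 0 (Ioi 0)) (nhds 0) := by
    have h1 : ContinuousOn (derivWithin u (Ici 0)) (Ici 0) :=
      hCD.continuousOn_derivWithin (uniqueDiffOn_Ici 0) le_rfl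
    have h2 : Tendsto (derivWithin u (Ici 0)) (nhdsWithin 0 (Ici 0)) (nhds 0) := by
      have := (h1 0 (by exact self_mem_Ici)).tendsto
      rwa [hd0] at this
    have h3 : Tendsto (derivWithin u (Ici 0)) (nhdsWithin 0 (Ioi 0)) (nhds 0) :=
      h2.mono_left (nhdsWithin_mono _ Ioi_subset_Ici_self)
    apply h3.congr'
    filter_upwards [self_mem_nhdsWithin] with s hs
    exact derivWithin_of_mem_nhds (Ici_mem_nhds hs)
  -- flux tends to 0 at 0+
  have hw0 : Tendsto (flux n k u) (nhdsWithin 0 (Ioi 0)) (nhds 0) := by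
    have t1 : Tendsto (fun s:ℝ => s^(n-k)) (nhdsWithin 0 (Ioi 0)) (nhds 0) := by
      have := ((continuous_pow (n-k)).tendsto (0:ℝ)).mono_left (nhdsWithin_le_nhds (s := Ioi (0:ℝ)))
      simpa [zero_pow (by omega : n-k ≠ 0)] using this
    have t2 : Tendsto (fun s => |deriv u s|^(k-1)) (nhdsWithin 0 (Ioi 0)) (nhds 0) := by
      have := (hd0'.abs).pow (k-1)
      simpa [zero_pow (by omega : k-1 ≠ 0)] using this
    have := (t1.mul t2).mul hd0'
    simp only [mul_zero] at this
    exact this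
  -- flux strictly antitone on Ioi 0
  have hw_anti : StrictAntiOn (flux n k u) (Ioi 0) := by
    apply strictAntiOn_of_deriv_neg (convex_Ioi 0)
    · intro x hx; exact ((heqn x hx).differentiableAt.continuousAt).continuousWithinAt
    · intro x hx
      rw [interior_Ioi] at hx
      rw [(heqn x hx).deriv]
      have h1 : (0:ℝ) < x^(n-1) := pow_pos hx _
      have h2 : (0:ℝ) < u x ^ p := Real.rpow_pos_of_pos (hpos x (le_of_lt hx)) _
      nlinarith [mul_pos (mul_pos hlam h1) h2]
  -- flux negative on Ioi 0
  have hw_neg : ∀ r : ℝ, 0 < r → flux n k u r < 0 := by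
    intro r hr
    have h2 : flux n k u (r/2) ≤ 0 := by
      apply ge_of_tendsto hw0
      filter_upwards [Ioo_mem_nhdsGT_of_mem (show (0:ℝ) ∈ Ico (0:ℝ) (r/2) by constructor <;> [rfl; positivity])] with s hs
      exact le_of_lt (hw_anti (mem_Ioi.mpr hs.1) (by simp only [mem_Ioi]; linarith [hs.2]) hs.2)
    have h3 : flux n k u r < flux n k u (r/2) :=
      hw_anti (by simp only [mem_Ioi]; positivity) (mem_Ioi.mpr hr) (by linarith)
    linarith
  -- deriv u negative on Ioi 0
  have hd_neg : ∀ r : ℝ, 0 < r → deriv u r < 0 := by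
    intro r hr
    by_contra h
    push_neg at h
    have : 0 ≤ flux n k u r := by
      have : (0:ℝ) ≤ r ^ (n-k) * |deriv u r|^(k-1) := by positivity
      exact mul_nonneg this h
    linarith [hw_neg r hr]
  -- u strictly antitone on Ici 0
  have hu_anti : StrictAntiOn u (Ici 0) := by
    apply strictAntiOn_of_deriv_neg (convex_Ici 0) hu_cont
    intro x hx; rw [interior_Ici] at hx
    rw [(hu_diff x hx).deriv]
    exact hd_neg x hx
  -- |a|^(k-1) * a = -((-a)^k) for a < 0
  have habs : ∀ a : ℝ, a < 0 → |a|^(k-1) * a = -((-a)^k) := by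
    intro a ha
    rw [abs_of_neg ha]
    have : (-a)^(k-1) * a = -((-a)^(k-1) * (-a)) := by ring
    rw [this, ← pow_succ]
    congr 2
    omega
  have hflux_eq : ∀ r : ℝ, 0 < r → flux n k u r = -(r^(n-k) * (-(deriv u r))^k) := by
    intro r hr
    unfold flux
    rw [mul_assoc, habs _ (hd_neg r hr)]
    ring
  -- key pointwise lower bound on -flux
  have hL5 : ∀ r : ℝ, 0 < r → lam / 2^n * (r^n * u r ^ p) ≤ -flux n k u r := by
    intro r hr
    have hab : r/2 < r := by linarith
    have hfc : ContinuousOn (flux n k u) (Icc (r/2) r) := by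
      intro x hx
      have hx0 : 0 < x := lt_of_lt_of_le (by positivity) hx.1
      exact ((heqn x hx0).differentiableAt.continuousAt).continuousWithinAt
    have hff' : ∀ x ∈ Ioo (r/2) r, HasDerivAt (flux n k u) (-lam * x ^ (n - 1) * u x ^ p) x := by
      intro x hx
      exact heqn x (lt_trans (by positivity) hx.1)
    obtain ⟨c, hc, hceq⟩ := exists_hasDerivAt_eq_slope (flux n k u) _ hab hfc hff'
    -- flux r = flux (r/2) + (r - r/2) * F'(c)
    have hr2 : (0:ℝ) < r/2 := by positivity
    have hc0 : 0 < c := lt_trans hr2 hc.1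
    have hwr2 : flux n k u (r/2) < 0 := hw_neg _ hr2
    have hslope : flux n k u r - flux n k u (r/2) = (r - r/2) * (-lam * c ^ (n-1) * u c ^ p) := by
      rw [eq_div_iff (by linarith : r - r/2 ≠ 0)] at hceq
      linarith [hceq]
    have hcp : (r/2)^(n-1) ≤ c^(n-1) := pow_le_pow_left₀ (le_of_lt hr2) (le_of_lt hc.1) _
    have hup : u r ^ p ≤ u c ^ p := by
      apply Real.rpow_le_rpow (le_of_lt (hpos r (le_of_lt hr))) _ (le_of_lt hp0)
      exact le_of_lt (hu_anti (le_of_lt hc0) (le_of_lt hr) hc.2)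
    have hucp : 0 < u c ^ p := Real.rpow_pos_of_pos (hpos c (le_of_lt hc0)) _
    have hurp : 0 < u r ^ p := Real.rpow_pos_of_pos (hpos r (le_of_lt hr)) _
    have h1 : lam * (r/2)^(n-1) * (u r ^ p) ≤ lam * c^(n-1) * (u c ^ p) := by
      have ha : 0 ≤ lam * (r/2)^(n-1) := by positivity
      have hb : lam * (r/2)^(n-1) ≤ lam * c^(n-1) := mul_le_mul_of_nonneg_left hcp (le_of_lt hlam)
      exact mul_le_mul hb hup (le_of_lt hurp) (le_trans ha hb)
    have h2 : (r - r/2) * (lam * c^(n-1) * u c^p) ≥ (r/2) * (lam * (r/2)^(n-1) * u r^p) := by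
      have : r - r/2 = r/2 := by ring
      rw [this]
      exact mul_le_mul_of_nonneg_left h1 (le_of_lt hr2)
    have h3 : (r/2) * (lam * (r/2)^(n-1) * u r ^ p) = lam * ((r/2)^n * u r ^ p) := by
      have : (r/2)^(n-1) * (r/2) = (r/2)^n := by
        rw [← pow_succ]
        congr 1
        omega
      linear_combination lam * u r ^ p * this
    have h4 : (r/2)^n = r^n/2^n := div_pow r 2 n
    have hsl' : flux n k u r - flux n k u (r/2) = -((r - r/2) * (lam * c ^ (n-1) * u c ^ p)) := by
      linear_combination hslope
    have h5 : flux n k u r ≤ - (lam * ((r/2)^n * u r ^ p)) := by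
      linarith [h2, h3, hwr2, hsl']
    rw [h4] at h5
    have heq : lam * (r ^ n / 2 ^ n * u r ^ p) = lam / 2^n * (r^n * u r ^ p) := by ring
    linarith [h5, heq]
  -- the pointwise ODE bound
  set c1 : ℝ := (lam/2^n) ^ ((k:ℝ)⁻¹) with hc1_def
  have hc1 : 0 < c1 := Real.rpow_pos_of_pos (by positivity) _
  have hODE : ∀ r : ℝ, 0 < r → c1 * r * u r ^ (p/(k:ℝ)) ≤ -(deriv u r) := by
    intro r hr
    set X : ℝ := -(deriv u r) with hX_def
    have hX : 0 < X := by simp only [hX_def]; linarith [hd_neg r hr]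
    have h1 : lam/2^n * (r^n * u r ^ p) ≤ r^(n-k) * X^k := by
      have := hL5 r hr
      rw [hflux_eq r hr] at this
      simpa using this
    have hrk : (0:ℝ) < r^(n-k) := pow_pos hr _
    have hnn : (n-k)+k = n := by omega
    have h2 : lam/2^n * (r^k * u r ^ p) ≤ X^k := by
      have hrw : r^n = r^(n-k) * r^k := by rw [← pow_add, hnn]
      rw [hrw] at h1
      have h3 : r^(n-k) * (lam/2^n * (r^k * u r ^ p)) ≤ r^(n-k) * X^k := by
        calc r^(n-k) * (lam/2^n * (r^k * u r ^ p)) = lam/2^n * (r^(n-k) * r^k * u r ^ p) := by ring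
        _ ≤ r^(n-k) * X^k := h1
      exact le_of_mul_le_mul_left h3 hrk
    have hup : (0:ℝ) < u r := hpos r (le_of_lt hr)
    have hkey : (c1 * r * u r ^ (p/(k:ℝ)))^k = lam/2^n * (r^k * u r ^ p) := by
      rw [mul_pow, mul_pow]
      have e1 : c1^k = lam/2^n := Real.rpow_inv_natCast_pow (by positivity) (by omega)
      have e2 : (u r ^ (p/(k:ℝ)))^k = u r ^ p := by
        rw [← Real.rpow_natCast (u r ^ (p/(k:ℝ))) k, ← Real.rpow_mul (le_of_lt hup),
          div_mul_cancel₀]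
        exact_mod_cast (by positivity : (0:ℝ) < (k:ℝ)).ne'
      rw [e1, e2]; ring
    have h4 : (c1 * r * u r ^ (p/(k:ℝ)))^k ≤ X^k := by rw [hkey]; exact h2
    exact (pow_le_pow_iff_left₀ (by positivity) (le_of_lt hX) (by omega)).mp h4
  -- decay estimate
  set beta : ℝ := (p - k)/k with hbeta_def
  have hbeta : 0 < beta := by
    apply div_pos (by linarith) (by exact_mod_cast hk0)
  set B : ℝ := beta * c1 / 2 with hB_def
  have hB : 0 < B := by positivity
  set V : ℝ → ℝ := fun s => u s ^ (-beta) - B * s^2 with hV_def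
  have hVd : ∀ r : ℝ, 0 < r → HasDerivAt V (deriv u r * (-beta) * u r ^ (-beta-1) - B * (2*r)) r := by
    intro r hr
    have h1 : HasDerivAt (fun s => u s ^ (-beta)) (deriv u r * (-beta) * u r ^ (-beta-1)) r := by
      have := (hu_diff r hr).rpow_const (p := -beta) (Or.inl (ne_of_gt (hpos r (le_of_lt hr))))
      simpa [sub_eq_add_neg] using this
    have h2 : HasDerivAt (fun s : ℝ => B * s^2) (B * (2*r)) r := by
      have := (hasDerivAt_pow 2 r).const_mul B
      simpa using this
    exact h1.sub h2
  have hVd_nonneg : ∀ r : ℝ, 0 < r → 0 ≤ deriv u r * (-beta) * u r ^ (-beta-1) - B * (2*r) := by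
    intro r hr
    have hup : (0:ℝ) < u r := hpos r (le_of_lt hr)
    have h1 := hODE r hr
    have h2 : beta * u r ^ (-beta-1) * (c1 * r * u r ^ (p/(k:ℝ))) ≤ beta * u r ^ (-beta-1) * (-(deriv u r)) :=
      mul_le_mul_of_nonneg_left h1 (by positivity)
    have h3 : u r ^ (-beta-1) * u r ^ (p/(k:ℝ)) = 1 := by
      rw [← Real.rpow_add hup]
      have : -beta - 1 + p/(k:ℝ) = 0 := by
        rw [hbeta_def]
        field_simp
        ring
      rw [this, Real.rpow_zero]
    have h4 : beta * u r ^ (-beta-1) * (c1 * r * u r ^ (p/(k:ℝ))) = beta * c1 * r := by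
      calc beta * u r ^ (-beta-1) * (c1 * r * u r ^ (p/(k:ℝ)))
        = beta * c1 * r * (u r ^ (-beta-1) * u r ^ (p/(k:ℝ))) := by ring
      _ = beta * c1 * r := by rw [h3]; ring
    rw [h4] at h2
    have : B * (2*r) = beta * c1 * r := by rw [hB_def]; ring
    rw [this]
    linarith [h2]
  have hVmono : MonotoneOn V (Ici 0) := by
    apply monotoneOn_of_deriv_nonneg (convex_Ici 0)
    · apply ContinuousOn.sub
      · exact hu_cont.rpow_const (fun x hx => Or.inl (ne_of_gt (hpos x hx)))
      · exact (continuous_const.mul (continuous_pow 2)).continuousOn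
    · intro x hx
      rw [interior_Ici] at hx
      exact (hVd x hx).differentiableAt.differentiableWithinAt
    · intro x hx
      rw [interior_Ici] at hx
      rw [(hVd x hx).deriv]
      exact hVd_nonneg x hx
  have hVbound : ∀ r : ℝ, 0 < r → B * r^2 ≤ u r ^ (-beta) := by
    intro r hr
    have h1 : V 0 ≤ V r := hVmono self_mem_Ici (le_of_lt hr) (le_of_lt hr)
    have h2 : V 0 = ρ ^ (-beta) := by simp [hV_def, hinit]
    have h3 : 0 < ρ ^ (-beta) := Real.rpow_pos_of_pos hρ _
    rw [h2] at h1
    simp only [hV_def] at h1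
    linarith [h1, h3]
  set alpha : ℝ := 2/beta with halpha_def
  have halpha : 0 < alpha := by positivity
  set C0 : ℝ := B ^ (-beta⁻¹) with hC0_def
  have hC0 : 0 < C0 := Real.rpow_pos_of_pos hB _
  have hdecay : ∀ r : ℝ, 0 < r → u r ≤ C0 * r ^ (-alpha) := by
    intro r hr
    have hup : (0:ℝ) < u r := hpos r (le_of_lt hr)
    have h1 := hVbound r hr
    have h2 : (u r ^ (-beta)) ^ (-beta⁻¹) ≤ (B * r^2) ^ (-beta⁻¹) := by
      apply Real.rpow_le_rpow_of_nonpos (by positivity) h1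
      simp only [Left.neg_nonpos_iff]
      positivity
    have h3 : (u r ^ (-beta)) ^ (-beta⁻¹) = u r := by
      rw [← Real.rpow_mul (le_of_lt hup)]
      rw [show (-beta) * (-beta⁻¹) = 1 by field_simp]
      exact Real.rpow_one _
    have h4 : (B * r^2) ^ (-beta⁻¹) = C0 * r ^ (-alpha) := by
      rw [Real.mul_rpow (le_of_lt hB) (by positivity), hC0_def]
      congr 1
      rw [← Real.rpow_natCast r 2, ← Real.rpow_mul (le_of_lt hr)]
      congr 1
      rw [halpha_def]
      field_simp
      norm_num
    rw [h3, h4] at h2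
    exact h2
  -- exponent bookkeeping
  have halpha_eq : alpha = 2*(k:ℝ)/(p-(k:ℝ)) := by
    rw [halpha_def, hbeta_def]
    field_simp
  have hpk' : (0:ℝ) < p - k := by linarith
  have hk0' : (0:ℝ) < (k:ℝ) := by exact_mod_cast hk0
  have hp1' : (n:ℝ)*k < p*((n:ℝ)-2*k) := by
    rw [div_lt_iff₀ hn2k] at hp1
    linarith
  have hp2' : p*((n:ℝ)-2*k) < ((n:ℝ)+2)*k := by
    rw [lt_div_iff₀ hn2k] at hp2
    linarith
  set sigma : ℝ := (n:ℝ) - alpha * p with hsigma_def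
  have hsigma : 0 < sigma := by
    rw [hsigma_def, halpha_eq]
    rw [sub_pos, div_mul_eq_mul_div, div_lt_iff₀ hpk']
    linarith
  -- integral bound on -flux for r ≥ 1
  have hcont_integrand : ∀ r : ℝ, 1 ≤ r → ContinuousOn (fun s : ℝ => -lam * s^(n-1) * u s ^ p) (uIcc 1 r) := by
    intro r hr
    have hsub : uIcc (1:ℝ) r ⊆ Ici 0 := by
      rw [uIcc_of_le hr]
      intro x hx
      exact le_trans (by norm_num) hx.1
    apply ContinuousOn.mul
    · exact (continuous_const.mul (continuous_pow (n-1))).continuousOn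
    · exact ((hu_cont.mono hsub).rpow_const (fun x hx => Or.inl (ne_of_gt (hpos x (hsub hx)))))
  set C1 : ℝ := (-flux n k u 1) + lam * C0^p / sigma with hC1_def
  have hC1 : 0 < C1 := by
    have := hw_neg 1 one_pos
    have h2 : 0 < lam * C0^p / sigma := by
      have : (0:ℝ) < C0 ^ p := Real.rpow_pos_of_pos hC0 _
      positivity
    rw [hC1_def]
    linarith
  have hwbound : ∀ r : ℝ, 1 ≤ r → -flux n k u r ≤ C1 * r ^ sigma := by
    intro r hr
    have hr0 : (0:ℝ) < r := lt_of_lt_of_le one_pos hr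
    have hftc : ∫ s in (1:ℝ)..r, -lam * s^(n-1) * u s ^ p = flux n k u r - flux n k u 1 := by
      apply intervalIntegral.integral_eq_sub_of_hasDerivAt
      · intro x hx
        rw [uIcc_of_le hr] at hx
        exact heqn x (lt_of_lt_of_le one_pos hx.1)
      · exact (hcont_integrand r hr).intervalIntegrable
    have hmono : ∫ s in (1:ℝ)..r, lam * s^(n-1) * u s ^ p ≤ ∫ s in (1:ℝ)..r, lam * C0^p * s^(sigma-1) := by
      apply intervalIntegral.integral_mono_on hr
      · have : ContinuousOn (fun s : ℝ => lam * s^(n-1) * u s ^ p) (uIcc 1 r) := by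
          have := hcont_integrand r hr
          have heq : (fun s : ℝ => lam * s^(n-1) * u s ^ p) = (fun s : ℝ => -(-lam * s^(n-1) * u s ^ p)) := by
            funext s; ring
          rw [heq]
          exact this.neg
        exact this.intervalIntegrable
      · apply ContinuousOn.intervalIntegrable
        apply ContinuousOn.mul continuousOn_const
        apply ContinuousOn.rpow_const continuousOn_id
        intro x hx
        rw [uIcc_of_le hr] at hx
        exact Or.inl (by simp only [id]; linarith [hx.1])
      · intro x hx
        have hx0 : (0:ℝ) < x := lt_of_lt_of_le one_pos hx.1
        have hux : u x ≤ C0 * x ^ (-alpha) := hdecay x hx0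
        have hux0 : 0 ≤ u x := le_of_lt (hpos x (le_of_lt hx0))
        have h1 : u x ^ p ≤ (C0 * x^(-alpha))^p := Real.rpow_le_rpow hux0 hux (le_of_lt hp0)
        have h2 : (C0 * x^(-alpha))^p = C0^p * x^(-alpha*p) := by
          rw [Real.mul_rpow (le_of_lt hC0) (le_of_lt (Real.rpow_pos_of_pos hx0 _)),
            ← Real.rpow_mul (le_of_lt hx0)]
        have h3 : (x:ℝ)^(n-1) = x^((n:ℝ)-1) := by
          rw [← Real.rpow_natCast x (n-1)]
          congr 1
          push_cast [Nat.cast_sub (by omega : 1 ≤ n)]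
          ring
        have h4 : x^((n:ℝ)-1) * x^(-alpha*p) = x^(sigma-1) := by
          rw [← Real.rpow_add hx0]
          congr 1
          rw [hsigma_def]; ring
        calc lam * x^(n-1) * u x ^ p ≤ lam * x^(n-1) * (C0^p * x^(-alpha*p)) := by
              apply mul_le_mul_of_nonneg_left _ (by positivity)
              rw [← h2]; exact h1
        _ = lam * C0^p * x^(sigma-1) := by rw [h3, ← h4]; ring
    have hint2 : ∫ s in (1:ℝ)..r, lam * C0^p * s^(sigma-1) = lam * C0^p * ((r^sigma - 1)/sigma) := by
      rw [intervalIntegral.integral_const_mul, integral_rpow (Or.inl (by linarith))]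
      norm_num
    have hneg : ∫ s in (1:ℝ)..r, -lam * s^(n-1) * u s ^ p = -∫ s in (1:ℝ)..r, lam * s^(n-1) * u s ^ p := by
      rw [← intervalIntegral.integral_neg]
      congr 1; funext s; ring
    have h5 : -flux n k u r = -flux n k u 1 + ∫ s in (1:ℝ)..r, lam * s^(n-1) * u s ^ p := by
      rw [hneg] at hftc
      linarith [hftc]
    have hone : (1:ℝ) ≤ r^sigma := Real.one_le_rpow hr (le_of_lt hsigma)
    have h6 : lam * C0^p * ((r^sigma-1)/sigma) ≤ lam * C0^p / sigma * r^sigma := by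
      have hcc : (0:ℝ) < lam * C0^p := by
        have : (0:ℝ) < C0 ^ p := Real.rpow_pos_of_pos hC0 _
        positivity
      have e : lam*C0^p/sigma*r^sigma - lam*C0^p*((r^sigma-1)/sigma) = (lam*C0^p)/sigma := by
        field_simp
        ring
      have e2 : 0 < (lam*C0^p)/sigma := by positivity
      linarith [e, e2]
    rw [hC1_def]
    have h7 : -flux n k u 1 ≤ (-flux n k u 1) * r^sigma := by
      have hw1 : 0 < -flux n k u 1 := by linarith [hw_neg 1 one_pos]
      nlinarith [hone, hw1]
    calc -flux n k u r ≤ -flux n k u 1 + lam * C0^p * ((r^sigma-1)/sigma) := by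
          rw [h5]; linarith [hmono, hint2]
    _ ≤ (-flux n k u 1) * r^sigma + lam * C0^p/sigma * r^sigma := by linarith [h6, h7]
    _ = (-flux n k u 1 + lam * C0^p/sigma) * r^sigma := by ring
  -- bound on -deriv u for r ≥ 1
  set C2 : ℝ := C1 ^ ((k:ℝ)⁻¹) with hC2_def
  have hC2 : 0 < C2 := Real.rpow_pos_of_pos hC1 _
  have hdbound : ∀ r : ℝ, 1 ≤ r → -(deriv u r) ≤ C2 * r^(-(alpha+1)) := by
    intro r hr
    have hr0 : (0:ℝ) < r := lt_of_lt_of_le one_pos hr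
    have hX : (0:ℝ) < -(deriv u r) := by linarith [hd_neg r hr0]
    have hfe : -flux n k u r = r^(n-k) * (-(deriv u r))^k := by
      rw [hflux_eq r hr0]; ring
    have h1 : r^(n-k) * (-(deriv u r))^k ≤ C1 * r^sigma := by
      rw [← hfe]; exact hwbound r hr
    have hcast : (r:ℝ)^(n-k) = r^((n:ℝ)-(k:ℝ)) := by
      rw [← Real.rpow_natCast r (n-k)]
      congr 1
      push_cast [Nat.cast_sub (by omega : k ≤ n)]
      ring
    have hrnk : (0:ℝ) < r^((n:ℝ)-(k:ℝ)) := Real.rpow_pos_of_pos hr0 _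
    have h2 : (-(deriv u r))^k ≤ C1 * r^(sigma - ((n:ℝ)-(k:ℝ))) := by
      rw [Real.rpow_sub hr0, mul_div_assoc']
      rw [le_div_iff₀ hrnk]
      calc (-(deriv u r))^k * r^((n:ℝ)-(k:ℝ)) = r^(n-k) * (-(deriv u r))^k := by
            rw [hcast]; ring
      _ ≤ C1 * r^sigma := h1
    have hexp : sigma - ((n:ℝ)-(k:ℝ)) = (-(alpha+1))*(k:ℝ) := by
      rw [hsigma_def, halpha_eq]
      field_simp
      ring
    have h3 : (C2 * r^(-(alpha+1)))^k = C1 * r^(sigma - ((n:ℝ)-(k:ℝ))) := by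
      rw [mul_pow, hC2_def, Real.rpow_inv_natCast_pow (le_of_lt hC1) (by omega)]
      congr 1
      rw [← Real.rpow_natCast (r^(-(alpha+1))) k, ← Real.rpow_mul (le_of_lt hr0), hexp]
    apply (pow_le_pow_iff_left₀ (le_of_lt hX) (by positivity) (by omega : k ≠ 0)).mp
    rw [h3]
    exact h2
  -- exponent decompositions
  obtain ⟨k1, hk1e⟩ : ∃ k1, k = k1 + 1 := ⟨k-1, by omega⟩
  obtain ⟨q, hqe⟩ : ∃ q, n = k + q + 1 := ⟨n-k-1, by omega⟩
  have e1 : k - 1 = k1 := by omega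
  have e2 : n - k = q + 1 := by omega
  have e3 : n - k - 1 = q := by omega
  have e4 : n - 1 = k1 + q + 1 := by omega
  have e5 : n = k1 + q + 2 := by omega
  -- the Pohozaev function
  set P : ℝ → ℝ := fun s => (k:ℝ)*(p+1) * (s * flux n k u s * deriv u s)
    + ((n:ℝ)-2*k)*(p+1) * (flux n k u s * u s)
    + lam*((k:ℝ)+1) * (s^n * u s^(p+1)) with hP_def
  set mu : ℝ := lam*(((k:ℝ)+1)*n - ((n:ℝ)-2*k)*(p+1)) with hmu_def
  have hmu : 0 < mu := by
    rw [hmu_def]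
    apply mul_pos hlam
    have : ((n:ℝ)-2*k)*(p+1) < ((k:ℝ)+1)*n := by nlinarith [hp2']
    linarith
  have hPd : ∀ r : ℝ, 0 < r → HasDerivAt P (mu * r^(n-1) * u r ^ (p+1)) r := by
    intro r hr
    have hur : 0 < u r := hpos r (le_of_lt hr)
    have hXr : deriv u r < 0 := hd_neg r hr
    -- eventually equal local form of flux
    have hev : flux n k u =ᶠ[nhds r] (fun s => -(s^(n-k) * (-(deriv u s))^k)) := by
      have h1 : ∀ᶠ s in nhds r, deriv u s < 0 :=
        (hd_cont r hr).eventually_lt continuousAt_const hXr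
      filter_upwards [h1, Ioi_mem_nhds hr] with s hs1 hs2
      exact hflux_eq s hs2
    -- derivative of the local form
    have hXd : HasDerivAt (fun s => -(deriv u s)) (-(deriv (deriv u) r)) r := (hu2 r hr).neg
    have hXk : HasDerivAt (fun s => (-(deriv u s))^k)
        ((k:ℝ) * (-(deriv u r))^(k-1) * (-(deriv (deriv u) r))) r := hXd.pow k
    have hQ : HasDerivAt (fun s => -(s^(n-k) * (-(deriv u s))^k))
        (-((((n-k:ℕ)):ℝ) * r^(n-k-1) * (-(deriv u r))^k
          + r^(n-k) * ((k:ℝ) * (-(deriv u r))^(k-1) * (-(deriv (deriv u) r))))) r := by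
      exact ((hasDerivAt_pow (n-k) r).mul hXk).neg
    have hW : HasDerivAt (flux n k u)
        (-((((n-k:ℕ)):ℝ) * r^(n-k-1) * (-(deriv u r))^k
          + r^(n-k) * ((k:ℝ) * (-(deriv u r))^(k-1) * (-(deriv (deriv u) r))))) r :=
      hQ.congr_of_eventuallyEq hev
    have hstar := hW.unique (heqn r hr)
    -- derivative of each piece of P
    have hT1 : HasDerivAt (fun s => s * flux n k u s * deriv u s)
        ((1 * flux n k u r + r * (-((((n-k:ℕ)):ℝ) * r^(n-k-1) * (-(deriv u r))^k
          + r^(n-k) * ((k:ℝ) * (-(deriv u r))^(k-1) * (-(deriv (deriv u) r)))))) * deriv u r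
          + r * flux n k u r * deriv (deriv u) r) r :=
      ((hasDerivAt_id r).mul hW).mul (hu2 r hr)
    have hT2 : HasDerivAt (fun s => flux n k u s * u s)
        ((-((((n-k:ℕ)):ℝ) * r^(n-k-1) * (-(deriv u r))^k
          + r^(n-k) * ((k:ℝ) * (-(deriv u r))^(k-1) * (-(deriv (deriv u) r))))) * u r
          + flux n k u r * deriv u r) r :=
      hW.mul (hu_diff r hr)
    have hupow : HasDerivAt (fun s => u s ^ (p+1)) (deriv u r * (p+1) * u r ^ p) r := by
      have := (hu_diff r hr).rpow_const (p := p+1) (Or.inl (ne_of_gt hur))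
      simpa [add_sub_cancel_right] using this
    have hT3 : HasDerivAt (fun s => s^n * u s^(p+1))
        (((n:ℕ):ℝ) * r^(n-1) * u r^(p+1) + r^n * (deriv u r * (p+1) * u r ^ p)) r :=
      (hasDerivAt_pow n r).mul hupow
    have HP : HasDerivAt P _ r :=
      (((hT1.const_mul ((k:ℝ)*(p+1))).add (hT2.const_mul (((n:ℝ)-2*k)*(p+1)))).add
        (hT3.const_mul (lam*((k:ℝ)+1))))
    convert HP using 1
    -- now an algebraic identity
    rw [hmu_def]
    clear_value lam
    have e6 : k = k1 + 1 := hk1e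
    rw [hflux_eq r hr, Real.rpow_add_one (ne_of_gt hur) p]
    rw [e3, e1, e2, e4] at hstar ⊢
    rw [e6] at hstar
    rw [e5, e6]
    push_cast at hstar ⊢
    linear_combination (-((p+1) * (((q:ℝ) - (k1:ℝ)) * u r - ((k1:ℝ)+2) * r * (-(deriv u r))))) * hstar
  -- P tends to 0 at 0+
  have hu0 : Tendsto u (nhdsWithin 0 (Ioi 0)) (nhds ρ) := by
    have := (hu_cont 0 self_mem_Ici).tendsto
    rw [hinit] at this
    exact this.mono_left (nhdsWithin_mono _ Ioi_subset_Ici_self)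
  have hid : Tendsto (fun s:ℝ => s) (nhdsWithin 0 (Ioi 0)) (nhds 0) :=
    (continuous_id.tendsto 0).mono_left nhdsWithin_le_nhds
  have hsn : Tendsto (fun s:ℝ => s^n) (nhdsWithin 0 (Ioi 0)) (nhds 0) := by
    have := ((continuous_pow n).tendsto (0:ℝ)).mono_left (nhdsWithin_le_nhds (s := Ioi (0:ℝ)))
    simpa [zero_pow (by omega : n ≠ 0)] using this
  have hup1 : Tendsto (fun s => u s^(p+1)) (nhdsWithin 0 (Ioi 0)) (nhds (ρ^(p+1))) :=
    hu0.rpow_const (Or.inl (ne_of_gt hρ))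
  have hPt : Tendsto P (nhdsWithin 0 (Ioi 0)) (nhds 0) := by
    rw [hP_def]
    have T := ((((hid.mul hw0).mul hd0').const_mul ((k:ℝ)*(p+1))).add
        ((hw0.mul hu0).const_mul (((n:ℝ)-2*k)*(p+1)))).add
      ((hsn.mul hup1).const_mul (lam*((k:ℝ)+1)))
    simpa using T
  -- P strictly increasing on Ioi 0
  have hPmono : StrictMonoOn P (Ioi 0) := by
    apply strictMonoOn_of_deriv_pos (convex_Ioi 0)
    · intro x hx
      exact ((hPd x hx).differentiableAt.continuousAt).continuousWithinAt
    · intro x hx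
      rw [interior_Ioi] at hx
      rw [(hPd x hx).deriv]
      exact mul_pos (mul_pos hmu (pow_pos hx _)) (Real.rpow_pos_of_pos (hpos x (le_of_lt hx)) _)
  have hP12 : 0 ≤ P (1/2) := by
    apply le_of_tendsto hPt
    filter_upwards [Ioo_mem_nhdsGT_of_mem (show (0:ℝ) ∈ Ico (0:ℝ) (1/2) by constructor <;> norm_num)] with s hs
    exact le_of_lt (hPmono (mem_Ioi.mpr hs.1) (by norm_num) hs.2)
  have hdelta : 0 < P 1 := by
    apply lt_of_le_of_lt hP12
    exact hPmono (by norm_num) (by norm_num) (by norm_num)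
  -- upper bound on P for large r
  set eps : ℝ := alpha*(p+1) - (n:ℝ) with heps_def
  have heps : 0 < eps := by
    rw [heps_def, halpha_eq]
    rw [sub_pos, div_mul_eq_mul_div, lt_div_iff₀ hpk']
    linarith
  set KK : ℝ := (k:ℝ)*(p+1)*(C1*C2) + lam*((k:ℝ)+1)*C0^(p+1) with hKK_def
  have hPbound : ∀ r : ℝ, 1 ≤ r → P r ≤ KK * r^(-eps) := by
    intro r hr
    have hr0 : (0:ℝ) < r := lt_of_lt_of_le one_pos hr
    have hur : 0 < u r := hpos r (le_of_lt hr0)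
    have hwneg := hw_neg r hr0
    have hXpos : (0:ℝ) < -(deriv u r) := by linarith [hd_neg r hr0]
    -- middle term nonpositive
    have ht2 : (((n:ℝ)-2*k)*(p+1)) * (flux n k u r * u r) ≤ 0 := by
      apply mul_nonpos_of_nonneg_of_nonpos (by positivity)
      exact le_of_lt (mul_neg_of_neg_of_pos hwneg hur)
    -- first term
    have hm1 := hwbound r hr
    have hm2 := hdbound r hr
    have hprod : (-flux n k u r) * (-(deriv u r)) ≤ (C1 * r^sigma) * (C2 * r^(-(alpha+1))) := by
      apply mul_le_mul hm1 hm2 (le_of_lt hXpos)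
      have : (0:ℝ) < C1 * r^sigma := by positivity
      linarith [lt_of_lt_of_le (by linarith : (0:ℝ) < -flux n k u r) hm1]
    have ht1 : ((k:ℝ)*(p+1)) * (r * flux n k u r * deriv u r) ≤ ((k:ℝ)*(p+1)) * (C1*C2) * r^(-eps) := by
      have e7 : r * ((C1 * r^sigma) * (C2 * r^(-(alpha+1)))) = C1*C2 * r^(-eps) := by
        rw [show r * ((C1 * r^sigma) * (C2 * r^(-(alpha+1)))) = C1*C2*(r^(1:ℝ) * r^sigma * r^(-(alpha+1))) by rw [Real.rpow_one]; ring]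
        rw [← Real.rpow_add hr0, ← Real.rpow_add hr0]
        congr 2
        rw [heps_def, hsigma_def]; ring
      have h8 : r * flux n k u r * deriv u r ≤ C1*C2 * r^(-eps) := by
        rw [← e7]
        have h9 : r * flux n k u r * deriv u r = r * ((-flux n k u r) * (-(deriv u r))) := by ring
        rw [h9]
        exact mul_le_mul_of_nonneg_left hprod (le_of_lt hr0)
      calc ((k:ℝ)*(p+1)) * (r * flux n k u r * deriv u r) ≤ ((k:ℝ)*(p+1)) * (C1*C2 * r^(-eps)) :=
            mul_le_mul_of_nonneg_left h8 (by positivity)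
      _ = ((k:ℝ)*(p+1)) * (C1*C2) * r^(-eps) := by ring
    -- third term
    have ht3 : (lam*((k:ℝ)+1)) * (r^n * u r^(p+1)) ≤ lam*((k:ℝ)+1)*C0^(p+1) * r^(-eps) := by
      have h1 : u r^(p+1) ≤ (C0 * r^(-alpha))^(p+1) :=
        Real.rpow_le_rpow (le_of_lt hur) (hdecay r hr0) (by linarith)
      have h2 : (C0 * r^(-alpha))^(p+1) = C0^(p+1) * r^(-alpha*(p+1)) := by
        rw [Real.mul_rpow (le_of_lt hC0) (le_of_lt (Real.rpow_pos_of_pos hr0 _)),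
          ← Real.rpow_mul (le_of_lt hr0)]
      have h3 : (r:ℝ)^n * r^(-alpha*(p+1)) = r^(-eps) := by
        rw [← Real.rpow_natCast r n, ← Real.rpow_add hr0]
        congr 1
        rw [heps_def]; ring
      calc (lam*((k:ℝ)+1)) * (r^n * u r^(p+1)) ≤ (lam*((k:ℝ)+1)) * (r^n * (C0^(p+1) * r^(-alpha*(p+1)))) := by
            apply mul_le_mul_of_nonneg_left _ (by positivity)
            apply mul_le_mul_of_nonneg_left _ (by positivity)
            rw [← h2]; exact h1
      _ = lam*((k:ℝ)+1)*C0^(p+1) * (r^n * r^(-alpha*(p+1))) := by ring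
      _ = lam*((k:ℝ)+1)*C0^(p+1) * r^(-eps) := by rw [h3]
    have : P r = ((k:ℝ)*(p+1)) * (r * flux n k u r * deriv u r)
        + (((n:ℝ)-2*k)*(p+1)) * (flux n k u r * u r)
        + (lam*((k:ℝ)+1)) * (r^n * u r^(p+1)) := by rw [hP_def]
    rw [this, hKK_def]
    linarith [ht1, ht2, ht3]
  -- contradiction
  have htend : Tendsto (fun r:ℝ => KK * r^(-eps)) atTop (nhds (KK * 0)) :=
    (tendsto_rpow_neg_atTop heps).const_mul KK
  rw [mul_zero] at htend
  have hev : ∀ᶠ r in atTop, KK * r^(-eps) < P 1 := htend.eventually_lt_const hdelta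
  obtain ⟨r, h2r, hsmall⟩ := (hev.and (eventually_ge_atTop 2)).exists
  have hPr : P 1 < P r := hPmono (by norm_num) (by simp only [mem_Ioi]; linarith) (by linarith)
  have hPb := hPbound r (by linarith)
  linarith


end KHessianPaper
end
end

section
/- Let n ≥ 3, k an integer with 1 < k < n/2, and p > (n+2)k/(n-2k). Then every regular solution u of the initial value problem -(1/k)·C(n-1,k-1)·(r^{n-k}|u'(r)|^{k-1}u'(r))' = r^{n-1}·u(r)^p, u > 0, u'(0) = 0, u(0) = ρ > 0, satisfies u(r) ≍ r^{-2k/(p-k)} for large r; that is, there exist constants C > 1 and R > 0 such that 1/C ≤ u(r)·r^{2k/(p-k)} ≤ C for all r ≥ R. -/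
open MeasureTheory Real Set Filter Asymptotics

noncomputable section

namespace KHessianPaper

open Topology

section Proof

/-- Bundled hypotheses. -/
structure Good (n k : ℕ) (p ρ : ℝ) (u : ℝ → ℝ) : Prop where
  hn : 3 ≤ n
  hk1 : 1 < k
  hk2 : 2 * k < n
  hρ : 0 < ρ
  hp : ((n : ℝ) + 2) * k / ((n : ℝ) - 2 * k) < p
  hu : IsRegularSolution n k p ρ u

variable {n k : ℕ} {p ρ : ℝ} {u : ℝ → ℝ}

namespace Good

variable (H : Good n k p ρ u)
include H

/-! ### Basic numeric facts -/

lemma hkn : k < n := by have := H.hk1; have := H.hk2; omega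

lemma hnk_pos : (0:ℝ) < (n:ℝ) - 2*k := by
  have := H.hk2; have : (2*k : ℝ) < n := by exact_mod_cast this
  linarith

lemma hkR : (2:ℝ) ≤ (k:ℝ) := by exact_mod_cast H.hk1

lemma hkpos : (0:ℝ) < k := by linarith [H.hkR]

lemma hB : 0 < binomC n k := by
  have h : 0 < (n-1).choose (k-1) := Nat.choose_pos (by have := H.hkn; omega)
  unfold binomC; exact_mod_cast h

lemma hkp : (k:ℝ) < p := by
  have h1 := H.hnk_pos
  have h2 := H.hp
  have h3 : (k:ℝ) < ((n : ℝ) + 2) * k / ((n : ℝ) - 2 * k) := by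
    rw [lt_div_iff₀ h1]
    have := H.hkpos
    nlinarith
  linarith

lemma hppos : (0:ℝ) < p := lt_trans H.hkpos H.hkp

lemma hpk : (0:ℝ) < p - k := by linarith [H.hkp]

lemma hp1 : (0:ℝ) < p + 1 := by linarith [H.hppos]

lemma hnpos : (0:ℝ) < (n:ℝ) := by
  have := H.hn; have : (3:ℝ) ≤ n := by exact_mod_cast this
  linarith

/-- The key supercriticality inequality : `n(k+1) < (n-2k)(p+1)`. -/
lemma super : (n:ℝ) * (k+1) < ((n:ℝ) - 2*k) * (p+1) := by
  have h1 := H.hnk_pos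
  have h2 := H.hp
  rw [div_lt_iff₀ h1] at h2
  nlinarith

/-! ### Calculus basics -/

lemma u_pos (r : ℝ) (hr : 0 < r) : 0 < u r := H.hu.pos r hr.le

lemma u_hasDerivAt (r : ℝ) (hr : 0 < r) : HasDerivAt u (deriv u r) r := by
  have hd : DifferentiableAt ℝ u r :=
    ((H.hu.contDiffOn.differentiableOn one_ne_zero).differentiableAt (Ici_mem_nhds hr))
  exact hd.hasDerivAt

/-- `v r = -u'(r)`. -/
lemma deriv_tendsto_zero : Tendsto (deriv u) (𝓝[>] (0:ℝ)) (𝓝 0) := by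
  have hcont : ContinuousOn (derivWithin u (Ici 0)) (Ici (0:ℝ)) :=
    H.hu.contDiffOn.continuousOn_derivWithin (uniqueDiffOn_Ici 0) le_rfl
  have h0 : Tendsto (derivWithin u (Ici 0)) (𝓝[Ici (0:ℝ)] 0) (𝓝 0) := by
    have := (hcont 0 (self_mem_Ici)).tendsto
    rwa [H.hu.deriv_zero] at this
  have h1 : Tendsto (derivWithin u (Ici 0)) (𝓝[>] (0:ℝ)) (𝓝 0) :=
    h0.mono_left (nhdsWithin_mono 0 Ioi_subset_Ici_self)
  refine h1.congr' ?_
  filter_upwards [self_mem_nhdsWithin] with r hr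
  exact derivWithin_of_mem_nhds (f := u) (x := r) (Ici_mem_nhds hr)

lemma flux_tendsto_zero : Tendsto (flux n k u) (𝓝[>] (0:ℝ)) (𝓝 0) := by
  have hd := H.deriv_tendsto_zero
  have h1 : Tendsto (fun r : ℝ => r ^ (n-k)) (𝓝[>] (0:ℝ)) (𝓝 0) := by
    have : ContinuousAt (fun r : ℝ => r ^ (n-k)) 0 := by fun_prop
    have h0 : ((0:ℝ)) ^ (n-k) = 0 := by
      apply zero_pow; have := H.hkn; omega
    have := this.tendsto
    rw [h0] at this
    exact this.mono_left nhdsWithin_le_nhds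
  have h2 : Tendsto (fun r : ℝ => |deriv u r| ^ (k-1)) (𝓝[>] (0:ℝ)) (𝓝 0) := by
    have habs : Tendsto (fun r => |deriv u r|) (𝓝[>] (0:ℝ)) (𝓝 0) := by
      simpa using hd.abs
    have hpow := habs.pow (k-1)
    have h0 : (0:ℝ) ^ (k-1) = 0 := by
      apply zero_pow; have := H.hk1; omega
    rwa [h0] at hpow
  have := (h1.mul h2).mul hd
  simp only [mul_zero] at this; exact this

lemma flux_strictAnti {s r : ℝ} (hs : 0 < s) (hsr : s < r) :
    flux n k u r < flux n k u s := by
  have hanti : StrictAntiOn (flux n k u) (Icc s r) := by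
    apply strictAntiOn_of_deriv_neg (convex_Icc s r)
    · intro x hx
      exact (H.hu.eqn x (lt_of_lt_of_le hs hx.1)).differentiableAt.continuousAt.continuousWithinAt
    · intro x hx
      rw [interior_Icc] at hx
      have hx0 : 0 < x := lt_trans hs hx.1
      rw [(H.hu.eqn x hx0).deriv]
      have h1 : 0 < x ^ (n-1) := pow_pos hx0 _
      have h2 : 0 < u x ^ p := Real.rpow_pos_of_pos (H.u_pos x hx0) _
      have h3 : 0 < (k:ℝ) / binomC n k := div_pos H.hkpos H.hB
      have := mul_pos (mul_pos h3 h1) h2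
      nlinarith
  exact hanti (left_mem_Icc.mpr hsr.le) (right_mem_Icc.mpr hsr.le) hsr

lemma flux_neg (r : ℝ) (hr : 0 < r) : flux n k u r < 0 := by
  have h2 : flux n k u (r/2) ≤ 0 := by
    refine ge_of_tendsto H.flux_tendsto_zero ?_
    filter_upwards [Ioo_mem_nhdsGT_of_mem (by constructor <;> [exact le_rfl; positivity] :
      (0:ℝ) ∈ Ico 0 (r/2))] with s hs
    exact (H.flux_strictAnti hs.1 hs.2).le
  exact lt_of_lt_of_le (H.flux_strictAnti (by positivity) (by linarith)) h2

lemma deriv_neg (r : ℝ) (hr : 0 < r) : deriv u r < 0 := by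
  by_contra h
  push_neg at h
  have : 0 ≤ flux n k u r := by
    unfold flux
    have : |deriv u r| = deriv u r := abs_of_nonneg h
    rw [this]
    positivity
  linarith [H.flux_neg r hr]

lemma v_pos (r : ℝ) (hr : 0 < r) : 0 < -deriv u r := by
  linarith [H.deriv_neg r hr]

lemma flux_eq (r : ℝ) (hr : 0 < r) :
    flux n k u r = -(r ^ (n-k) * (-deriv u r) ^ k) := by
  have hd := H.deriv_neg r hr
  have habs : |deriv u r| = -deriv u r := abs_of_neg hd
  have hk : k - 1 + 1 = k := by have := H.hk1; omega
  have hpow : (-deriv u r)^k = (-deriv u r)^(k-1) * (-deriv u r) := by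
    rw [← pow_succ]; congr 1; omega
  unfold flux
  rw [habs, hpow]
  ring

/-- `y r = r^(n-k) v^k` where `v = -u'`. -/
lemma y_hasDerivAt (r : ℝ) (hr : 0 < r) :
    HasDerivAt (fun s => s ^ (n-k) * (-deriv u s) ^ k)
      ((k:ℝ) / binomC n k * r ^ (n-1) * u r ^ p) r := by
  have h1 := (H.hu.eqn r hr).neg
  have h2 : HasDerivAt (fun s => -flux n k u s)
      ((k:ℝ) / binomC n k * r ^ (n-1) * u r ^ p) r := by
    exact h1.congr_deriv (by ring)
  refine h2.congr_of_eventuallyEq ?_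
  filter_upwards [Ioi_mem_nhds hr] with s hs
  rw [H.flux_eq s hs]; ring
end Good

/-- The derivative of `v = -u'`. -/
def VV (n k : ℕ) (p : ℝ) (u : ℝ → ℝ) : ℝ → ℝ := fun r =>
  ((k:ℝ)/binomC n k * r^(n-1) * u r ^ p - ((n:ℝ)-(k:ℝ)) * r^(n-k-1) * (-deriv u r)^k)
  / ((k:ℝ) * r^(n-k) * (-deriv u r)^(k-1))

namespace Good

variable (H : Good n k p ρ u)
include H

lemma kth_root {w : ℝ} (hw : 0 < w) : ((w^k : ℝ)) ^ ((k:ℝ)⁻¹) = w := by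
  have hk0 : (k:ℝ) ≠ 0 := ne_of_gt H.hkpos
  rw [← Real.rpow_natCast w k, ← Real.rpow_mul hw.le, mul_inv_cancel₀ hk0, Real.rpow_one]

lemma v_hasDerivAt (r : ℝ) (hr : 0 < r) :
    HasDerivAt (fun s => -deriv u s) (VV n k p u r) r := by
  have hw : 0 < -deriv u r := H.v_pos r hr
  set w := -deriv u r with hwdef
  have hk0 : (k:ℝ) ≠ 0 := ne_of_gt H.hkpos
  have hrne : r ≠ 0 := hr.ne'
  have hpowne : (r:ℝ) ^ (n-k) ≠ 0 := pow_ne_zero _ hrne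
  have h1 : HasDerivAt (fun s => (s^(n-k) * (-deriv u s)^k) / s^(n-k))
      ((((k:ℝ) / binomC n k * r ^ (n-1) * u r ^ p) * r^(n-k) -
        (r^(n-k) * w^k) * (((n-k):ℕ) * r^(n-k-1))) / (r^(n-k))^2) r :=
    (H.y_hasDerivAt r hr).div (hasDerivAt_pow (n-k) r) hpowne
  have hinner : r^(n-k) * w^k / r^(n-k) = w^k := by field_simp
  have h2 := h1.rpow_const (p := (k:ℝ)⁻¹) (Or.inl (by rw [hinner]; positivity))
  rw [hinner] at h2
  have h3 : (fun s => ((s^(n-k) * (-deriv u s)^k) / s^(n-k)) ^ ((k:ℝ)⁻¹))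
      =ᶠ[𝓝 r] (fun s => -deriv u s) := by
    filter_upwards [Ioi_mem_nhds hr] with s hs
    have hws : 0 < -deriv u s := H.v_pos s hs
    have hsne : s ≠ 0 := ne_of_gt hs
    have : s^(n-k) * (-deriv u s)^k / s^(n-k) = (-deriv u s)^k := by
      rw [mul_comm, mul_div_assoc, div_self (pow_ne_zero _ hsne), mul_one]
    rw [this, H.kth_root hws]
  have h4 := h2.congr_of_eventuallyEq h3.symm
  refine h4.congr_deriv ?_
  have hroot : ((w^k:ℝ)) ^ ((k:ℝ)⁻¹ - 1) = w / w^k := by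
    rw [← Real.rpow_natCast w k, ← Real.rpow_mul hw.le]
    have he : (k:ℝ) * ((k:ℝ)⁻¹ - 1) = 1 - (k:ℝ) := by
      field_simp
    rw [he, Real.rpow_sub hw, Real.rpow_one, Real.rpow_natCast]
  rw [hroot]
  have hA : r^(n-k) = r^(n-k-1) * r := by
    rw [← pow_succ]; congr 1; have := H.hkn; omega
  have hA2 : r^(n-1) = r^(n-k-1) * r^k := by
    rw [← pow_add]; congr 1; have := H.hkn; omega
  have hw2 : w^k = w^(k-1) * w := by
    rw [← pow_succ]; congr 1; have := H.hk1; omega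
  have hA1ne : r^(n-k-1) ≠ 0 := pow_ne_zero _ hrne
  have hwne : w ≠ 0 := hw.ne'
  have hwk1ne : w^(k-1) ≠ 0 := pow_ne_zero _ hwne
  have hBne : binomC n k ≠ 0 := H.hB.ne'
  unfold VV
  rw [← hwdef]
  rw [hA, hA2, hw2]
  have hcast : ((n-k : ℕ) : ℝ) = (n:ℝ) - (k:ℝ) := by
    have := H.hkn; push_cast [Nat.cast_sub this.le]; ring
  rw [hcast]
  field_simp
end Good

/-- The Pohozaev function. -/
def PP (n k : ℕ) (p : ℝ) (u : ℝ → ℝ) : ℝ → ℝ := fun r =>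
  binomC n k/((k:ℝ)+1) * (r^(n-k+1) * (-deriv u r)^(k+1))
  + (r^n * u r^(p+1))/(p+1)
  - (n:ℝ)*binomC n k/((k:ℝ)*(p+1)) * (r^(n-k) * (-deriv u r)^k * u r)

def DD (n k : ℕ) (p : ℝ) : ℝ :=
  (binomC n k/(k:ℝ)) * (((n:ℝ)-2*k)/((k:ℝ)+1) - (n:ℝ)/(p+1))

namespace Good

variable (H : Good n k p ρ u)
include H

lemma DD_pos : 0 < DD n k p := by
  have h1 := H.super
  have h2 := H.hp1
  have h3 : (0:ℝ) < (k:ℝ)+1 := by linarith [H.hkpos]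
  have h4 : (n:ℝ)/(p+1) < ((n:ℝ)-2*k)/((k:ℝ)+1) := by
    rw [div_lt_div_iff₀ h2 h3]
    nlinarith
  have h5 : 0 < binomC n k/(k:ℝ) := div_pos H.hB H.hkpos
  have : 0 < ((n:ℝ)-2*k)/((k:ℝ)+1) - (n:ℝ)/(p+1) := by linarith
  exact mul_pos h5 this

lemma cast_nk : ((n-k : ℕ) : ℝ) = (n:ℝ) - (k:ℝ) := by
  have := H.hkn; push_cast [Nat.cast_sub this.le]; ring

lemma cast_nk1 : ((n-k+1 : ℕ) : ℝ) = (n:ℝ) - (k:ℝ) + 1 := by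
  have := H.hkn; push_cast [Nat.cast_sub this.le]; ring

lemma P_hasDerivAt (r : ℝ) (hr : 0 < r) :
    HasDerivAt (PP n k p u) (-(DD n k p) * (r^(n-k) * (-deriv u r)^(k+1))) r := by
  have hupos : 0 < u r := H.u_pos r hr
  have hw : 0 < -deriv u r := H.v_pos r hr
  have hu' := H.u_hasDerivAt r hr
  have hv' := H.v_hasDerivAt r hr
  have c1 := hasDerivAt_pow (n-k+1) r
  rw [(by omega : n-k+1-1 = n-k)] at c1
  have c2 := hv'.pow (k+1)
  rw [(by omega : k+1-1 = k)] at c2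
  have c3 := hu'.rpow_const (p := p+1) (Or.inl hupos.ne')
  rw [(by ring : p+1-1 = p)] at c3
  have cn := hasDerivAt_pow n r
  have c4 := hv'.pow k
  have c5 := hasDerivAt_pow (n-k) r
  have hP := ((((c1.mul c2).const_mul (binomC n k/((k:ℝ)+1))).add
      ((cn.mul c3).div_const (p+1))).sub
      (((c5.mul c4).mul hu').const_mul ((n:ℝ)*binomC n k/((k:ℝ)*(p+1)))))
  refine hP.congr_deriv ?_
  simp only [Pi.mul_apply, Pi.pow_apply]
  -- now the value identity
  have hdw : deriv u r = -(-deriv u r) := by ring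
  set w : ℝ := -deriv u r with hwdef
  set V : ℝ := VV n k p u r with hVdef
  -- VV in terms of powers
  have hA : r^(n-k) = r^(n-k-1) * r := by
    rw [← pow_succ]; congr 1; have := H.hkn; omega
  have hA2 : r^(n-1) = r^(n-k-1) * r^k := by
    rw [← pow_add]; congr 1; have := H.hkn; omega
  have hA3 : r^(n-k+1) = r^(n-k-1) * r^2 := by
    rw [← pow_add]; congr 1; have := H.hkn; omega
  have hAn : r^n = r^(n-k-1) * r^k * r := by
    rw [mul_assoc, ← pow_succ, ← pow_add]; congr 1; have := H.hkn; omega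
  have hw2 : w^k = w^(k-1) * w := by
    rw [← pow_succ]; congr 1; have := H.hk1; omega
  have hw3 : w^(k+1) = w^(k-1) * w^2 := by
    rw [← pow_add]; congr 1; have := H.hk1; omega
  have hup : u r ^ (p+1) = u r ^ p * u r := by
    rw [Real.rpow_add hupos, Real.rpow_one]
  have hVval : V = ((k:ℝ)/binomC n k * (r^(n-k-1) * r^k) * u r ^ p
      - ((n:ℝ)-(k:ℝ)) * r^(n-k-1) * (w^(k-1) * w))
      / ((k:ℝ) * (r^(n-k-1) * r) * w^(k-1)) := by
    rw [hVdef]; unfold VV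
    rw [hA, hA2, hw2]
  have hA1ne : r^(n-k-1) ≠ 0 := pow_ne_zero _ hr.ne'
  have hwk1ne : w^(k-1) ≠ 0 := pow_ne_zero _ hw.ne'
  have hBne : binomC n k ≠ 0 := H.hB.ne'
  have hk0 : (k:ℝ) ≠ 0 := H.hkpos.ne'
  have hk1 : (k:ℝ)+1 ≠ 0 := by have := H.hkpos; linarith
  have hp1 : p+1 ≠ 0 := H.hp1.ne'
  have hrne : r ≠ 0 := hr.ne'
  have hwne : w ≠ 0 := hw.ne'
  rw [hdw]
  rw [H.cast_nk, H.cast_nk1, hVval, hA, hA2, hA3, hAn, hw2, hw3, hup]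
  unfold DD
  field_simp
  push_cast
  ring

lemma u_tendsto_rho : Tendsto u (𝓝[>] (0:ℝ)) (𝓝 ρ) := by
  have h := (H.hu.contDiffOn.continuousOn 0 self_mem_Ici).tendsto
  rw [H.hu.init] at h
  exact h.mono_left (nhdsWithin_mono 0 Ioi_subset_Ici_self)

lemma P_tendsto_zero : Tendsto (PP n k p u) (𝓝[>] (0:ℝ)) (𝓝 0) := by
  have hd := H.deriv_tendsto_zero
  have hv : Tendsto (fun r => -deriv u r) (𝓝[>] (0:ℝ)) (𝓝 0) := by
    simpa using hd.neg
  have hu0 := H.u_tendsto_rho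
  have hrpow : ∀ m : ℕ, 0 < m → Tendsto (fun r : ℝ => r ^ m) (𝓝[>] (0:ℝ)) (𝓝 0) := by
    intro m hm
    have : ContinuousAt (fun r : ℝ => r ^ m) 0 := by fun_prop
    have h0 : ((0:ℝ)) ^ m = 0 := zero_pow (Nat.pos_iff_ne_zero.mp hm)
    have := this.tendsto
    rw [h0] at this
    exact this.mono_left nhdsWithin_le_nhds
  have hvpow : ∀ m : ℕ, 0 < m → Tendsto (fun r => (-deriv u r) ^ m) (𝓝[>] (0:ℝ)) (𝓝 0) := by
    intro m hm
    have := hv.pow m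
    rwa [zero_pow (Nat.pos_iff_ne_zero.mp hm)] at this
  have hup : Tendsto (fun r => u r ^ (p+1)) (𝓝[>] (0:ℝ)) (𝓝 (ρ ^ (p+1))) := by
    have hcont : ContinuousAt (fun x : ℝ => x ^ (p+1)) ρ :=
      Real.continuousAt_rpow_const ρ (p+1) (Or.inl H.hρ.ne')
    exact hcont.tendsto.comp hu0
  have hkn := H.hkn
  have hk1' := H.hk1
  have t1 : Tendsto (fun r => binomC n k/((k:ℝ)+1) * (r^(n-k+1) * (-deriv u r)^(k+1)))
      (𝓝[>] (0:ℝ)) (𝓝 0) := by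
    have := ((hrpow (n-k+1) (by omega)).mul (hvpow (k+1) (by omega))).const_mul
      (binomC n k/((k:ℝ)+1))
    simpa using this
  have t2 : Tendsto (fun r => (r^n * u r ^ (p+1))/(p+1)) (𝓝[>] (0:ℝ)) (𝓝 0) := by
    have := ((hrpow n (by have := H.hkn; omega)).mul hup).div_const (p+1)
    simpa using this
  have t3 : Tendsto (fun r => (n:ℝ)*binomC n k/((k:ℝ)*(p+1)) *
      (r^(n-k) * (-deriv u r)^k * u r)) (𝓝[>] (0:ℝ)) (𝓝 0) := by
    have := (((hrpow (n-k) (by omega)).mul (hvpow k (by omega))).mul hu0).const_mul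
      ((n:ℝ)*binomC n k/((k:ℝ)*(p+1)))
    simpa using this
  have := (t1.add t2).sub t3
  simp only [add_zero, sub_zero] at this; exact this

lemma P_strictAnti {s r : ℝ} (hs : 0 < s) (hsr : s < r) :
    PP n k p u r < PP n k p u s := by
  have hanti : StrictAntiOn (PP n k p u) (Icc s r) := by
    apply strictAntiOn_of_deriv_neg (convex_Icc s r)
    · intro x hx
      exact (H.P_hasDerivAt x (lt_of_lt_of_le hs hx.1)).differentiableAt.continuousAt.continuousWithinAt
    · intro x hx
      rw [interior_Icc] at hx
      have hx0 : 0 < x := lt_trans hs hx.1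
      rw [(H.P_hasDerivAt x hx0).deriv]
      have h1 : 0 < x ^ (n-k) := pow_pos hx0 _
      have h2 : 0 < (-deriv u x) ^ (k+1) := pow_pos (H.v_pos x hx0) _
      have h3 := H.DD_pos
      have := mul_pos h3 (mul_pos h1 h2)
      nlinarith
  exact hanti (left_mem_Icc.mpr hsr.le) (right_mem_Icc.mpr hsr.le) hsr

lemma P_neg (r : ℝ) (hr : 0 < r) : PP n k p u r < 0 := by
  have h2 : PP n k p u (r/2) ≤ 0 := by
    refine ge_of_tendsto H.P_tendsto_zero ?_
    filter_upwards [Ioo_mem_nhdsGT_of_mem (by constructor <;> [exact le_rfl; positivity] :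
      (0:ℝ) ∈ Ico 0 (r/2))] with s hs
    exact (H.P_strictAnti hs.1 hs.2).le
  exact lt_of_lt_of_le (H.P_strictAnti (by positivity) (by linarith)) h2
end Good

def aE (k : ℕ) (p : ℝ) : ℝ := 2*(k:ℝ)/(p-k)
def zmax (n k : ℕ) (p : ℝ) : ℝ := (n:ℝ)*((k:ℝ)+1)/((k:ℝ)*(p+1))
def phiF (k : ℕ) (p : ℝ) (u : ℝ → ℝ) : ℝ → ℝ := fun r => u r * r ^ (aE k p)
def zetaF (u : ℝ → ℝ) : ℝ → ℝ := fun r => r * (-deriv u r) / u r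
def Pmax (n k : ℕ) (p : ℝ) : ℝ :=
  ((n:ℝ)*binomC n k/(k:ℝ) * (zmax n k p)^k) ^ ((p-k)⁻¹)

namespace Good

variable (H : Good n k p ρ u)
include H

lemma aE_pos : 0 < aE k p := by
  unfold aE; exact div_pos (by linarith [H.hkpos]) H.hpk

lemma zmax_pos : 0 < zmax n k p := by
  unfold zmax
  exact div_pos (mul_pos H.hnpos (by linarith [H.hkpos])) (mul_pos H.hkpos H.hp1)

/-- Supercriticality: `zmax < (n-2k)/k`. -/
lemma zmax_lt : zmax n k p < ((n:ℝ)-2*k)/(k:ℝ) := by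
  unfold zmax
  rw [div_lt_div_iff₀ (mul_pos H.hkpos H.hp1) H.hkpos]
  have := H.super
  have := H.hkpos
  nlinarith

lemma phi_pos (r : ℝ) (hr : 0 < r) : 0 < phiF k p u r :=
  mul_pos (H.u_pos r hr) (Real.rpow_pos_of_pos hr _)

lemma zeta_pos (r : ℝ) (hr : 0 < r) : 0 < zetaF u r :=
  div_pos (mul_pos hr (H.v_pos r hr)) (H.u_pos r hr)

lemma zeta_lt (r : ℝ) (hr : 0 < r) : zetaF u r < zmax n k p := by
  have hP := H.P_neg r hr
  have hupos := H.u_pos r hr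
  have hw := H.v_pos r hr
  set w : ℝ := -deriv u r
  have hX : 0 < r^(n-k) * w^k := mul_pos (pow_pos hr _) (pow_pos hw _)
  have ht2 : 0 < (r^n * u r^(p+1))/(p+1) := by
    have : 0 < u r ^ (p+1) := Real.rpow_pos_of_pos hupos _
    have : 0 < r^n * u r^(p+1) := mul_pos (pow_pos hr _) this
    exact div_pos this H.hp1
  have h1 : binomC n k/((k:ℝ)+1) * (r^(n-k+1) * w^(k+1))
      < (n:ℝ)*binomC n k/((k:ℝ)*(p+1)) * (r^(n-k) * w^k * u r) := by
    unfold PP at hP; linarith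
  rw [(by rw [← pow_succ] : r^(n-k+1) = r^(n-k) * r),
      (by rw [← pow_succ] : w^(k+1) = w^k * w)] at h1
  have hk1 : (0:ℝ) < (k:ℝ)+1 := by linarith [H.hkpos]
  have hkp1 : (0:ℝ) < (k:ℝ)*(p+1) := mul_pos H.hkpos H.hp1
  have hB := H.hB
  have hn := H.hnpos
  have h2 : binomC n k/((k:ℝ)+1) * (r * w) < (n:ℝ)*binomC n k/((k:ℝ)*(p+1)) * u r := by
    have hc : binomC n k/((k:ℝ)+1) * (r^(n-k) * r * (w^k * w))
        = (binomC n k/((k:ℝ)+1) * (r * w)) * (r^(n-k) * w^k) := by ring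
    have hc2 : (n:ℝ)*binomC n k/((k:ℝ)*(p+1)) * (r^(n-k) * w^k * u r)
        = ((n:ℝ)*binomC n k/((k:ℝ)*(p+1)) * u r) * (r^(n-k) * w^k) := by ring
    rw [hc, hc2] at h1
    exact lt_of_mul_lt_mul_right h1 hX.le
  have h2' : binomC n k * (r*w) * ((k:ℝ)*(p+1)) < (n:ℝ)*binomC n k * u r * ((k:ℝ)+1) := by
    rw [div_mul_eq_mul_div, div_mul_eq_mul_div, div_lt_div_iff₀ hk1 hkp1] at h2
    nlinarith [h2]
  unfold zetaF zmax
  rw [div_lt_div_iff₀ hupos (mul_pos H.hkpos H.hp1)]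
  show r * w * ((k:ℝ)*(p+1)) < (n:ℝ)*((k:ℝ)+1)*(u r)
  nlinarith [h2', hB]

lemma wk_gt (r : ℝ) (hr : 0 < r) :
    (k:ℝ)/((n:ℝ)*binomC n k) * (r^k * u r ^ p) < (-deriv u r)^k := by
  have hP := H.P_neg r hr
  have hupos := H.u_pos r hr
  have hw := H.v_pos r hr
  set w : ℝ := -deriv u r
  have ht1 : 0 < binomC n k/((k:ℝ)+1) * (r^(n-k+1) * w^(k+1)) := by
    have hk1 : (0:ℝ) < (k:ℝ)+1 := by linarith [H.hkpos]
    have := mul_pos (pow_pos hr (n-k+1)) (pow_pos hw (k+1))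
    exact mul_pos (div_pos H.hB hk1) this
  have h1 : (r^n * u r^(p+1))/(p+1)
      < (n:ℝ)*binomC n k/((k:ℝ)*(p+1)) * (r^(n-k) * w^k * u r) := by
    unfold PP at hP; linarith
  have hrn : r^n = r^(n-k) * r^k := by
    rw [← pow_add]; congr 1; have := H.hkn; omega
  have hup : u r ^ (p+1) = u r ^ p * u r := by
    rw [Real.rpow_add hupos, Real.rpow_one]
  rw [hrn, hup] at h1
  have hX : 0 < r^(n-k) * u r := mul_pos (pow_pos hr _) hupos
  have h2 : r^k * u r ^ p / (p+1) < (n:ℝ)*binomC n k/((k:ℝ)*(p+1)) * w^k := by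
    have hc : r^(n-k) * r^k * (u r ^ p * u r) / (p+1)
        = (r^k * u r ^ p / (p+1)) * (r^(n-k) * u r) := by ring
    have hc2 : (n:ℝ)*binomC n k/((k:ℝ)*(p+1)) * (r^(n-k) * w^k * u r)
        = ((n:ℝ)*binomC n k/((k:ℝ)*(p+1)) * w^k) * (r^(n-k) * u r) := by ring
    rw [hc, hc2] at h1
    exact lt_of_mul_lt_mul_right h1 hX.le
  have hnB : (0:ℝ) < (n:ℝ)*binomC n k := mul_pos H.hnpos H.hB
  have hupp : 0 < u r ^ p := Real.rpow_pos_of_pos hupos _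
  have hkpos := H.hkpos
  have hp1 := H.hp1
  have hkp1 : (0:ℝ) < (k:ℝ)*(p+1) := mul_pos H.hkpos H.hp1
  have h2' : (r^k * u r ^ p) * ((k:ℝ)*(p+1)) < ((n:ℝ)*binomC n k * w^k) * (p+1) := by
    rw [div_mul_eq_mul_div, div_lt_div_iff₀ hp1 hkp1] at h2
    nlinarith [h2]
  rw [div_mul_eq_mul_div, div_lt_iff₀ hnB]
  nlinarith [h2', hp1]
lemma phi_rpow (r : ℝ) (hr : 0 < r) :
    phiF k p u r ^ (p-k) = u r ^ (p-k) * r^(2*k) := by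
  unfold phiF
  have hu0 : (0:ℝ) ≤ u r := (H.u_pos r hr).le
  rw [Real.mul_rpow hu0 (Real.rpow_nonneg hr.le _), ← Real.rpow_natCast r (2*k),
    ← Real.rpow_mul hr.le]
  congr 2
  unfold aE
  push_cast
  rw [div_mul_cancel₀ _ H.hpk.ne']

lemma phi_le (r : ℝ) (hr : 0 < r) : phiF k p u r ≤ Pmax n k p := by
  have hupos := H.u_pos r hr
  have hw := H.v_pos r hr
  have h1 := H.zeta_lt r hr
  have h2 := H.wk_gt r hr
  set w : ℝ := -deriv u r with hwdef
  have hz : r * w < zmax n k p * u r := by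
    have := H.zeta_pos r hr
    unfold zetaF at h1
    rw [div_lt_iff₀ hupos] at h1
    exact h1
  have hzk : (r*w)^k < (zmax n k p * u r)^k := by
    apply pow_lt_pow_left₀ hz (mul_pos hr hw).le
    have := H.hk1; omega
  rw [mul_pow, mul_pow] at hzk
  -- combine: c * r^k u^p * r^k < r^k w^k < zmax^k u^k
  have hc : 0 < (k:ℝ)/((n:ℝ)*binomC n k) := div_pos H.hkpos (mul_pos H.hnpos H.hB)
  have h3 : (k:ℝ)/((n:ℝ)*binomC n k) * (r^k * u r ^ p) * r^k < (zmax n k p)^k * (u r)^k := by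
    calc (k:ℝ)/((n:ℝ)*binomC n k) * (r^k * u r ^ p) * r^k < w^k * r^k := by
          have hrk : (0:ℝ) < r^k := pow_pos hr _
          exact mul_lt_mul_of_pos_right h2 hrk
      _ = r^k * w^k := by ring
      _ < (zmax n k p)^k * (u r)^k := hzk
  -- u^p = u^(p-k) * u^k
  have hup : u r ^ p = u r ^ (p-k) * (u r)^k := by
    rw [← Real.rpow_natCast (u r) k, ← Real.rpow_add hupos]
    congr 1; ring
  rw [hup] at h3
  have huk : (0:ℝ) < (u r)^k := pow_pos hupos _
  have h4 : u r ^ (p-k) * (r^k * r^k) < (n:ℝ)*binomC n k/(k:ℝ) * (zmax n k p)^k := by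
    have hnB : (0:ℝ) < (n:ℝ)*binomC n k := mul_pos H.hnpos H.hB
    have hc3 : (k:ℝ)/((n:ℝ)*binomC n k) * (r^k * (u r^(p-k) * (u r)^k)) * r^k
        = ((k:ℝ)/((n:ℝ)*binomC n k) * (u r^(p-k) * (r^k*r^k))) * (u r)^k := by ring
    rw [hc3] at h3
    have h3b := lt_of_mul_lt_mul_right h3 huk.le
    rw [div_mul_eq_mul_div, div_lt_iff₀ hnB] at h3b
    rw [div_mul_eq_mul_div, lt_div_iff₀ H.hkpos]
    linarith
  have hrr : r^k * r^k = r^(2*k) := by rw [← pow_add]; congr 1; omega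
  rw [hrr] at h4
  rw [← H.phi_rpow r hr] at h4
  -- extract the root
  have hφ := H.phi_pos r hr
  have h5 := Real.rpow_le_rpow (Real.rpow_nonneg hφ.le _) h4.le
    (inv_nonneg.mpr H.hpk.le)
  have hroot : (phiF k p u r ^ (p-k)) ^ ((p-k)⁻¹) = phiF k p u r := by
    rw [← Real.rpow_mul hφ.le, mul_inv_cancel₀ H.hpk.ne', Real.rpow_one]
  rw [hroot] at h5
  exact h5

end Good

/-- Derivative of `ζ`. -/
def ZZ (n k : ℕ) (p : ℝ) (u : ℝ → ℝ) : ℝ → ℝ := fun r =>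
  ((1 * (-deriv u r) + r * VV n k p u r) * u r - r * (-deriv u r) * deriv u r) / (u r)^2

def z1 (n k : ℕ) (p : ℝ) : ℝ := min (aE k p) (zmax n k p) / 2
def kgap (n k : ℕ) (p : ℝ) : ℝ := ((n:ℝ)-2*(k:ℝ))/(k:ℝ) - zmax n k p
def c0 (n k : ℕ) (p : ℝ) : ℝ := z1 n k p * kgap n k p
def eps1 (n k : ℕ) (p : ℝ) : ℝ :=
  (binomC n k * (c0 n k p/2) * (z1 n k p)^(k-1)) ^ ((p-k)⁻¹)

namespace Good

variable (H : Good n k p ρ u)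
include H

lemma z1_pos : 0 < z1 n k p := by
  have := H.aE_pos; have := H.zmax_pos
  unfold z1
  have : 0 < min (aE k p) (zmax n k p) := lt_min_iff.mpr ⟨by assumption, by assumption⟩
  linarith

lemma kgap_pos : 0 < kgap n k p := by
  have := H.zmax_lt; unfold kgap; linarith

lemma c0_pos : 0 < c0 n k p := mul_pos H.z1_pos H.kgap_pos

lemma z1_lt_zmax : z1 n k p < zmax n k p := by
  have h := min_le_right (aE k p) (zmax n k p)
  have := H.zmax_pos
  unfold z1; linarith

lemma z1_le_half_a : z1 n k p ≤ aE k p / 2 := by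
  have h := min_le_left (aE k p) (zmax n k p)
  unfold z1; linarith

lemma eps1_pos : 0 < eps1 n k p := by
  apply Real.rpow_pos_of_pos
  have := H.hB; have := H.c0_pos
  have hz := H.z1_pos
  have : (0:ℝ) < (z1 n k p)^(k-1) := pow_pos hz _
  positivity

lemma eps1_pow : eps1 n k p ^ (p-k) = binomC n k * (c0 n k p/2) * (z1 n k p)^(k-1) := by
  unfold eps1
  have hz := H.z1_pos
  have hpos : (0:ℝ) < binomC n k * (c0 n k p/2) * (z1 n k p)^(k-1) := by
    have := H.hB; have := H.c0_pos
    have : (0:ℝ) < (z1 n k p)^(k-1) := pow_pos hz _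
    positivity
  rw [← Real.rpow_mul hpos.le, inv_mul_cancel₀ H.hpk.ne', Real.rpow_one]

lemma zeta_hasDerivAt (r : ℝ) (hr : 0 < r) :
    HasDerivAt (zetaF u) (ZZ n k p u r) r := by
  have h := ((hasDerivAt_id r).mul (H.v_hasDerivAt r hr)).div
    (H.u_hasDerivAt r hr) (H.u_pos r hr).ne'
  exact h

lemma phi_hasDerivAt (r : ℝ) (hr : 0 < r) :
    HasDerivAt (phiF k p u) (phiF k p u r * (aE k p - zetaF u r) / r) r := by
  have h := (H.u_hasDerivAt r hr).mul
    (Real.hasDerivAt_rpow_const (x := r) (p := aE k p) (Or.inl hr.ne'))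
  refine h.congr_deriv ?_
  unfold phiF zetaF
  rw [Real.rpow_sub_one hr.ne']
  have hune := (H.u_pos r hr).ne'
  field_simp
  ring

/-- The fundamental identity for `r ζ'`. -/
lemma rZZ (r : ℝ) (hr : 0 < r) :
    r * ZZ n k p u r = (zetaF u r)^2 - ((n:ℝ)-2*(k:ℝ))/(k:ℝ) * zetaF u r
      + (1/binomC n k) * ((r^k * r * u r ^ p) / (u r * (-deriv u r)^(k-1))) := by
  have hupos := H.u_pos r hr
  have hw := H.v_pos r hr
  unfold ZZ zetaF VV
  have hA : r^(n-k) = r^(n-k-1) * r := by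
    rw [← pow_succ]; congr 1; have := H.hkn; omega
  have hA2 : r^(n-1) = r^(n-k-1) * r^k := by
    rw [← pow_add]; congr 1; have := H.hkn; omega
  have hw2 : (-deriv u r)^k = (-deriv u r)^(k-1) * (-deriv u r) := by
    rw [← pow_succ]; congr 1; have := H.hk1; omega
  rw [hA, hA2, hw2]
  have hA1ne : r^(n-k-1) ≠ 0 := pow_ne_zero _ hr.ne'
  have hwne : -deriv u r ≠ 0 := hw.ne'
  have hwk1ne : (-deriv u r)^(k-1) ≠ 0 := pow_ne_zero _ hwne
  have hBne : binomC n k ≠ 0 := H.hB.ne'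
  have hk0 : (k:ℝ) ≠ 0 := H.hkpos.ne'
  have hune : u r ≠ 0 := hupos.ne'
  have hrne : r ≠ 0 := hr.ne'
  field_simp
  ring

lemma third_eq (r : ℝ) (hr : 0 < r) :
    (r^k * r * u r ^ p) / (u r * (-deriv u r)^(k-1))
      = phiF k p u r ^ (p-k) / (zetaF u r)^(k-1) := by
  have hupos := H.u_pos r hr
  have hw := H.v_pos r hr
  rw [H.phi_rpow r hr]
  unfold zetaF
  rw [div_pow]
  have h1k : ((k-1:ℕ):ℝ) = (k:ℝ)-1 := by
    have := H.hk1; push_cast [Nat.cast_sub (by omega : 1 ≤ k)]; ring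
  have e1 : u r ^ ((k:ℝ)-1) * u r = u r ^ ((k:ℝ)) := by
    calc u r ^ ((k:ℝ)-1) * u r = u r ^ ((k:ℝ)-1) * u r ^ (1:ℝ) := by rw [Real.rpow_one]
      _ = u r ^ ((k:ℝ)-1+1) := (Real.rpow_add hupos _ _).symm
      _ = u r ^ ((k:ℝ)) := by norm_num
  have e2 : u r ^ (p-(k:ℝ)) * u r ^ ((k:ℝ)) = u r ^ p := by
    rw [← Real.rpow_add hupos]; norm_num
  have hup : u r ^ p = u r ^ (p-k) * ((u r)^(k-1) * u r) := by
    rw [← Real.rpow_natCast (u r) (k-1), h1k, e1, e2]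
  have hrr : r^(2*k) = r^(k-1) * (r^k * r) := by
    rw [← pow_succ, ← pow_add]; congr 1; have := H.hk1; omega
  rw [hup, hrr, mul_pow]
  have hune : u r ≠ 0 := hupos.ne'
  have hwne : -deriv u r ≠ 0 := hw.ne'
  have h1 : (r * -deriv u r)^(k-1) ≠ 0 := pow_ne_zero _ (by positivity)
  have h2 : ((u r):ℝ)^(k-1) ≠ 0 := pow_ne_zero _ hune
  have h3 : (r:ℝ)^(k-1) ≠ 0 := pow_ne_zero _ hr.ne'
  have h4 : (-deriv u r)^(k-1) ≠ 0 := pow_ne_zero _ hwne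
  field_simp

/-- In the strip `z1 ≤ ζ`, `φ ≤ ε₁`, the function `ζ` decreases at definite log-rate. -/
lemma ZZ_le (r : ℝ) (hr : 0 < r) (h1 : z1 n k p ≤ zetaF u r)
    (h2 : phiF k p u r ≤ eps1 n k p) :
    ZZ n k p u r ≤ -(c0 n k p/2)/r := by
  have hζ := H.zeta_lt r hr
  have hζp := H.zeta_pos r hr
  have hφ := H.phi_pos r hr
  have hz1 := H.z1_pos
  have hkg := H.kgap_pos
  have hc0 := H.c0_pos
  set K : ℝ := ((n:ℝ)-2*(k:ℝ))/(k:ℝ) with hK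
  -- quadratic part
  have hq : (zetaF u r)^2 - K * zetaF u r ≤ -(c0 n k p) := by
    have hgap : kgap n k p ≤ K - zetaF u r := by
      unfold kgap; rw [← hK]; linarith
    have := mul_le_mul h1 hgap hkg.le (le_trans hz1.le h1)
    unfold c0 at *
    nlinarith [this]
  -- third part
  have hth : (1/binomC n k) * ((r^k * r * u r ^ p) / (u r * (-deriv u r)^(k-1)))
      ≤ c0 n k p/2 := by
    rw [H.third_eq r hr]
    have hnum : phiF k p u r ^ (p-k) ≤ eps1 n k p ^ (p-k) :=
      Real.rpow_le_rpow hφ.le h2 H.hpk.le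
    rw [H.eps1_pow] at hnum
    have hden : (z1 n k p)^(k-1) ≤ (zetaF u r)^(k-1) :=
      pow_le_pow_left₀ hz1.le h1 _
    have hz1k : (0:ℝ) < (z1 n k p)^(k-1) := pow_pos hz1 _
    have hdiv : phiF k p u r ^ (p-k) / (zetaF u r)^(k-1)
        ≤ (binomC n k * (c0 n k p/2) * (z1 n k p)^(k-1)) / (z1 n k p)^(k-1) :=
      div_le_div₀
        (mul_nonneg (mul_nonneg H.hB.le (by linarith : (0:ℝ) ≤ c0 n k p/2)) hz1k.le)
        hnum hz1k hden
    rw [mul_div_assoc, div_self hz1k.ne', mul_one] at hdiv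
    calc (1/binomC n k) * (phiF k p u r ^ (p-k) / (zetaF u r)^(k-1))
        ≤ (1/binomC n k) * (binomC n k * (c0 n k p/2)) := by
          apply mul_le_mul_of_nonneg_left hdiv
          exact le_of_lt (one_div_pos.mpr H.hB)
      _ = c0 n k p/2 := by rw [one_div, inv_mul_cancel_left₀ H.hB.ne']
  have hsum : r * ZZ n k p u r ≤ -(c0 n k p/2) := by
    rw [H.rZZ r hr, ← hK]
    linarith
  have hZr : ZZ n k p u r = (r * ZZ n k p u r)/r := by field_simp
  rw [hZr]
  exact (div_le_div_iff_of_pos_right hr).mpr hsum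

/-! ### Monotonicity lemmas -/

/-- Global: `φ(r) r^{zmax}` is monotone, since `ζ < zmax`. -/
lemma F1_mono {x y : ℝ} (hx : 0 < x) (hxy : x ≤ y) :
    phiF k p u x * x ^ (zmax n k p) ≤ phiF k p u y * y ^ (zmax n k p) := by
  set C := zmax n k p with hC
  have key : ∀ r ∈ Icc x y, HasDerivAt (fun s => phiF k p u s * s ^ C)
      (phiF k p u r * (aE k p - zetaF u r) / r * r ^ C
        + phiF k p u r * (C * r ^ (C-1))) r := by
    intro r hr
    have hr0 : 0 < r := lt_of_lt_of_le hx hr.1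
    exact (H.phi_hasDerivAt r hr0).mul
      (Real.hasDerivAt_rpow_const (x := r) (p := C) (Or.inl hr0.ne'))
  have hmono : MonotoneOn (fun s => phiF k p u s * s ^ C) (Icc x y) := by
    apply monotoneOn_of_deriv_nonneg (convex_Icc x y)
    · intro r hr; exact (key r hr).continuousAt.continuousWithinAt
    · intro r hr
      rw [interior_Icc] at hr
      exact (key r (Ioo_subset_Icc_self hr)).differentiableAt.differentiableWithinAt
    · intro r hr
      rw [interior_Icc] at hr
      have hr0 : 0 < r := lt_of_lt_of_le hx hr.1.le
      rw [(key r (Ioo_subset_Icc_self hr)).deriv]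
      have hφ := H.phi_pos r hr0
      have hζ := H.zeta_lt r hr0
      have ha := H.aE_pos
      have hrC : (0:ℝ) < r ^ C := Real.rpow_pos_of_pos hr0 _
      have hfact : phiF k p u r * (aE k p - zetaF u r) / r * r ^ C
          + phiF k p u r * (C * r ^ (C-1))
          = phiF k p u r * (aE k p - zetaF u r + C) * r ^ C / r := by
        rw [Real.rpow_sub_one hr0.ne']
        field_simp
      rw [hfact]
      have : 0 < aE k p - zetaF u r + C := by rw [hC]; linarith
      positivity
  exact hmono (left_mem_Icc.mpr hxy) (right_mem_Icc.mpr hxy) hxy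

/-- Growth when `ζ ≤ z1`: `φ(r) r^{-a/2}` is monotone. -/
lemma G_mono {x y : ℝ} (hx : 0 < x) (hxy : x ≤ y)
    (hz : ∀ r ∈ Icc x y, zetaF u r ≤ z1 n k p) :
    phiF k p u x * x ^ (-(aE k p)/2) ≤ phiF k p u y * y ^ (-(aE k p)/2) := by
  set C : ℝ := -(aE k p)/2 with hC
  have key : ∀ r ∈ Icc x y, HasDerivAt (fun s => phiF k p u s * s ^ C)
      (phiF k p u r * (aE k p - zetaF u r) / r * r ^ C
        + phiF k p u r * (C * r ^ (C-1))) r := by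
    intro r hr
    have hr0 : 0 < r := lt_of_lt_of_le hx hr.1
    exact (H.phi_hasDerivAt r hr0).mul
      (Real.hasDerivAt_rpow_const (x := r) (p := C) (Or.inl hr0.ne'))
  have hmono : MonotoneOn (fun s => phiF k p u s * s ^ C) (Icc x y) := by
    apply monotoneOn_of_deriv_nonneg (convex_Icc x y)
    · intro r hr; exact (key r hr).continuousAt.continuousWithinAt
    · intro r hr
      rw [interior_Icc] at hr
      exact (key r (Ioo_subset_Icc_self hr)).differentiableAt.differentiableWithinAt
    · intro r hr
      rw [interior_Icc] at hr
      have hr0 : 0 < r := lt_of_lt_of_le hx hr.1.le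
      rw [(key r (Ioo_subset_Icc_self hr)).deriv]
      have hφ := H.phi_pos r hr0
      have hζ := hz r (Ioo_subset_Icc_self hr)
      have hz1h := H.z1_le_half_a
      have hrC : (0:ℝ) < r ^ C := Real.rpow_pos_of_pos hr0 _
      have hfact : phiF k p u r * (aE k p - zetaF u r) / r * r ^ C
          + phiF k p u r * (C * r ^ (C-1))
          = phiF k p u r * (aE k p - zetaF u r + C) * r ^ C / r := by
        rw [Real.rpow_sub_one hr0.ne']
        field_simp
      rw [hfact]
      have : 0 ≤ aE k p - zetaF u r + C := by rw [hC]; linarith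
      positivity
  exact hmono (left_mem_Icc.mpr hxy) (right_mem_Icc.mpr hxy) hxy

/-- In the strip, `ζ + (c0/2) log` decreases. -/
lemma strip_anti {x y : ℝ} (hx : 0 < x) (hxy : x ≤ y)
    (hcond : ∀ r ∈ Icc x y, z1 n k p ≤ zetaF u r ∧ phiF k p u r ≤ eps1 n k p) :
    zetaF u y + (c0 n k p/2) * Real.log y ≤ zetaF u x + (c0 n k p/2) * Real.log x := by
  have key : ∀ r ∈ Icc x y, HasDerivAt (fun s => zetaF u s + (c0 n k p/2) * Real.log s)
      (ZZ n k p u r + (c0 n k p/2) * r⁻¹) r := by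
    intro r hr
    have hr0 : 0 < r := lt_of_lt_of_le hx hr.1
    exact (H.zeta_hasDerivAt r hr0).add ((Real.hasDerivAt_log hr0.ne').const_mul _)
  have hanti : AntitoneOn (fun s => zetaF u s + (c0 n k p/2) * Real.log s) (Icc x y) := by
    apply antitoneOn_of_deriv_nonpos (convex_Icc x y)
    · intro r hr; exact (key r hr).continuousAt.continuousWithinAt
    · intro r hr
      rw [interior_Icc] at hr
      exact (key r (Ioo_subset_Icc_self hr)).differentiableAt.differentiableWithinAt
    · intro r hr
      rw [interior_Icc] at hr
      have hr0 : 0 < r := lt_of_lt_of_le hx hr.1.le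
      rw [(key r (Ioo_subset_Icc_self hr)).deriv]
      obtain ⟨hc1, hc2⟩ := hcond r (Ioo_subset_Icc_self hr)
      have := H.ZZ_le r hr0 hc1 hc2
      have heq : -(c0 n k p/2)/r = -((c0 n k p/2) * r⁻¹) := by field_simp
      linarith [this, heq ▸ this]
  exact hanti (left_mem_Icc.mpr hxy) (right_mem_Icc.mpr hxy) hxy
end Good

def T0 (n k : ℕ) (p : ℝ) : ℝ := 2 * zmax n k p / c0 n k p
def Lam (n k : ℕ) (p : ℝ) : ℝ := Real.exp (T0 n k p)
def epsStar (n k : ℕ) (p : ℝ) : ℝ := eps1 n k p / (2 * Lam n k p ^ (zmax n k p))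

namespace Good

variable (H : Good n k p ρ u)
include H

lemma T0_pos : 0 < T0 n k p :=
  div_pos (by linarith [H.zmax_pos]) H.c0_pos

lemma Lam_one_lt : 1 < Lam n k p := by
  unfold Lam; rw [← Real.exp_zero]; exact Real.exp_lt_exp.mpr H.T0_pos

lemma Lam_pos : 0 < Lam n k p := lt_trans one_pos H.Lam_one_lt

lemma LamC_one_le : 1 ≤ Lam n k p ^ (zmax n k p) := by
  have := Real.rpow_le_rpow (by norm_num : (0:ℝ) ≤ 1) H.Lam_one_lt.le H.zmax_pos.le
  rwa [Real.one_rpow] at this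

lemma LamC_pos : 0 < Lam n k p ^ (zmax n k p) := Real.rpow_pos_of_pos H.Lam_pos _

lemma epsStar_pos : 0 < epsStar n k p :=
  div_pos H.eps1_pos (by linarith [H.LamC_one_le])

lemma epsStar_lt_eps1 : epsStar n k p < eps1 n k p := by
  have h1 := H.eps1_pos
  have h2 := H.LamC_one_le
  have h3 := H.LamC_pos
  unfold epsStar
  rw [div_lt_iff₀ (by linarith)]
  nlinarith

lemma zeta_continuousAt (r : ℝ) (hr : 0 < r) : ContinuousAt (zetaF u) r :=
  (H.zeta_hasDerivAt r hr).continuousAt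

lemma phi_continuousAt (r : ℝ) (hr : 0 < r) : ContinuousAt (phiF k p u) r :=
  (H.phi_hasDerivAt r hr).continuousAt

/-- Strip descent applied over a `Λ`-window: `ζ` drops below `z1` somewhere. -/
lemma exitStrip {x : ℝ} (hx : 0 < x)
    (hφ : ∀ r ∈ Icc x (x * Lam n k p), phiF k p u r ≤ eps1 n k p) :
    ∃ t ∈ Icc x (x * Lam n k p), zetaF u t ≤ z1 n k p := by
  by_contra hcon
  push_neg at hcon
  have hxy : x ≤ x * Lam n k p := le_mul_of_one_le_right hx.le H.Lam_one_lt.le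
  have hstrip := H.strip_anti hx hxy (fun r hr => ⟨(hcon r hr).le, hφ r hr⟩)
  have hlog : Real.log (x * Lam n k p) = Real.log x + T0 n k p := by
    rw [Real.log_mul hx.ne' H.Lam_pos.ne']
    unfold Lam
    rw [Real.log_exp]
  rw [hlog] at hstrip
  have hT0 : (c0 n k p/2) * T0 n k p = zmax n k p := by
    unfold T0
    field_simp [H.c0_pos.ne']
  have hz2 := H.zeta_lt x hx
  have hzpos := H.zeta_pos (x * Lam n k p) (mul_pos hx H.Lam_pos)
  nlinarith [hstrip, hT0, hz2, hzpos]

/-- Invariance: once `ζ ≤ z1`, it stays there while `φ ≤ ε₁`. -/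
lemma invariance {x y : ℝ} (hx : 0 < x) (hxy : x ≤ y) (hz : zetaF u x ≤ z1 n k p)
    (hφ : ∀ r ∈ Icc x y, phiF k p u r ≤ eps1 n k p) :
    ∀ r ∈ Icc x y, zetaF u r ≤ z1 n k p := by
  intro r₆ hr₆
  by_contra h6
  push_neg at h6
  have hx6 : x < r₆ := by
    rcases lt_or_eq_of_le hr₆.1 with h | h
    · exact h
    · exfalso; rw [← h] at h6; linarith
  set S := {t : ℝ | t ∈ Icc x r₆ ∧ zetaF u t ≤ z1 n k p} with hS
  have hSne : S.Nonempty := ⟨x, ⟨left_mem_Icc.mpr hx6.le, hz⟩⟩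
  have hSbdd : BddAbove S := ⟨r₆, fun t ht => ht.1.2⟩
  set r₅ := sSup S with hr₅
  have hScl : IsClosed S := by
    have : S = Icc x r₆ ∩ (zetaF u) ⁻¹' (Iic (z1 n k p)) := by
      rfl
    rw [this]
    apply ContinuousOn.preimage_isClosed_of_isClosed ?_ isClosed_Icc isClosed_Iic
    intro t ht
    exact (H.zeta_continuousAt t (lt_of_lt_of_le hx ht.1)).continuousWithinAt
  have hr₅S : r₅ ∈ S := hScl.csSup_mem hSne hSbdd
  have hr₅6 : r₅ < r₆ := by
    rcases lt_or_eq_of_le hr₅S.1.2 with h | h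
    · exact h
    · exfalso; rw [← h] at h6; linarith [hr₅S.2]
  have hr₅0 : 0 < r₅ := lt_of_lt_of_le hx hr₅S.1.1
  have hafter : ∀ t, r₅ < t → t ≤ r₆ → z1 n k p < zetaF u t := by
    intro t h1 h2
    by_contra h3
    push_neg at h3
    have : t ∈ S := ⟨⟨le_trans hr₅S.1.1 h1.le, h2⟩, h3⟩
    have := le_csSup hSbdd this
    linarith
  have hmain : ∀ t, r₅ < t → t < r₆ → zetaF u r₆ ≤ zetaF u t := by
    intro t h1 h2
    have ht0 : 0 < t := lt_trans hr₅0 h1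
    have hstrip := H.strip_anti ht0 h2.le (fun s hs =>
      ⟨(hafter s (lt_of_lt_of_le h1 hs.1) hs.2).le,
        hφ s ⟨le_trans hr₅S.1.1 (le_trans h1.le hs.1), le_trans hs.2 hr₆.2⟩⟩)
    have hlog : Real.log t ≤ Real.log r₆ :=
      Real.log_le_log ht0 (le_trans h2.le le_rfl)
    nlinarith [H.c0_pos]
  have hlim : zetaF u r₆ ≤ zetaF u r₅ := by
    refine ge_of_tendsto ((H.zeta_continuousAt r₅ hr₅0).tendsto.mono_left
      (nhdsWithin_le_nhds (s := Ioi r₅))) ?_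
    filter_upwards [Ioo_mem_nhdsGT_of_mem (⟨le_rfl, hr₅6⟩ : r₅ ∈ Ico r₅ r₆)] with t ht
    exact hmain t ht.1 ht.2
  linarith [hr₅S.2]

/-- Backward propagation over a `Λ`-window via `F1_mono`. -/
lemma window_bound {x y : ℝ} (hx : 0 < x) (hxy : x ≤ y) (hyL : y ≤ x * Lam n k p)
    (hφx : eps1 n k p ≤ phiF k p u x) :
    eps1 n k p / (Lam n k p ^ (zmax n k p)) ≤ phiF k p u y := by
  set C := zmax n k p with hC
  have hy0 : 0 < y := lt_of_lt_of_le hx hxy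
  have hxC : 0 < x ^ C := Real.rpow_pos_of_pos hx _
  have hLC := H.LamC_pos
  have h1 := H.F1_mono hx hxy
  have h2 : y ^ C ≤ x ^ C * Lam n k p ^ C := by
    rw [← Real.mul_rpow hx.le H.Lam_pos.le]
    exact Real.rpow_le_rpow hy0.le hyL H.zmax_pos.le
  have hφy := H.phi_pos y hy0
  have chain : eps1 n k p * x ^ C ≤ phiF k p u y * (x ^ C * Lam n k p ^ C) :=
    le_trans (mul_le_mul_of_nonneg_right hφx hxC.le)
      (le_trans h1 (mul_le_mul_of_nonneg_left h2 hφy.le))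
  rw [div_le_iff₀ hLC]
  nlinarith [chain, hxC]

/-- Forward monotonicity below `z1` (via `G_mono`): `φ` does not decrease. -/
lemma forward_bound {x y : ℝ} (hx : 0 < x) (hxy : x ≤ y)
    (hz : ∀ r ∈ Icc x y, zetaF u r ≤ z1 n k p) :
    phiF k p u x ≤ phiF k p u y := by
  have hy0 : 0 < y := lt_of_lt_of_le hx hxy
  have h1 := H.G_mono hx hxy hz
  set C : ℝ := -(aE k p)/2 with hC
  have hyC : 0 < y ^ C := Real.rpow_pos_of_pos hy0 _
  have hmono : y ^ C ≤ x ^ C :=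
    Real.rpow_le_rpow_of_nonpos hx hxy (by rw [hC]; linarith [H.aE_pos])
  have hφx := H.phi_pos x hx
  have := le_trans (mul_le_mul_of_nonneg_left hmono hφx.le) h1
  exact le_of_mul_le_mul_right this hyC

/-- There are points where `φ ≥ ε₁`. -/
lemma exists_phi_ge : ∃ r₁ : ℝ, 1 ≤ r₁ ∧ eps1 n k p ≤ phiF k p u r₁ := by
  by_contra hcon
  push_neg at hcon
  obtain ⟨r₄, hr₄mem, hr₄z⟩ := H.exitStrip (x := 1) one_pos
    (fun r hr => (hcon r hr.1).le)
  have hr₄1 : 1 ≤ r₄ := hr₄mem.1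
  have hr₄0 : 0 < r₄ := lt_of_lt_of_le one_pos hr₄1
  have hφ4 := H.phi_pos r₄ hr₄0
  have ha := H.aE_pos
  set Q := (eps1 n k p / phiF k p u r₄) ^ (2/(aE k p)) with hQ
  have hQpos : 0 < Q := Real.rpow_pos_of_pos (div_pos H.eps1_pos hφ4) _
  set y := r₄ * (1 + Q) with hy
  have hr₄y : r₄ ≤ y := le_mul_of_one_le_right hr₄0.le (by linarith)
  have hy1 : 1 ≤ y := le_trans hr₄1 hr₄y
  have hy0 : 0 < y := lt_of_lt_of_le one_pos hy1
  have hinv := H.invariance hr₄0 hr₄y hr₄z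
    (fun r hr => (hcon r (le_trans hr₄1 hr.1)).le)
  have hgm := H.G_mono hr₄0 hr₄y hinv
  -- φ y ≥ φ r₄ * (1+Q)^{a/2}
  have hkey : phiF k p u r₄ * (1+Q) ^ ((aE k p)/2) ≤ phiF k p u y := by
    have hsplit : y ^ (-(aE k p)/2) = r₄ ^ (-(aE k p)/2) * (1+Q) ^ (-(aE k p)/2) := by
      rw [hy, Real.mul_rpow hr₄0.le (by linarith)]
    have hQC : (0:ℝ) < (1+Q) ^ (-(aE k p)/2) := Real.rpow_pos_of_pos (by linarith) _
    have hQC2 : (0:ℝ) < (1+Q) ^ ((aE k p)/2) := Real.rpow_pos_of_pos (by linarith) _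
    have hr₄C : (0:ℝ) < r₄ ^ (-(aE k p)/2) := Real.rpow_pos_of_pos hr₄0 _
    have hcancel : (1+Q) ^ (-(aE k p)/2) * (1+Q) ^ ((aE k p)/2) = 1 := by
      rw [← Real.rpow_add (by linarith), neg_div, neg_add_cancel, Real.rpow_zero]
    have hcancel2 : r₄ ^ (-(aE k p)/2) * r₄ ^ ((aE k p)/2) = 1 := by
      rw [← Real.rpow_add hr₄0, neg_div, neg_add_cancel, Real.rpow_zero]
    rw [hsplit] at hgm
    -- hgm : φ r₄ * r₄^{-a/2} ≤ φ y * (r₄^{-a/2} * (1+Q)^{-a/2})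
    have := mul_le_mul_of_nonneg_right hgm hQC2.le
    rw [mul_assoc, mul_assoc, mul_assoc, hcancel, mul_one] at this
    -- this : φ r₄ * (r₄^{-a/2} * (1+Q)^{a/2}) ≤ φ y * r₄^{-a/2}
    have h3 := mul_le_mul_of_nonneg_right this (Real.rpow_pos_of_pos hr₄0 ((aE k p)/2)).le
    calc phiF k p u r₄ * (1+Q) ^ ((aE k p)/2)
        = phiF k p u r₄ * (r₄ ^ (-(aE k p)/2) * (1+Q) ^ ((aE k p)/2)) * r₄ ^ ((aE k p)/2) := by
          rw [show phiF k p u r₄ * (r₄ ^ (-(aE k p)/2) * (1+Q) ^ ((aE k p)/2)) * r₄ ^ ((aE k p)/2)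
            = phiF k p u r₄ * (1+Q) ^ ((aE k p)/2) * (r₄ ^ (-(aE k p)/2) * r₄ ^ ((aE k p)/2)) from by ring,
            hcancel2, mul_one]
      _ ≤ phiF k p u y * r₄ ^ (-(aE k p)/2) * r₄ ^ ((aE k p)/2) := h3
      _ = phiF k p u y := by
          rw [mul_assoc, hcancel2, mul_one]
  have hQa : Q ^ ((aE k p)/2) = eps1 n k p / phiF k p u r₄ := by
    rw [hQ, ← Real.rpow_mul (div_pos H.eps1_pos hφ4).le]
    rw [show 2/(aE k p) * ((aE k p)/2) = 1 from by field_simp, Real.rpow_one]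
  have hstrict : Q ^ ((aE k p)/2) < (1+Q) ^ ((aE k p)/2) :=
    Real.rpow_lt_rpow hQpos.le (by linarith) (by linarith)
  rw [hQa] at hstrict
  have : eps1 n k p < phiF k p u y := by
    calc eps1 n k p = phiF k p u r₄ * (eps1 n k p / phiF k p u r₄) := by field_simp
      _ < phiF k p u r₄ * (1+Q) ^ ((aE k p)/2) := by
          exact mul_lt_mul_of_pos_left hstrict hφ4
      _ ≤ phiF k p u y := hkey
  exact absurd (hcon y hy1) (not_lt.mpr this.le)

/-- MAIN LOWER BOUND: eventually `φ ≥ ε*`. -/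
lemma main_lower : ∃ R : ℝ, 1 ≤ R ∧ ∀ r, R ≤ r → epsStar n k p ≤ phiF k p u r := by
  obtain ⟨r₁, hr₁1, hφ1⟩ := H.exists_phi_ge
  refine ⟨r₁, hr₁1, ?_⟩
  intro rb hrb
  by_contra hbad
  push_neg at hbad
  have hr₁0 : 0 < r₁ := lt_of_lt_of_le one_pos hr₁1
  have hrb0 : 0 < rb := lt_of_lt_of_le hr₁0 hrb
  have hstar := H.epsStar_lt_eps1
  have h2es : eps1 n k p / (Lam n k p ^ (zmax n k p)) = 2 * epsStar n k p := by
    unfold epsStar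
    field_simp [H.LamC_pos.ne']
  have hr₁rb : r₁ < rb := by
    rcases lt_or_eq_of_le hrb with h | h
    · exact h
    · exfalso; rw [← h] at hbad; linarith
  set S2 := {t : ℝ | t ∈ Icc r₁ rb ∧ eps1 n k p ≤ phiF k p u t} with hS2
  have hS2ne : S2.Nonempty := ⟨r₁, ⟨left_mem_Icc.mpr hr₁rb.le, hφ1⟩⟩
  have hS2bdd : BddAbove S2 := ⟨rb, fun t ht => ht.1.2⟩
  have hS2cl : IsClosed S2 := by
    have : S2 = Icc r₁ rb ∩ (phiF k p u) ⁻¹' (Ici (eps1 n k p)) := rfl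
    rw [this]
    apply ContinuousOn.preimage_isClosed_of_isClosed ?_ isClosed_Icc isClosed_Ici
    intro t ht
    exact (H.phi_continuousAt t (lt_of_lt_of_le hr₁0 ht.1)).continuousWithinAt
  set r₂ := sSup S2 with hr₂def
  have hr₂S : r₂ ∈ S2 := hS2cl.csSup_mem hS2ne hS2bdd
  have hr₂0 : 0 < r₂ := lt_of_lt_of_le hr₁0 hr₂S.1.1
  have hr₂rb : r₂ < rb := by
    rcases lt_or_eq_of_le hr₂S.1.2 with h | h
    · exact h
    · exfalso; rw [h] at hr₂S; linarith [hr₂S.2]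
  have hupper : ∀ t, r₂ < t → t ≤ rb → phiF k p u t < eps1 n k p := by
    intro t h1 h2
    by_contra h3
    push_neg at h3
    have : t ∈ S2 := ⟨⟨le_trans hr₂S.1.1 h1.le, h2⟩, h3⟩
    have := le_csSup hS2bdd this
    linarith
  have hφr₂ : phiF k p u r₂ ≤ eps1 n k p := by
    by_contra hgt
    push_neg at hgt
    have hev : ∀ᶠ t in 𝓝[>] r₂, eps1 n k p < phiF k p u t :=
      ((H.phi_continuousAt r₂ hr₂0).tendsto.mono_left
        (nhdsWithin_le_nhds (s := Ioi r₂))).eventually (eventually_gt_nhds hgt)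
    obtain ⟨t, ht1, ht2⟩ := (hev.and
      (Ioo_mem_nhdsGT_of_mem (⟨le_rfl, hr₂rb⟩ : r₂ ∈ Ico r₂ rb))).exists
    have : t ∈ S2 := ⟨⟨le_trans hr₂S.1.1 ht2.1.le, ht2.2.le⟩, ht1.le⟩
    have := le_csSup hS2bdd this
    linarith [ht2.1]
  have hcc : ∀ t ∈ Icc r₂ rb, phiF k p u t ≤ eps1 n k p := by
    intro t ht
    rcases lt_or_eq_of_le ht.1 with h | h
    · exact (hupper t h ht.2).le
    · rw [← h]; exact hφr₂
  by_cases hSA : ∃ t ∈ Icc r₂ rb, zetaF u t ≤ z1 n k p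
  · -- Case A
    set SA := {t : ℝ | t ∈ Icc r₂ rb ∧ zetaF u t ≤ z1 n k p} with hSAdef
    have hSAne : SA.Nonempty := by
      obtain ⟨t, ht1, ht2⟩ := hSA; exact ⟨t, ht1, ht2⟩
    have hSAbdd : BddBelow SA := ⟨r₂, fun t ht => ht.1.1⟩
    have hSAcl : IsClosed SA := by
      have : SA = Icc r₂ rb ∩ (zetaF u) ⁻¹' (Iic (z1 n k p)) := rfl
      rw [this]
      apply ContinuousOn.preimage_isClosed_of_isClosed ?_ isClosed_Icc isClosed_Iic
      intro t ht
      exact (H.zeta_continuousAt t (lt_of_lt_of_le hr₂0 ht.1)).continuousWithinAt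
    set r₄ := sInf SA with hr₄def
    have hr₄S : r₄ ∈ SA := hSAcl.csInf_mem hSAne hSAbdd
    have hr₄0 : 0 < r₄ := lt_of_lt_of_le hr₂0 hr₄S.1.1
    have hbefore : ∀ t, r₂ ≤ t → t < r₄ → z1 n k p < zetaF u t := by
      intro t h1 h2
      by_contra h3
      push_neg at h3
      have : t ∈ SA := ⟨⟨h1, le_trans h2.le hr₄S.1.2⟩, h3⟩
      have := csInf_le hSAbdd this
      linarith
    have hr₄L : r₄ ≤ r₂ * Lam n k p := by
      by_contra hgt
      push_neg at hgt
      obtain ⟨t, ht1, ht2⟩ := H.exitStrip hr₂0 (fun r hr =>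
        hcc r ⟨hr.1, le_trans hr.2 (le_trans hgt.le hr₄S.1.2)⟩)
      exact absurd ht2 (not_le.mpr (hbefore t ht1.1 (lt_of_le_of_lt ht1.2 hgt)))
    have hφ4 : 2 * epsStar n k p ≤ phiF k p u r₄ := by
      rw [← h2es]
      exact H.window_bound hr₂0 hr₄S.1.1 hr₄L hr₂S.2
    have hinv := H.invariance hr₄0 hr₄S.1.2 hr₄S.2
      (fun r hr => hcc r ⟨le_trans hr₄S.1.1 hr.1, hr.2⟩)
    have hfwd := H.forward_bound hr₄0 hr₄S.1.2 hinv
    have := H.epsStar_pos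
    linarith
  · -- Case B
    push_neg at hSA
    have hrbL : rb ≤ r₂ * Lam n k p := by
      by_contra hgt
      push_neg at hgt
      obtain ⟨t, ht1, ht2⟩ := H.exitStrip hr₂0 (fun r hr =>
        hcc r ⟨hr.1, le_trans hr.2 hgt.le⟩)
      exact absurd ht2 (not_le.mpr (hSA t ⟨ht1.1, le_trans ht1.2 hgt.le⟩))
    have hφb : 2 * epsStar n k p ≤ phiF k p u rb := by
      rw [← h2es]
      exact H.window_bound hr₂0 hr₂rb.le hrbL hr₂S.2
    have := H.epsStar_pos
    linarith

lemma Pmax_pos : 0 < Pmax n k p := by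
  apply Real.rpow_pos_of_pos
  have h1 := H.hnpos
  have h2 := H.hB
  have h3 : (0:ℝ) < (zmax n k p)^k := pow_pos H.zmax_pos _
  have := H.hkpos
  positivity

end Good

theorem decay_rate_supercritical_aux (n k : ℕ) (p ρ : ℝ) (u : ℝ → ℝ)
    (hn : 3 ≤ n) (hk1 : 1 < k) (hk2 : 2 * k < n) (hρ : 0 < ρ)
    (hp : ((n : ℝ) + 2) * k / ((n : ℝ) - 2 * k) < p)
    (hu : IsRegularSolution n k p ρ u) :
    ∃ C : ℝ, 1 < C ∧ ∃ R : ℝ, 0 < R ∧ ∀ r : ℝ, R ≤ r →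
      1 / C ≤ u r * r ^ (2 * (k : ℝ) / (p - k)) ∧
      u r * r ^ (2 * (k : ℝ) / (p - k)) ≤ C := by
  have H : Good n k p ρ u := ⟨hn, hk1, hk2, hρ, hp, hu⟩
  obtain ⟨R, hR1, hlow⟩ := H.main_lower
  have hPp := H.Pmax_pos
  have hes := H.epsStar_pos
  have hesi : 0 < 1/epsStar n k p := by positivity
  have hR0 : (0:ℝ) < R := by linarith
  have h1C : 1 < Pmax n k p + 1/epsStar n k p + 2 := by linarith
  refine ⟨Pmax n k p + 1/epsStar n k p + 2, h1C, R, hR0, ?_⟩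
  intro r hr
  have hr0 : 0 < r := lt_of_lt_of_le (lt_of_lt_of_le one_pos hR1) hr
  have hphi : phiF k p u r = u r * r ^ (2 * (k : ℝ) / (p - k)) := rfl
  constructor
  · have h1 : 1/epsStar n k p ≤ Pmax n k p + 1/epsStar n k p + 2 := by linarith
    have h2 : 1/(Pmax n k p + 1/epsStar n k p + 2) ≤ 1/(1/epsStar n k p) :=
      one_div_le_one_div_of_le hesi h1
    rw [one_div_one_div] at h2
    rw [← hphi]
    exact le_trans h2 (hlow r hr)
  · rw [← hphi]
    have := H.phi_le r hr0
    linarith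

end Proof

/-- in the supercritical case every regular solution satisfies
`u(r) ≍ r^{-2k/(p-k)}` for large `r`. -/
theorem decay_rate_supercritical (n k : ℕ) (p ρ : ℝ) (u : ℝ → ℝ)
    (hn : 3 ≤ n) (hk1 : 1 < k) (hk2 : 2 * k < n) (hρ : 0 < ρ)
    (hp : ((n : ℝ) + 2) * k / ((n : ℝ) - 2 * k) < p)
    (hu : IsRegularSolution n k p ρ u) :
    ∃ C : ℝ, 1 < C ∧ ∃ R : ℝ, 0 < R ∧ ∀ r : ℝ, R ≤ r →
      1 / C ≤ u r * r ^ (2 * (k : ℝ) / (p - k)) ∧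
      u r * r ^ (2 * (k : ℝ) / (p - k)) ≤ C := by
  exact decay_rate_supercritical_aux n k p ρ u hn hk1 hk2 hρ hp hu

end KHessianPaper
end
end

section
/- Let n ≥ 3, k an integer with 1 < k < n/2, and p > nk/(n-2k). Let u be a regular solution of the initial value problem -(1/k)·C(n-1,k-1)·(r^{n-k}|u'|^{k-1}u')' = r^{n-1}u^p, u > 0, u'(0) = 0, u(0) = ρ > 0. Then u'(r) < 0 for all r > 0, u(r) → 0 as r → ∞, and there exist positive constants C₁, C₂ and R such that C₁·r^{-(n-2k)/k} ≤ u(r) ≤ C₂·r^{-2k/(p-k)} for all r ≥ R. -/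
open MeasureTheory Real Set Filter Asymptotics

noncomputable section

namespace KHessianPaper

open Topology in
private lemma le_root {x y : ℝ} {k : ℕ} (hk : 0 < k) (hx : 0 ≤ x) (hy : 0 ≤ y)
    (h : y ≤ x ^ k) : y ^ ((k : ℝ)⁻¹) ≤ x := by
  have hk' : ((k : ℝ)) ≠ 0 := Nat.cast_ne_zero.mpr hk.ne'
  calc y ^ ((k:ℝ)⁻¹) ≤ (x ^ k) ^ ((k:ℝ)⁻¹) := Real.rpow_le_rpow hy h (by positivity)
    _ = x := by
        rw [← Real.rpow_natCast x k, ← Real.rpow_mul hx, mul_inv_cancel₀ hk', Real.rpow_one]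

set_option maxHeartbeats 1000000 in
open Topology in
/-- a regular solution has negative derivative, tends to `0` at infinity,
and satisfies `C₁ r^{-(n-2k)/k} ≤ u(r) ≤ C₂ r^{-2k/(p-k)}` for large `r`. -/
theorem basic_properties_regular_solution (n k : ℕ) (p ρ : ℝ) (u : ℝ → ℝ)
    (hn : 3 ≤ n) (hk1 : 1 < k) (hk2 : 2 * k < n) (hρ : 0 < ρ)
    (hp : (n : ℝ) * k / ((n : ℝ) - 2 * k) < p)
    (hu : IsRegularSolution n k p ρ u) :
    (∀ r : ℝ, 0 < r → deriv u r < 0) ∧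
    Tendsto u atTop (nhds 0) ∧
    ∃ C₁ C₂ R : ℝ, 0 < C₁ ∧ 0 < C₂ ∧ 0 < R ∧ ∀ r : ℝ, R ≤ r →
      C₁ * r ^ (-(((n : ℝ) - 2 * k) / k)) ≤ u r ∧
      u r ≤ C₂ * r ^ (-(2 * (k : ℝ) / (p - k))) := by
  obtain ⟨hreg, hd0, hinit, hpos, heqn, -⟩ := hu
  have hk0 : 0 < k := by omega
  have hkn : k ≤ n := by omega
  have hkR : (0:ℝ) < k := by exact_mod_cast hk0
  have hkne : ((k:ℝ)) ≠ 0 := hkR.ne'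
  have hnR : (0:ℝ) < n := by exact_mod_cast (by omega : 0 < n)
  have hn2k : (0:ℝ) < (n:ℝ) - 2*k := by
    have h := (Nat.cast_lt (α := ℝ)).mpr hk2
    push_cast at h; linarith
  have hpk : (k:ℝ) < p := by
    have h1 : (k:ℝ) < (n:ℝ)*k/((n:ℝ)-2*k) := by
      rw [lt_div_iff₀ hn2k]; nlinarith
    linarith
  have hp0 : (0:ℝ) < p := lt_trans hkR hpk
  have hC : (0:ℝ) < binomC n k := by
    have h : 0 < (n-1).choose (k-1) := Nat.choose_pos (by omega)
    unfold binomC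
    exact_mod_cast h
  set c : ℝ := (k:ℝ)/binomC n k with hc_def
  have hc : 0 < c := div_pos hkR hC
  -- derivative facts
  have hdOn : DifferentiableOn ℝ u (Ici 0) := hreg.differentiableOn one_ne_zero
  have hcontu : ContinuousOn u (Ici 0) := hreg.continuousOn
  have hdiff : ∀ r : ℝ, 0 < r → HasDerivAt u (deriv u r) r := fun r hr =>
    (hdOn.differentiableAt (Ici_mem_nhds hr)).hasDerivAt
  -- flux facts
  have hfluxcont : ContinuousOn (flux n k u) (Ioi 0) := fun r hr =>
    ((heqn r hr).continuousAt).continuousWithinAt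
  have hfluxanti : StrictAntiOn (flux n k u) (Ioi 0) := by
    apply strictAntiOn_of_deriv_neg (convex_Ioi 0) hfluxcont
    intro x hx
    rw [interior_Ioi] at hx
    rw [(heqn x hx).deriv]
    have h1 : 0 < u x ^ p := Real.rpow_pos_of_pos (hpos x hx.le) p
    have h2 : 0 < x ^ (n-1) := pow_pos hx _
    have h3 : 0 < c * (x^(n-1) * (u x ^ p)) := mul_pos hc (mul_pos h2 h1)
    nlinarith [h3]
  set g := derivWithin u (Ici 0) with hg_def
  have hg0 : g 0 = 0 := hd0
  have hgcont : ContinuousOn g (Ici 0) :=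
    hreg.continuousOn_derivWithin (uniqueDiffOn_Ici 0) le_rfl
  have hgd : ∀ r : ℝ, 0 < r → deriv u r = g r := fun r hr =>
    (derivWithin_of_mem_nhds (Ici_mem_nhds hr)).symm
  have hnk0 : n - k ≠ 0 := by omega
  have hfluxlim : Tendsto (flux n k u) (𝓝[>] (0:ℝ)) (𝓝 0) := by
    have h1 : ContinuousWithinAt g (Ici 0) 0 := hgcont 0 self_mem_Ici
    have hF : ContinuousWithinAt (fun r : ℝ => r^(n-k) * |g r|^(k-1) * g r) (Ici 0) 0 :=
      ((continuousWithinAt_id.pow _).mul ((h1.abs).pow _)).mul h1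
    have h2 : Tendsto (fun r : ℝ => r^(n-k) * |g r|^(k-1) * g r) (𝓝[>] (0:ℝ))
        (𝓝 ((fun r : ℝ => r^(n-k) * |g r|^(k-1) * g r) 0)) :=
      hF.mono_left (nhdsWithin_mono _ Ioi_subset_Ici_self)
    have hF0 : (fun r : ℝ => r^(n-k) * |g r|^(k-1) * g r) 0 = 0 := by
      simp [zero_pow hnk0]
    rw [hF0] at h2
    refine h2.congr' ?_
    filter_upwards [self_mem_nhdsWithin] with r hr
    simp only [flux, hgd r hr]
  have hflux_nonpos : ∀ r : ℝ, 0 < r → flux n k u r ≤ 0 := by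
    intro r hr
    refine ge_of_tendsto hfluxlim ?_
    filter_upwards [Ioo_mem_nhdsGT_of_mem (left_mem_Ico.mpr hr)] with a ha
    exact (hfluxanti ha.1 (mem_Ioi.mpr hr) ha.2).le
  have hfluxneg : ∀ r : ℝ, 0 < r → flux n k u r < 0 := by
    intro r hr
    have h1 : flux n k u r < flux n k u (r/2) :=
      hfluxanti (mem_Ioi.mpr (by linarith)) (mem_Ioi.mpr hr) (by linarith)
    exact lt_of_lt_of_le h1 (hflux_nonpos _ (by linarith))
  have hu'neg : ∀ r : ℝ, 0 < r → deriv u r < 0 := by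
    intro r hr
    by_contra h
    push_neg at h
    have h2 : 0 ≤ flux n k u r := by
      unfold flux
      exact mul_nonneg (mul_nonneg (pow_nonneg hr.le _) (pow_nonneg (abs_nonneg _) _)) h
    linarith [hfluxneg r hr]
  have hkk : k - 1 + 1 = k := by omega
  have hflux_eq : ∀ r : ℝ, 0 < r → flux n k u r = -(r^(n-k) * (-deriv u r)^k) := by
    intro r hr
    have hpow : (-deriv u r)^k = (-deriv u r)^(k-1) * (-deriv u r) := by
      conv_lhs => rw [← hkk]
      rw [pow_succ]
    unfold flux
    rw [abs_of_neg (hu'neg r hr), hpow]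
    ring
  have hantiu : AntitoneOn u (Ici 0) := by
    apply antitoneOn_of_deriv_nonpos (convex_Ici 0) hcontu
    · rw [interior_Ici]
      exact fun x hx => (hdiff x hx).differentiableAt.differentiableWithinAt
    · rw [interior_Ici]
      exact fun x hx => (hu'neg x hx).le
  -- Lemma B: flux r ≤ -(c/n) u(r)^p r^n
  have hB : ∀ r : ℝ, 0 < r → c/n * u r ^ p * r^n ≤ r^(n-k) * (-deriv u r)^k := by
    intro r hr
    have hupr : 0 < u r ^ p := Real.rpow_pos_of_pos (hpos r hr.le) p
    have hhanti : AntitoneOn (fun a => flux n k u a + (c * u r ^ p / n) * a^n) (Ioc 0 r) := by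
      apply antitoneOn_of_deriv_nonpos (convex_Ioc 0 r)
      · exact (hfluxcont.mono Ioc_subset_Ioi_self).add
          ((continuous_const.mul (continuous_pow n)).continuousOn)
      · rw [interior_Ioc]
        intro a ha
        exact ((heqn a ha.1).add
          ((hasDerivAt_pow n a).const_mul (c * u r ^ p / n))).differentiableAt.differentiableWithinAt
      · rw [interior_Ioc]
        intro a ha
        have hd : HasDerivAt (fun a => flux n k u a + (c * u r ^ p / n) * a^n)
            (-(c) * a^(n-1) * u a ^ p + (c * u r ^ p / n) * ((n:ℝ) * a^(n-1))) a :=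
          (heqn a ha.1).add ((hasDerivAt_pow n a).const_mul (c * u r ^ p / n))
        rw [hd.deriv]
        have h1 : u r ^ p ≤ u a ^ p :=
          Real.rpow_le_rpow (hpos r hr.le).le
            (hantiu (le_of_lt ha.1) hr.le ha.2.le) hp0.le
        have h2 : (c * u r ^ p / n) * ((n:ℝ) * a^(n-1)) = c * u r ^ p * a^(n-1) := by
          field_simp
        rw [h2]
        nlinarith [mul_le_mul_of_nonneg_left h1 (mul_pos hc (pow_pos ha.1 (n-1))).le]
    have htend : Tendsto (fun a : ℝ => flux n k u a + (c * u r ^ p / n) * a^n)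
        (𝓝[>] (0:ℝ)) (𝓝 0) := by
      have h3 : Tendsto (fun a : ℝ => (c * u r ^ p / n) * a^n) (𝓝[>] (0:ℝ))
          (𝓝 ((c*u r^p/n) * 0^n)) :=
        ((continuous_const.mul (continuous_pow n)).tendsto 0).mono_left nhdsWithin_le_nhds
      rw [zero_pow (by omega : n ≠ 0), mul_zero] at h3
      simpa using hfluxlim.add h3
    have hr0 : flux n k u r + (c * u r ^ p / n) * r^n ≤ 0 := by
      refine ge_of_tendsto htend ?_
      filter_upwards [Ioc_mem_nhdsGT_of_mem (left_mem_Ico.mpr hr)] with a ha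
      exact hhanti ha (right_mem_Ioc.mpr hr) ha.2
    rw [hflux_eq r hr] at hr0
    have h4 : (c * u r ^ p / n) * r ^ n = c/n * u r ^ p * r^n := by ring
    rw [h4] at hr0
    linarith
  set c₂ : ℝ := (c/n) ^ ((k:ℝ)⁻¹) with hc2_def
  have hc2 : 0 < c₂ := Real.rpow_pos_of_pos (div_pos hc hnR) _
  have hODE : ∀ r : ℝ, 0 < r → c₂ * u r ^ (p/k) * r ≤ -deriv u r := by
    intro r hr
    have hur : 0 < u r := hpos r hr.le
    have hrnk : (0:ℝ) < r ^ (n-k) := pow_pos hr _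
    have hnn : (r:ℝ) ^ n = r ^ (n-k) * r^k := by rw [← pow_add]; congr 1; omega
    have h6 : r ^ (n-k) * (c/n * u r ^ p * r ^ k) ≤ r ^ (n-k) * (-deriv u r)^k := by
      calc r ^ (n-k) * (c/n * u r ^ p * r ^ k) = c/n * u r ^ p * r ^ n := by rw [hnn]; ring
        _ ≤ r^(n-k) * (-deriv u r)^k := hB r hr
    have h5 : c/n * u r ^ p * r^k ≤ (-deriv u r)^k := le_of_mul_le_mul_left h6 hrnk
    have hy : (0:ℝ) ≤ c/n * u r ^ p * r^k :=
      mul_nonneg (mul_nonneg (div_pos hc hnR).le (Real.rpow_pos_of_pos hur p).le)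
        (pow_pos hr k).le
    have h7 := le_root hk0 (neg_nonneg.mpr (hu'neg r hr).le) hy h5
    have h8 : (c/n * u r ^ p * r^k) ^ ((k:ℝ)⁻¹) = c₂ * u r ^ (p/k) * r := by
      rw [Real.mul_rpow (mul_nonneg (div_pos hc hnR).le (Real.rpow_pos_of_pos hur p).le)
            (pow_pos hr k).le,
          Real.mul_rpow (div_pos hc hnR).le (Real.rpow_pos_of_pos hur p).le,
          ← Real.rpow_natCast r k, ← Real.rpow_mul hr.le, ← Real.rpow_mul hur.le,
          mul_inv_cancel₀ hkne, Real.rpow_one, ← div_eq_mul_inv]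
    rw [h8] at h7
    exact h7
  -- upper bound
  set q : ℝ := (p - k)/k with hq_def
  have hq : 0 < q := div_pos (by linarith) hkR
  set D : ℝ := q * c₂ with hD_def
  have hD : 0 < D := mul_pos hq hc2
  have hψmono : MonotoneOn (fun s : ℝ => u s ^ (-q) - D/2 * s^2) (Ici 1) := by
    apply monotoneOn_of_deriv_nonneg (convex_Ici 1)
    · apply ContinuousOn.sub
      · exact ContinuousOn.rpow_const
          (hcontu.mono (fun x hx => mem_Ici.mpr (le_trans zero_le_one hx)))
          (fun x hx => Or.inl (hpos x (le_trans zero_le_one hx)).ne')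
      · exact (continuous_const.mul (continuous_pow 2)).continuousOn
    · rw [interior_Ici]
      intro x hx
      have hx0 : (0:ℝ) < x := lt_trans one_pos hx
      exact (((hdiff x hx0).rpow_const (p := -q) (Or.inl (hpos x hx0.le).ne')).sub
        ((hasDerivAt_pow 2 x).const_mul (D/2))).differentiableAt.differentiableWithinAt
    · rw [interior_Ici]
      intro x hx
      have hx0 : (0:ℝ) < x := lt_trans one_pos hx
      have hux : 0 < u x := hpos x hx0.le
      have hd := ((hdiff x hx0).rpow_const (p := -q) (Or.inl hux.ne')).sub
        ((hasDerivAt_pow 2 x).const_mul (D/2))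
      rw [HasDerivAt.deriv (f := fun s : ℝ => u s ^ (-q) - D/2 * s^2) hd]
      have key : c₂ * u x ^ (p/k) * x ≤ -deriv u x := hODE x hx0
      have hexp : u x ^ (p/k) * u x ^ (-q-1) = 1 := by
        rw [← Real.rpow_add hux]
        have h : p/k + (-q-1) = 0 := by rw [hq_def]; field_simp; ring
        rw [h, Real.rpow_zero]
      have h9 : (0:ℝ) < u x ^ (-q-1) := Real.rpow_pos_of_pos hux _
      have h10 : q * (c₂ * u x ^ (p/k) * x) * u x ^ (-q-1) ≤
          q * (-deriv u x) * u x ^ (-q-1) :=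
        mul_le_mul_of_nonneg_right (mul_le_mul_of_nonneg_left key hq.le) h9.le
      have h11 : q * (c₂ * u x ^ (p/k) * x) * u x ^ (-q-1) = D * x := by
        calc q * (c₂ * u x ^ (p/k) * x) * u x ^ (-q-1)
            = q * c₂ * x * (u x ^ (p/k) * u x ^ (-q-1)) := by ring
          _ = D * x := by rw [hexp, hD_def]; ring
      simp only [pow_one, Nat.cast_ofNat]
      nlinarith [h10, h11]
  have hupper0 : ∀ r : ℝ, 2 ≤ r → D/4 * r^2 ≤ u r ^ (-q) := by
    intro r hr2
    have hr1 : (1:ℝ) ≤ r := by linarith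
    have h13 := hψmono self_mem_Ici (mem_Ici.mpr hr1) hr1
    simp only [one_pow] at h13
    have h14 : (0:ℝ) < u 1 ^ (-q) := Real.rpow_pos_of_pos (hpos 1 zero_le_one) _
    have h15 : (0:ℝ) ≤ D * (r^2 - 4) := mul_nonneg hD.le (by nlinarith)
    linarith [h13, h14, h15, hD]
  set C₂ : ℝ := (D/4) ^ (-q⁻¹) with hC2_def
  have hC₂ : 0 < C₂ := Real.rpow_pos_of_pos (by positivity) _
  have hupper : ∀ r : ℝ, 2 ≤ r → u r ≤ C₂ * r ^ (-(2 * (k:ℝ) / (p - k))) := by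
    intro r hr2
    have hr0 : (0:ℝ) < r := by linarith
    have hur : 0 < u r := hpos r hr0.le
    have h15 := hupper0 r hr2
    have h16 : (0:ℝ) < D/4 * r^2 := by positivity
    have h17 : (u r ^ (-q)) ^ (-q⁻¹) ≤ (D/4 * r^2) ^ (-q⁻¹) :=
      Real.rpow_le_rpow_of_nonpos h16 h15 (neg_nonpos.mpr (inv_nonneg.mpr hq.le))
    have h18 : (u r ^ (-q)) ^ (-q⁻¹) = u r := by
      rw [← Real.rpow_mul hur.le, (by field_simp : (-q) * (-q⁻¹) = 1), Real.rpow_one]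
    have h19 : (D/4 * r^2) ^ (-q⁻¹) = C₂ * r ^ (-(2 * (k:ℝ) / (p - k))) := by
      rw [Real.mul_rpow (by positivity) (by positivity), ← Real.rpow_natCast r 2,
          ← Real.rpow_mul hr0.le]
      congr 1
      rw [hq_def]
      push_cast
      rw [inv_div]
      field_simp
    rw [h18, h19] at h17
    exact h17
  set α : ℝ := 2 * (k:ℝ) / (p - k) with hα_def
  have hα : 0 < α := div_pos (by positivity) (by linarith)
  have hu0 : Tendsto u atTop (𝓝 0) := by
    apply squeeze_zero' (g := fun r : ℝ => C₂ * r ^ (-α))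
    · filter_upwards [eventually_ge_atTop (0:ℝ)] with r hr
      exact (hpos r hr).le
    · filter_upwards [eventually_ge_atTop (2:ℝ)] with r hr
      exact hupper r hr
    · have h := (tendsto_rpow_neg_atTop hα).const_mul C₂
      rw [mul_zero] at h
      exact h
  -- lower bound
  set γ : ℝ := ((n:ℝ) - 2*k)/k with hγ_def
  have hγ : 0 < γ := div_pos hn2k hkR
  set m : ℝ := -flux n k u 1 with hm_def
  have hm : 0 < m := neg_pos.mpr (hfluxneg 1 one_pos)
  set m' : ℝ := m ^ ((k:ℝ)⁻¹) with hm'_def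
  have hm'pos : 0 < m' := Real.rpow_pos_of_pos hm _
  have hder_low : ∀ r : ℝ, 1 ≤ r → m' * r ^ (-(γ+1)) ≤ -deriv u r := by
    intro r hr1
    have hr0 : (0:ℝ) < r := lt_of_lt_of_le one_pos hr1
    have h20 : flux n k u r ≤ flux n k u 1 := by
      rcases eq_or_lt_of_le hr1 with h | h
      · rw [← h]
      · exact (hfluxanti (mem_Ioi.mpr one_pos) (mem_Ioi.mpr hr0) h).le
    rw [hflux_eq r hr0] at h20
    have hfl1 : flux n k u 1 = -m := by rw [hm_def]; ring
    have h21 : m ≤ r ^ (n-k) * (-deriv u r)^k := by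
      rw [hfl1] at h20; linarith
    have h22 : m * (r ^ (n-k))⁻¹ ≤ (-deriv u r)^k := by
      rw [mul_inv_le_iff₀ (pow_pos hr0 (n-k))]
      nlinarith [h21]
    have h23 := le_root hk0 (neg_nonneg.mpr (hu'neg r hr0).le)
      (by positivity) h22
    have h24 : (m * (r ^ (n-k))⁻¹) ^ ((k:ℝ)⁻¹) = m' * r ^ (-(γ+1)) := by
      rw [Real.mul_rpow hm.le (by positivity), ← Real.rpow_natCast r (n-k),
          ← Real.rpow_neg hr0.le, ← Real.rpow_mul hr0.le, hm'_def]
      congr 1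
      rw [hγ_def]
      rw [Nat.cast_sub hkn]
      field_simp
      ring
    rw [h24] at h23
    exact h23
  have hζanti : AntitoneOn (fun s : ℝ => u s - (m'/γ) * s ^ (-γ)) (Ici 1) := by
    apply antitoneOn_of_deriv_nonpos (convex_Ici 1)
    · apply ContinuousOn.sub
      · exact hcontu.mono (fun x hx => mem_Ici.mpr (le_trans zero_le_one hx))
      · exact continuousOn_const.mul (ContinuousOn.rpow_const continuousOn_id
          (fun x hx => Or.inl (ne_of_gt (lt_of_lt_of_le one_pos hx))))
    · rw [interior_Ici]
      intro x hx
      have hx0 : (0:ℝ) < x := lt_trans one_pos hx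
      exact ((hdiff x hx0).sub ((Real.hasDerivAt_rpow_const
        (Or.inl hx0.ne')).const_mul (m'/γ))).differentiableAt.differentiableWithinAt
    · rw [interior_Ici]
      intro x hx
      have hx0 : (0:ℝ) < x := lt_trans one_pos hx
      have hd := (hdiff x hx0).sub
        ((Real.hasDerivAt_rpow_const (p := -γ) (Or.inl hx0.ne')).const_mul (m'/γ))
      rw [HasDerivAt.deriv (f := fun s : ℝ => u s - (m'/γ) * s ^ (-γ)) hd]
      have h25 : (m'/γ) * ((-γ) * x ^ (-γ-1)) = -(m' * x ^ (-(γ+1))) := by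
        rw [(by ring : -γ-1 = -(γ+1))]
        field_simp
      rw [h25]
      have := hder_low x (le_of_lt hx)
      linarith
  have hζ0 : Tendsto (fun s : ℝ => u s - (m'/γ) * s ^ (-γ)) atTop (𝓝 0) := by
    have h26 : Tendsto (fun s : ℝ => (m'/γ) * s ^ (-γ)) atTop (𝓝 ((m'/γ) * 0)) :=
      (tendsto_rpow_neg_atTop hγ).const_mul _
    rw [mul_zero] at h26
    simpa using hu0.sub h26
  have hlower : ∀ r : ℝ, 1 ≤ r → (m'/γ) * r ^ (-γ) ≤ u r := by
    intro r hr1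
    have h27 : (0:ℝ) ≤ u r - (m'/γ) * r ^ (-γ) := by
      refine le_of_tendsto hζ0 ?_
      filter_upwards [eventually_ge_atTop r] with s hs
      exact hζanti (mem_Ici.mpr hr1) (mem_Ici.mpr (le_trans hr1 hs)) hs
    linarith
  refine ⟨hu'neg, hu0, m'/γ, C₂, 2, div_pos hm'pos hγ, hC₂, two_pos,
    fun r hr => ⟨?_, ?_⟩⟩
  · exact hlower r (by linarith)
  · exact hupper r hr

end KHessianPaper
end
end

section
/- Let n ≥ 3, k an integer with 1 < k < n/2, and p > nk/(n-2k). Let u be a regular solution of the initial value problem -(1/k)·C(n-1,k-1)·(r^{n-k}|u'|^{k-1}u')' = r^{n-1}u^p, u > 0, u'(0) = 0, u(0) = ρ > 0. If u(r) = O(r^{-2k/(p-k)-ε}) as r → ∞ for some ε ∈ (0, (n-2k)/k − 2k/(p-k)), then u(r) = O(r^{(2k-n)/k}) as r → ∞. -/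
open MeasureTheory Real Set Filter Asymptotics
open Topology

noncomputable section

namespace KHessianPaper

section Aux
variable {n k : ℕ} {p ρ : ℝ} {u : ℝ → ℝ}

lemma hasDerivAt_of_sol (hu : IsRegularSolution n k p ρ u) {r : ℝ} (hr : 0 < r) :
    HasDerivAt u (deriv u r) r :=
  ((hu.contDiffOn.differentiableOn one_ne_zero).differentiableAt (Ici_mem_nhds hr)).hasDerivAt

lemma contOn_deriv (hu : IsRegularSolution n k p ρ u) :
    ContinuousOn (deriv u) (Ioi 0) := by
  have h := hu.contDiffOn.continuousOn_derivWithin (uniqueDiffOn_Ici 0) le_rfl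
  refine (h.mono Ioi_subset_Ici_self).congr ?_
  intro r hr
  exact (derivWithin_of_mem_nhds (Ici_mem_nhds hr)).symm

lemma contOn_integrand (hu : IsRegularSolution n k p ρ u) :
    ContinuousOn (fun s : ℝ => s ^ (n - 1) * u s ^ p) (Ici 0) :=
  ((continuous_pow _).continuousOn).mul
    (hu.contDiffOn.continuousOn.rpow_const (fun x hx => Or.inl (hu.pos x hx).ne'))

lemma flux_tendsto_zero (hu : IsRegularSolution n k p ρ u) (hkn : k < n) :
    Tendsto (flux n k u) (𝓝[>] (0:ℝ)) (𝓝 0) := by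
  set v := derivWithin u (Ici (0:ℝ)) with hv
  have hvc : ContinuousOn v (Ici 0) :=
    hu.contDiffOn.continuousOn_derivWithin (uniqueDiffOn_Ici 0) le_rfl
  have hgc : ContinuousOn (fun r => r ^ (n-k) * |v r| ^ (k-1) * v r) (Ici 0) :=
    (((continuous_pow _).continuousOn.mul ((hvc.abs).pow _)).mul hvc)
  have h0 : (0:ℝ) ^ (n-k) * |v 0| ^ (k-1) * v 0 = 0 := by
    rw [zero_pow (by omega : n - k ≠ 0)]; ring
  have := (hgc 0 (by simp : (0:ℝ) ∈ Ici (0:ℝ))).tendsto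
  rw [h0] at this
  have h2 : Tendsto (fun r => r ^ (n-k) * |v r| ^ (k-1) * v r) (𝓝[>] (0:ℝ)) (𝓝 0) :=
    this.mono_left (nhdsWithin_mono _ (Ioi_subset_Ici_self))
  refine h2.congr' ?_
  filter_upwards [self_mem_nhdsWithin] with r hr
  simp only [flux, hv]
  rw [derivWithin_of_mem_nhds (Ici_mem_nhds hr)]

lemma integrand_intervalIntegrable (hu : IsRegularSolution n k p ρ u) {a b : ℝ}
    (ha : 0 ≤ a) (hb : 0 ≤ b) :
    IntervalIntegrable (fun s : ℝ => s ^ (n - 1) * u s ^ p) volume a b := by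
  apply ContinuousOn.intervalIntegrable
  exact (contOn_integrand hu).mono (fun x hx => le_trans (le_min ha hb) hx.1)

lemma flux_eq (hu : IsRegularSolution n k p ρ u) (hkn : k < n) {r : ℝ} (hr : 0 < r) :
    flux n k u r
      = -((k:ℝ)/binomC n k) * ∫ s in (0:ℝ)..r, s ^ (n-1) * u s ^ p := by
  set c : ℝ := (k:ℝ)/binomC n k with hc
  set g : ℝ → ℝ := fun s => s ^ (n-1) * u s ^ p with hg
  set F : ℝ → ℝ := fun x => ∫ s in (0:ℝ)..x, g s with hF
  have key : ∀ a : ℝ, 0 < a → flux n k u r = flux n k u a + (-c) * (F r - F a) := by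
    intro a ha
    have h1 : ∀ x ∈ uIcc a r, HasDerivAt (flux n k u) (-c * g x) x := by
      intro x hx
      have hx0 : 0 < x := lt_of_lt_of_le (lt_min ha hr) hx.1
      have := hu.eqn x hx0
      simpa [hg, hc, mul_assoc] using this
    have hgint : ∀ x y : ℝ, 0 ≤ x → 0 ≤ y → IntervalIntegrable (fun s => -c * g s) volume x y := by
      intro x y hx hy
      exact (integrand_intervalIntegrable hu hx hy).const_mul _
    have h3 := intervalIntegral.integral_eq_sub_of_hasDerivAt h1 (hgint a r ha.le hr.le)
    have h4 : (∫ s in a..r, -c * g s) = (∫ s in (0:ℝ)..r, -c * g s) - ∫ s in (0:ℝ)..a, -c * g s :=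
      (intervalIntegral.integral_interval_sub_left (hgint 0 r le_rfl hr.le)
        (hgint 0 a le_rfl ha.le)).symm
    have h5 : ∀ y : ℝ, (∫ s in (0:ℝ)..y, -c * g s) = -c * F y := fun y =>
      intervalIntegral.integral_const_mul _ _
    rw [h4, h5, h5] at h3
    linarith [h3]
  -- now take the limit a → 0+
  have hFc : Tendsto F (𝓝[>] (0:ℝ)) (𝓝 0) := by
    have h6 : ContinuousOn F (uIcc 0 r) :=
      intervalIntegral.continuousOn_primitive_interval
        (((contOn_integrand hu).mono (by
            rw [uIcc_of_le hr.le]; exact fun x hx => hx.1)).integrableOn_compact isCompact_uIcc)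
    have h8 : 𝓝[Ioc 0 r] (0:ℝ) ≤ 𝓝[uIcc 0 r] 0 :=
      nhdsWithin_mono 0 (by rw [uIcc_of_le hr.le]; exact Ioc_subset_Icc_self)
    have h7 := (h6 0 left_mem_uIcc).tendsto.mono_left h8
    rw [nhdsWithin_Ioc_eq_nhdsGT hr] at h7
    simpa [hF] using h7
  have hT : Tendsto (fun a => flux n k u a + (-c) * (F r - F a)) (𝓝[>] (0:ℝ))
      (𝓝 (0 + (-c) * (F r - 0))) :=
    (flux_tendsto_zero hu hkn).add ((tendsto_const_nhds.sub hFc).const_mul _)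
  have hT' : Tendsto (fun _ : ℝ => flux n k u r) (𝓝[>] (0:ℝ)) (𝓝 (-c * F r)) := by
    refine Tendsto.congr' ?_ (by simpa using hT)
    filter_upwards [self_mem_nhdsWithin] with a ha
    have := key a ha
    linarith [this]
  exact tendsto_nhds_unique tendsto_const_nhds hT'

lemma integral_pos (hu : IsRegularSolution n k p ρ u) {r : ℝ} (hr : 0 < r) :
    0 < ∫ s in (0:ℝ)..r, s ^ (n-1) * u s ^ p := by
  apply intervalIntegral.intervalIntegral_pos_of_pos_on
    (integrand_intervalIntegrable hu le_rfl hr.le)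
  · intro x hx
    exact mul_pos (pow_pos hx.1 _) (Real.rpow_pos_of_pos (hu.pos x hx.1.le) _)
  · exact hr

lemma deriv_neg (hu : IsRegularSolution n k p ρ u) (hkn : k < n) (hk0 : 0 < k)
    (hC : 0 < binomC n k) {r : ℝ} (hr : 0 < r) : deriv u r < 0 := by
  have hflux := flux_eq hu hkn hr
  have hI := integral_pos hu hr
  have hc : 0 < (k:ℝ)/binomC n k := div_pos (by exact_mod_cast hk0) hC
  have hneg : flux n k u r < 0 := by
    rw [hflux]
    have := mul_pos hc hI
    linarith
  by_contra h
  push_neg at h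
  have : 0 ≤ flux n k u r :=
    mul_nonneg (mul_nonneg (pow_nonneg hr.le _) (pow_nonneg (abs_nonneg _) _)) h
  linarith

lemma pow_deriv_eq (hu : IsRegularSolution n k p ρ u) (hkn : k < n) (hk0 : 0 < k)
    (hC : 0 < binomC n k) {r : ℝ} (hr : 0 < r) :
    r ^ ((n:ℝ) - k) * |deriv u r| ^ ((k:ℝ))
      = ((k:ℝ)/binomC n k) * ∫ s in (0:ℝ)..r, s ^ (n-1) * u s ^ p := by
  have hflux := flux_eq hu hkn hr
  have hd := deriv_neg hu hkn hk0 hC hr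
  have habs : |deriv u r| = -deriv u r := abs_of_neg hd
  have hr1 : r ^ ((n:ℝ) - (k:ℝ)) = r ^ (n - k : ℕ) := by
    rw [← Real.rpow_natCast r (n-k)]
    congr 1
    push_cast [Nat.cast_sub hkn.le]
    ring
  have hr2 : |deriv u r| ^ ((k:ℝ)) = |deriv u r| ^ (k : ℕ) := by
    rw [← Real.rpow_natCast]
  have e1 : |deriv u r| ^ (k:ℕ) = |deriv u r| ^ (k-1) * (-deriv u r) := by
    rw [← habs, ← pow_succ]
    congr 1
    omega
  rw [hr1, hr2, e1]
  simp only [flux] at hflux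
  linear_combination (-1 : ℝ) * hflux

lemma decay_of_deriv_bound {β C₀ : ℝ} (hβ : β < -1) (hC₀ : 0 ≤ C₀)
    (hdiff : ∀ r : ℝ, 1 ≤ r → HasDerivAt u (deriv u r) r)
    (hcont : ContinuousOn (deriv u) (Ici 1))
    (hbound : ∀ r : ℝ, 1 ≤ r → |deriv u r| ≤ C₀ * r ^ β)
    (hlim : Tendsto u atTop (𝓝 0)) :
    ∀ r : ℝ, 1 ≤ r → u r ≤ C₀ / (-(β+1)) * r ^ (β+1) := by
  intro r hr
  have hb1 : (0:ℝ) < -(β+1) := by linarith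
  have h1 : ∀ s : ℝ, r ≤ s → u r ≤ u s + C₀ / (-(β+1)) * r ^ (β+1) := by
    intro s hs
    have hsub : Icc r s ⊆ Ici 1 := fun x hx => le_trans hr hx.1
    have hftc : ∫ t in r..s, deriv u t = u s - u r :=
      intervalIntegral.integral_eq_sub_of_hasDerivAt
        (fun x hx => hdiff x (by rw [uIcc_of_le hs] at hx; exact le_trans hr hx.1))
        ((hcont.mono (by rw [uIcc_of_le hs]; exact hsub)).intervalIntegrable)
    have hint1 : IntervalIntegrable (fun t => |deriv u t|) volume r s :=
      ((hcont.mono (by rw [uIcc_of_le hs]; exact hsub)).abs).intervalIntegrable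
    have hint2 : IntervalIntegrable (fun t : ℝ => C₀ * t ^ β) volume r s := by
      apply ContinuousOn.intervalIntegrable
      apply continuousOn_const.mul
      apply ContinuousOn.rpow_const continuousOn_id
      intro x hx
      rw [uIcc_of_le hs] at hx
      refine Or.inl ?_
      have h1x := le_trans hr hx.1
      simp only [id_eq]
      exact ne_of_gt (by linarith)
    have h2 : |∫ t in r..s, deriv u t| ≤ ∫ t in r..s, |deriv u t| :=
      intervalIntegral.abs_integral_le_integral_abs hs
    have h3 : (∫ t in r..s, |deriv u t|) ≤ ∫ t in r..s, C₀ * t ^ β := by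
      apply intervalIntegral.integral_mono_on hs hint1 hint2
      intro x hx
      exact hbound x (le_trans hr hx.1)
    have h4 : (∫ t in r..s, C₀ * t ^ β) = C₀ * ((s ^ (β+1) - r ^ (β+1))/(β+1)) := by
      rw [intervalIntegral.integral_const_mul, integral_rpow]
      right
      constructor
      · linarith
      · rw [uIcc_of_le hs]
        intro hmem
        have := hmem.1
        linarith
    have hX : (0:ℝ) < s ^ (β+1) := Real.rpow_pos_of_pos (by linarith) _
    have hd0 : β + 1 ≠ 0 := by linarith
    have h5 : C₀ * ((s ^ (β+1) - r ^ (β+1))/(β+1)) ≤ C₀ / (-(β+1)) * r ^ (β+1) := by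
      rw [← mul_le_mul_iff_of_pos_right hb1]
      have e1 : C₀ * ((s ^ (β+1) - r ^ (β+1))/(β+1)) * (-(β+1))
          = C₀ * (r ^ (β+1) - s ^ (β+1)) := by
        field_simp
        ring
      have e2 : C₀ / (-(β+1)) * r ^ (β+1) * (-(β+1)) = C₀ * r ^ (β+1) := by
        field_simp
      rw [e1, e2]
      nlinarith [mul_nonneg hC₀ hX.le]
    have h6 : u r ≤ u s + |∫ t in r..s, deriv u t| := by
      rw [hftc]
      have := abs_nonneg (u s - u r)
      have := le_abs_self (u s - u r)
      linarith [neg_abs_le (u s - u r)]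
    linarith
  have hT : Tendsto (fun s => u s + C₀ / (-(β+1)) * r ^ (β+1)) atTop
      (𝓝 (0 + C₀ / (-(β+1)) * r ^ (β+1))) := hlim.add_const _
  have := ge_of_tendsto hT (eventually_atTop.2 ⟨r, fun s hs => h1 s hs⟩)
  linarith

lemma integral_bound (hu : IsRegularSolution n k p ρ u) (hn1 : 1 ≤ n) (hp0 : 0 < p)
    {α C₁ e : ℝ} (hC₁ : 0 ≤ C₁) (hB : ∀ r : ℝ, 1 ≤ r → u r ≤ C₁ * r ^ (-α))
    (he : (n:ℝ) - 1 - p*α ≤ e) :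
    ∀ r : ℝ, 1 ≤ r → (∫ s in (0:ℝ)..r, s ^ (n-1) * u s ^ p)
        ≤ (∫ s in (0:ℝ)..1, s ^ (n-1) * u s ^ p) + C₁ ^ p * ∫ s in (1:ℝ)..r, s ^ e := by
  intro r hr
  have hsplit : (∫ s in (0:ℝ)..r, s ^ (n-1) * u s ^ p)
      = (∫ s in (0:ℝ)..1, s ^ (n-1) * u s ^ p) + ∫ s in (1:ℝ)..r, s ^ (n-1) * u s ^ p :=
    (intervalIntegral.integral_add_adjacent_intervals
      (integrand_intervalIntegrable hu le_rfl zero_le_one)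
      (integrand_intervalIntegrable hu zero_le_one (by linarith))).symm
  rw [hsplit]
  have hmono : (∫ s in (1:ℝ)..r, s ^ (n-1) * u s ^ p) ≤ ∫ s in (1:ℝ)..r, C₁ ^ p * s ^ e := by
    apply intervalIntegral.integral_mono_on hr
      (integrand_intervalIntegrable hu zero_le_one (by linarith))
    · apply ContinuousOn.intervalIntegrable
      apply continuousOn_const.mul
      apply ContinuousOn.rpow_const continuousOn_id
      intro x hx
      rw [uIcc_of_le hr] at hx
      refine Or.inl ?_
      simp only [id_eq]
      exact ne_of_gt (by linarith [hx.1])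
    · intro x hx
      have hx1 : (1:ℝ) ≤ x := hx.1
      have hx0 : (0:ℝ) < x := by linarith
      have hup : u x ^ p ≤ (C₁ * x ^ (-α)) ^ p :=
        Real.rpow_le_rpow (hu.pos x hx0.le).le (hB x hx1) hp0.le
      have hsplit2 : (C₁ * x ^ (-α)) ^ p = C₁ ^ p * x ^ (-α * p) := by
        rw [Real.mul_rpow hC₁ (Real.rpow_nonneg hx0.le _), ← Real.rpow_mul hx0.le]
      have hnpow : (x : ℝ) ^ (n-1 : ℕ) = x ^ ((n:ℝ) - 1) := by
        rw [← Real.rpow_natCast x (n-1)]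
        congr 1
        push_cast [Nat.cast_sub hn1]
        ring
      calc x ^ (n-1 : ℕ) * u x ^ p ≤ x ^ (n-1 : ℕ) * (C₁ ^ p * x ^ (-α * p)) := by
            rw [hsplit2] at hup
            exact mul_le_mul_of_nonneg_left hup (pow_nonneg hx0.le _)
        _ = C₁ ^ p * x ^ ((n:ℝ) - 1 - p * α) := by
            rw [hnpow, mul_left_comm, ← Real.rpow_add hx0]
            ring_nf
        _ ≤ C₁ ^ p * x ^ e := by
            apply mul_le_mul_of_nonneg_left _ (Real.rpow_nonneg hC₁ _)
            exact Real.rpow_le_rpow_of_exponent_le hx1 he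
  rw [intervalIntegral.integral_const_mul] at hmono
  linarith

lemma integral_bound_A (hu : IsRegularSolution n k p ρ u) (hn1 : 1 ≤ n) (hp0 : 0 < p)
    {α C₁ e : ℝ} (hC₁ : 0 ≤ C₁) (hB : ∀ r : ℝ, 1 ≤ r → u r ≤ C₁ * r ^ (-α))
    (he : (n:ℝ) - 1 - p*α ≤ e) (he2 : -1 < e) :
    ∃ K : ℝ, 0 ≤ K ∧ ∀ r : ℝ, 1 ≤ r →
      (∫ s in (0:ℝ)..r, s ^ (n-1) * u s ^ p) ≤ K * r ^ (e+1) := by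
  set M := ∫ s in (0:ℝ)..1, s ^ (n-1) * u s ^ p with hMdef
  have hM : 0 ≤ M := le_of_lt (integral_pos hu one_pos)
  have he1 : (0:ℝ) < e + 1 := by linarith
  have hCp : (0:ℝ) ≤ C₁ ^ p := Real.rpow_nonneg hC₁ _
  refine ⟨M + C₁ ^ p / (e+1), by positivity, ?_⟩
  intro r hr
  have h1 := integral_bound hu hn1 hp0 hC₁ hB he r hr
  have h2 : (∫ s in (1:ℝ)..r, s ^ e) = (r ^ (e+1) - 1 ^ (e+1))/(e+1) :=
    integral_rpow (Or.inl he2)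
  rw [Real.one_rpow] at h2
  have h3 : (∫ s in (1:ℝ)..r, s ^ e) ≤ r ^ (e+1)/(e+1) := by
    rw [h2]
    gcongr
    linarith
  have h4 : C₁ ^ p * (∫ s in (1:ℝ)..r, s ^ e) ≤ C₁ ^ p * (r ^ (e+1)/(e+1)) :=
    mul_le_mul_of_nonneg_left h3 hCp
  have h5 : 1 ≤ r ^ (e+1) := Real.one_le_rpow hr he1.le
  have heq : C₁ ^ p * (r ^ (e+1)/(e+1)) = C₁ ^ p/(e+1) * r ^ (e+1) := by ring
  nlinarith [mul_nonneg hM (sub_nonneg.2 h5), heq]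

lemma integral_bound_B (hu : IsRegularSolution n k p ρ u) (hn1 : 1 ≤ n) (hp0 : 0 < p)
    {α C₁ e : ℝ} (hC₁ : 0 ≤ C₁) (hB : ∀ r : ℝ, 1 ≤ r → u r ≤ C₁ * r ^ (-α))
    (he : (n:ℝ) - 1 - p*α ≤ e) (he2 : e < -1) :
    ∃ K : ℝ, 0 ≤ K ∧ ∀ r : ℝ, 1 ≤ r →
      (∫ s in (0:ℝ)..r, s ^ (n-1) * u s ^ p) ≤ K := by
  set M := ∫ s in (0:ℝ)..1, s ^ (n-1) * u s ^ p with hMdef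
  have hM : 0 ≤ M := le_of_lt (integral_pos hu one_pos)
  have he1 : (0:ℝ) < -(e + 1) := by linarith
  have hCp : (0:ℝ) ≤ C₁ ^ p := Real.rpow_nonneg hC₁ _
  refine ⟨M + C₁ ^ p * (1/(-(e+1))), ?_⟩
  constructor
  · positivity
  intro r hr
  have h1 := integral_bound hu hn1 hp0 hC₁ hB he r hr
  have h2 : (∫ s in (1:ℝ)..r, s ^ e) = (r ^ (e+1) - 1 ^ (e+1))/(e+1) :=
    integral_rpow (Or.inr ⟨by linarith, by rw [uIcc_of_le hr]; intro hmem; linarith [hmem.1]⟩)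
  rw [Real.one_rpow] at h2
  have hX : (0:ℝ) < r ^ (e+1) := Real.rpow_pos_of_pos (by linarith) _
  have h3' : (r ^ (e+1) - 1)/(e+1) = (1 - r ^ (e+1))/(-(e+1)) := by
    rw [div_eq_div_iff (ne_of_lt (by linarith)) (ne_of_gt he1)]
    ring
  have h3 : (∫ s in (1:ℝ)..r, s ^ e) ≤ 1/(-(e+1)) := by
    rw [h2, h3']
    gcongr
    linarith
  have h4 : C₁ ^ p * (∫ s in (1:ℝ)..r, s ^ e) ≤ C₁ ^ p * (1/(-(e+1))) :=
    mul_le_mul_of_nonneg_left h3 hCp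
  linarith

lemma deriv_bound (hu : IsRegularSolution n k p ρ u) (hkn : k < n) (hk0 : 0 < k)
    (hC : 0 < binomC n k) {K q : ℝ} (hK : 0 ≤ K)
    (hI : ∀ r : ℝ, 1 ≤ r → (∫ s in (0:ℝ)..r, s ^ (n-1) * u s ^ p) ≤ K * r ^ q) :
    ∀ r : ℝ, 1 ≤ r → |deriv u r|
      ≤ ((k:ℝ)/binomC n k * K) ^ (1/(k:ℝ)) * r ^ ((q - ((n:ℝ)-k))/(k:ℝ)) := by
  intro r hr
  have hr0 : (0:ℝ) < r := by linarith
  have hc : (0:ℝ) < (k:ℝ)/binomC n k := div_pos (by exact_mod_cast hk0) hC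
  have hkne : ((k:ℝ)) ≠ 0 := by exact_mod_cast hk0.ne'
  have h1 := pow_deriv_eq hu hkn hk0 hC hr0
  have h2 : r ^ ((n:ℝ)-k) * |deriv u r| ^ ((k:ℝ)) ≤ ((k:ℝ)/binomC n k) * (K * r ^ q) := by
    rw [h1]; exact mul_le_mul_of_nonneg_left (hI r hr) hc.le
  have hrnk : (0:ℝ) < r ^ ((n:ℝ)-k) := Real.rpow_pos_of_pos hr0 _
  have h2' : |deriv u r| ^ ((k:ℝ)) * r ^ ((n:ℝ)-k) ≤ ((k:ℝ)/binomC n k * K) * r ^ q := by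
    calc |deriv u r| ^ ((k:ℝ)) * r ^ ((n:ℝ)-k) = r ^ ((n:ℝ)-k) * |deriv u r| ^ ((k:ℝ)) :=
          mul_comm _ _
      _ ≤ ((k:ℝ)/binomC n k) * (K * r ^ q) := h2
      _ = ((k:ℝ)/binomC n k * K) * r ^ q := (mul_assoc _ _ _).symm
  have h3 : |deriv u r| ^ ((k:ℝ)) ≤ ((k:ℝ)/binomC n k * K) * r ^ (q - ((n:ℝ)-k)) := by
    have := (le_div_iff₀ hrnk).2 h2'
    rwa [mul_div_assoc, ← Real.rpow_sub hr0] at this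
  have h4 := Real.rpow_le_rpow (Real.rpow_nonneg (abs_nonneg _) _) h3
    (by positivity : (0:ℝ) ≤ 1/(k:ℝ))
  have e1 : (|deriv u r| ^ ((k:ℝ))) ^ (1/(k:ℝ)) = |deriv u r| := by
    rw [← Real.rpow_mul (abs_nonneg _), mul_one_div, div_self hkne, Real.rpow_one]
  have e2 : (((k:ℝ)/binomC n k * K) * r ^ (q - ((n:ℝ)-k))) ^ (1/(k:ℝ))
      = ((k:ℝ)/binomC n k * K) ^ (1/(k:ℝ)) * r ^ ((q - ((n:ℝ)-k))/(k:ℝ)) := by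
    rw [Real.mul_rpow (mul_nonneg hc.le hK) (Real.rpow_nonneg hr0.le _),
      ← Real.rpow_mul hr0.le, mul_one_div]
  rw [e1, e2] at h4
  exact h4

def PBound (u : ℝ → ℝ) (α : ℝ) : Prop :=
  ∃ C₁ : ℝ, 0 ≤ C₁ ∧ ∀ r : ℝ, 1 ≤ r → u r ≤ C₁ * r ^ (-α)

lemma step_lemma (hu : IsRegularSolution n k p ρ u) (hn1 : 1 ≤ n) (hkn : k < n)
    (hk0 : 0 < k) (hC : 0 < binomC n k) (hpk : (k:ℝ) < p) {ε α : ℝ} (hε : 0 < ε)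
    (hlim : Tendsto u atTop (𝓝 0))
    (hα : 2*(k:ℝ)/(p - k) + ε ≤ α) (hαn : p * α ≤ n) (hB : PBound u α) :
    PBound u (α + ε*(p - k)/(2*(k:ℝ))) := by
  have hk0' : (0:ℝ) < k := by exact_mod_cast hk0
  have hpk0 : (0:ℝ) < p - k := by linarith
  have hp0 : (0:ℝ) < p := by linarith
  obtain ⟨C₁, hC₁, hBα⟩ := hB
  set θ := min (p*ε/2) (ε*(p-k)/2) with hθdef
  have hθ : 0 < θ := lt_min (half_pos (mul_pos hp0 hε)) (half_pos (mul_pos hε hpk0))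
  have hθ1 : θ ≤ p*ε/2 := min_le_left _ _
  have hθ2 : θ ≤ ε*(p-k)/2 := min_le_right _ _
  set e := (n:ℝ) - 1 - p*α + θ with hedef
  have he : (n:ℝ) - 1 - p*α ≤ e := by simp only [hedef]; linarith
  have he2 : -1 < e := by simp only [hedef]; linarith
  obtain ⟨K, hK, hKb⟩ := integral_bound_A hu hn1 hp0 hC₁ hBα he he2
  have hder := deriv_bound hu hkn hk0 hC hK hKb
  set q := e + 1 with hqdef
  set β := (q - ((n:ℝ)-k))/(k:ℝ) with hβdef
  -- key arithmetic facts
  have hαpk : 2*(k:ℝ) + ε*(p-k) ≤ α*(p-k) := by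
    have h1 := mul_le_mul_of_nonneg_right hα hpk0.le
    have h2 : (2*(k:ℝ)/(p-k) + ε)*(p-k) = 2*k + ε*(p-k) := by field_simp
    linarith [h1, h2.symm.le]
  have hβ : β < -1 := by
    rw [hβdef, div_lt_iff₀ hk0']
    have : p*α ≥ 2*(k:ℝ) + ε*(p-k) + α*k := by nlinarith [hαpk]
    simp only [hqdef, hedef]
    nlinarith [hθ1, hε, hpk0]
  have hC₀ : (0:ℝ) ≤ ((k:ℝ)/binomC n k * K) ^ (1/(k:ℝ)) :=
    Real.rpow_nonneg (mul_nonneg (div_pos hk0' hC).le hK) _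
  have hdecay := decay_of_deriv_bound hβ hC₀
    (fun r hr => hasDerivAt_of_sol hu (by linarith))
    ((contOn_deriv hu).mono (fun x hx => (lt_of_lt_of_le one_pos hx : (0:ℝ) < x)))
    hder hlim
  refine ⟨((k:ℝ)/binomC n k * K) ^ (1/(k:ℝ)) / (-(β+1)),
    div_nonneg hC₀ (by linarith), fun r hr => ?_⟩
  have h6 := hdecay r hr
  have hexp : β + 1 ≤ -(α + ε*(p - k)/(2*(k:ℝ))) := by
    have hform : β + 1 = (2*(k:ℝ) - p*α + θ)/(k:ℝ) := by
      simp only [hβdef, hqdef, hedef]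
      field_simp
      ring
    rw [hform, div_le_iff₀ hk0']
    have hid : ε*(p-k)/(2*(k:ℝ))*(k:ℝ) = ε*(p-k)/2 := by field_simp
    nlinarith [hαpk, hθ2, hid]
  have h7 : r ^ (β+1) ≤ r ^ (-(α + ε*(p - k)/(2*(k:ℝ)))) :=
    Real.rpow_le_rpow_of_exponent_le hr hexp
  calc u r ≤ ((k:ℝ)/binomC n k * K) ^ (1/(k:ℝ)) / (-(β+1)) * r ^ (β+1) := h6
    _ ≤ ((k:ℝ)/binomC n k * K) ^ (1/(k:ℝ)) / (-(β+1))
          * r ^ (-(α + ε*(p - k)/(2*(k:ℝ)))) :=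
        mul_le_mul_of_nonneg_left h7 (div_nonneg hC₀ (by linarith))

lemma final_lemma (hu : IsRegularSolution n k p ρ u) (hn1 : 1 ≤ n) (hkn : k < n)
    (hk0 : 0 < k) (hk2 : 2*k < n) (hC : 0 < binomC n k) (hpk : (k:ℝ) < p) {α : ℝ}
    (hlim : Tendsto u atTop (𝓝 0))
    (hfin : (n:ℝ) < p * α) (hB : PBound u α) :
    u =O[atTop] fun r : ℝ => r ^ ((2 * (k : ℝ) - n) / k) := by
  have hk0' : (0:ℝ) < k := by exact_mod_cast hk0
  have hp0 : (0:ℝ) < p := by linarith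
  obtain ⟨C₁, hC₁, hBα⟩ := hB
  set e := (n:ℝ) - 1 - p*α with hedef
  have he2 : e < -1 := by simp only [hedef]; linarith
  obtain ⟨K, hK, hKb⟩ := integral_bound_B hu hn1 hp0 hC₁ hBα le_rfl he2
  have hKb' : ∀ r : ℝ, 1 ≤ r →
      (∫ s in (0:ℝ)..r, s ^ (n-1) * u s ^ p) ≤ K * r ^ (0:ℝ) := by
    intro r hr
    rw [Real.rpow_zero, mul_one]
    exact hKb r hr
  have hder := deriv_bound hu hkn hk0 hC hK hKb'
  set β := ((0:ℝ) - ((n:ℝ)-k))/(k:ℝ) with hβdef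
  have hkn' : (k:ℝ) < n := by exact_mod_cast hkn
  have hk2' : 2*(k:ℝ) < n := by exact_mod_cast hk2
  have hβ : β < -1 := by
    rw [hβdef, div_lt_iff₀ hk0']
    linarith
  have hC₀ : (0:ℝ) ≤ ((k:ℝ)/binomC n k * K) ^ (1/(k:ℝ)) :=
    Real.rpow_nonneg (mul_nonneg (div_pos hk0' hC).le hK) _
  have hdecay := decay_of_deriv_bound hβ hC₀
    (fun r hr => hasDerivAt_of_sol hu (by linarith))
    ((contOn_deriv hu).mono (fun x hx => (lt_of_lt_of_le one_pos hx : (0:ℝ) < x)))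
    hder hlim
  have hexp : β + 1 = (2 * (k:ℝ) - n) / k := by
    rw [hβdef]
    field_simp
    ring
  rw [isBigO_iff]
  refine ⟨((k:ℝ)/binomC n k * K) ^ (1/(k:ℝ)) / (-(β+1)), eventually_atTop.2 ⟨1, fun r hr => ?_⟩⟩
  have hr0 : (0:ℝ) < r := by linarith
  have hpos : (0:ℝ) < r ^ ((2 * (k:ℝ) - n) / k) := Real.rpow_pos_of_pos hr0 _
  rw [Real.norm_eq_abs, Real.norm_eq_abs, abs_of_pos (hu.pos r hr0.le), abs_of_pos hpos,
    ← hexp]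
  exact hdecay r hr
end Aux

/-- if `u(r) = O(r^{-2k/(p-k)-ε})`, then `u(r) = O(r^{(2k-n)/k})`. -/
theorem bigO_improvement (n k : ℕ) (p ρ ε : ℝ) (u : ℝ → ℝ)
    (hn : 3 ≤ n) (hk1 : 1 < k) (hk2 : 2 * k < n) (hρ : 0 < ρ)
    (hp : (n : ℝ) * k / ((n : ℝ) - 2 * k) < p)
    (hu : IsRegularSolution n k p ρ u)
    (hε : ε ∈ Ioo 0 (((n : ℝ) - 2 * k) / k - 2 * (k : ℝ) / (p - k)))
    (hO : u =O[atTop] fun r : ℝ => r ^ (-(2 * (k : ℝ) / (p - k)) - ε)) :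
    u =O[atTop] fun r : ℝ => r ^ ((2 * (k : ℝ) - n) / k) := by
  have hk0 : 0 < k := by omega
  have hkn : k < n := by omega
  have hn1 : 1 ≤ n := by omega
  have hC : 0 < binomC n k := by
    unfold binomC
    exact_mod_cast Nat.choose_pos (by omega : k - 1 ≤ n - 1)
  have hk0' : (0:ℝ) < k := by exact_mod_cast hk0
  have hn2k : (0:ℝ) < (n:ℝ) - 2*k := by
    have h2 : ((2*k : ℕ) : ℝ) < (n : ℕ) := by exact_mod_cast hk2
    push_cast at h2
    linarith
  have hpk : (k:ℝ) < p := by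
    have h1 : (k:ℝ) < (n:ℝ)*k/((n:ℝ)-2*k) := by
      rw [lt_div_iff₀ hn2k]
      nlinarith [hk0']
    linarith
  have hpk0 : (0:ℝ) < p - k := by linarith
  have hε0 := hε.1
  have hlim : Tendsto u atTop (𝓝 0) := by
    have hpos : 0 < 2*(k:ℝ)/(p-k) + ε := add_pos (div_pos (by linarith) hpk0) hε0
    have h2 := tendsto_rpow_neg_atTop hpos
    have h3 : (fun r : ℝ => r ^ (-(2 * (k:ℝ) / (p - k)) - ε)) =
        fun r : ℝ => r ^ (-(2*(k:ℝ)/(p-k) + ε)) := by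
      funext r; congr 1; ring
    exact hO.trans_tendsto (h3 ▸ h2)
  set α₀ := 2*(k:ℝ)/(p-k) + ε with hα₀def
  have hα₀pos : 0 < α₀ := add_pos (div_pos (by linarith) hpk0) hε0
  have hOfun : (fun r : ℝ => r ^ (-(2 * (k:ℝ) / (p - k)) - ε)) =
      fun r : ℝ => r ^ (-α₀) := by
    funext r; congr 1; simp only [hα₀def]; ring
  rw [hOfun] at hO
  have hB0 : PBound u α₀ := by
    rw [isBigO_iff] at hO
    obtain ⟨c, hc⟩ := hO
    rw [eventually_atTop] at hc
    obtain ⟨R, hR⟩ := hc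
    set R' := max R 1 with hR'def
    have hR'1 : (1:ℝ) ≤ R' := le_max_right _ _
    obtain ⟨C2, hC2⟩ := (isCompact_Icc : IsCompact (Icc (1:ℝ) R')).exists_bound_of_continuousOn
      ((hu.contDiffOn.continuousOn).mono (fun x hx => le_trans zero_le_one hx.1))
    refine ⟨max (max c 0) ((max C2 0) * R' ^ α₀), ?_, ?_⟩
    · exact le_trans (le_max_right c 0) (le_max_left _ _)
    intro r hr
    have hr0 : (0:ℝ) < r := by linarith
    have hrneg : (0:ℝ) ≤ r ^ (-α₀) := Real.rpow_nonneg hr0.le _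
    rcases le_or_gt R' r with hcase | hcase
    · have h1 := hR r (le_trans (le_max_left _ _) hcase)
      rw [Real.norm_eq_abs, Real.norm_eq_abs, abs_of_pos (Real.rpow_pos_of_pos hr0 _)] at h1
      have h2 : u r ≤ |u r| := le_abs_self _
      have h3 : c * r ^ (-α₀) ≤ max c 0 * r ^ (-α₀) :=
        mul_le_mul_of_nonneg_right (le_max_left _ _) hrneg
      have h4 : max c 0 * r ^ (-α₀) ≤ max (max c 0) ((max C2 0) * R' ^ α₀) * r ^ (-α₀) :=
        mul_le_mul_of_nonneg_right (le_max_left _ _) hrneg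
      linarith
    · have hmem : r ∈ Icc (1:ℝ) R' := ⟨hr, hcase.le⟩
      have h1 := hC2 r hmem
      rw [Real.norm_eq_abs] at h1
      have h2 : u r ≤ max C2 0 := le_trans (le_abs_self _) (le_trans h1 (le_max_left _ _))
      have hmul1 : r ^ α₀ * r ^ (-α₀) = 1 := by
        rw [← Real.rpow_add hr0]; simp
      have h5 : r ^ α₀ ≤ R' ^ α₀ := Real.rpow_le_rpow hr0.le hcase.le hα₀pos.le
      have h6 : max C2 0 * r ^ α₀ ≤ max C2 0 * R' ^ α₀ :=
        mul_le_mul_of_nonneg_left h5 (le_max_right _ _)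
      have h7 : max C2 0 = max C2 0 * r ^ α₀ * r ^ (-α₀) := by
        rw [mul_assoc, hmul1, mul_one]
      have h8 : max C2 0 * r ^ α₀ * r ^ (-α₀) ≤ max C2 0 * R' ^ α₀ * r ^ (-α₀) :=
        mul_le_mul_of_nonneg_right h6 hrneg
      have h9 : max C2 0 * R' ^ α₀ * r ^ (-α₀)
          ≤ max (max c 0) ((max C2 0) * R' ^ α₀) * r ^ (-α₀) :=
        mul_le_mul_of_nonneg_right (le_max_right _ _) hrneg
      linarith
  set δ := ε*(p-k)/(2*(k:ℝ)) with hδdef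
  have hδ : 0 < δ := div_pos (mul_pos hε0 hpk0) (by linarith)
  have iter : ∀ m : ℕ, (u =O[atTop] fun r : ℝ => r ^ ((2*(k:ℝ)-n)/k)) ∨ PBound u (α₀ + m*δ) := by
    intro m
    induction m with
    | zero => right; simpa using hB0
    | succ m ih =>
      rcases ih with h | h
      · left; exact h
      · by_cases hcase : p * (α₀ + m*δ) ≤ n
        · right
          have hmδ : 0 ≤ (m:ℝ)*δ := mul_nonneg (Nat.cast_nonneg m) hδ.le
          have hαge : 2*(k:ℝ)/(p-k) + ε ≤ α₀ + m*δ := by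
            simp only [hα₀def]; linarith
          have hstep := step_lemma hu hn1 hkn hk0 hC hpk hε0 hlim hαge hcase h
          have harith : α₀ + ((m+1 : ℕ):ℝ)*δ = (α₀ + (m:ℝ)*δ) + ε*(p-k)/(2*(k:ℝ)) := by
            push_cast
            simp only [hδdef]
            ring
          rw [harith]
          exact hstep
        · left
          push_neg at hcase
          exact final_lemma hu hn1 hkn hk0 hk2 hC hpk hlim hcase h
  obtain ⟨m, hm⟩ := exists_nat_gt (((n:ℝ)/p - α₀)/δ)
  rcases iter m with h | h
  · exact h
  · refine final_lemma hu hn1 hkn hk0 hk2 hC hpk hlim ?_ h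
    have h1 : (n:ℝ)/p - α₀ < m*δ := by
      have := (div_lt_iff₀ hδ).1 hm
      linarith
    have h2 : (n:ℝ)/p < α₀ + m*δ := by linarith
    have hp0 : (0:ℝ) < p := by linarith
    calc (n:ℝ) = p * ((n:ℝ)/p) := by field_simp
      _ < p * (α₀ + m*δ) := mul_lt_mul_of_pos_left h2 hp0


end KHessianPaper
end
end

section
/- Let n ≥ 3, k an integer with 1 < k < n/2, and p > nk/(n-2k). Then the function u_s(r) = A·r^{-2k/(p-k)}, where A = ((1/k)·C(n-1,k-1))^{1/(p-k)}·(2k/(p-k))^{k/(p-k)}·(n − 2pk/(p-k))^{1/(p-k)}, is positive on (0,∞), the flux w(r) := r^{n-k}|u_s'(r)|^{k-1}u_s'(r) is differentiable on (0,∞), and w'(r) = -(k/C(n-1,k-1))·r^{n-1}·u_s(r)^p for all r > 0. -/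
open MeasureTheory Real Set Filter Asymptotics

noncomputable section

namespace KHessianPaper

/-- the function `u_s(r) = A r^{-2k/(p-k)}` is positive on `(0,∞)` and
its flux satisfies the radial `k`-Hessian equation on `(0,∞)`. -/
theorem singular_solution_solves (n k : ℕ) (p : ℝ)
    (hn : 3 ≤ n) (hk1 : 1 < k) (hk2 : 2 * k < n)
    (hp : (n : ℝ) * k / ((n : ℝ) - 2 * k) < p) :
    (∀ r : ℝ, 0 < r → 0 < uSing n k p r) ∧
    (∀ r : ℝ, 0 < r → HasDerivAt (flux n k (uSing n k p))
      (-((k : ℝ) / binomC n k) * r ^ (n - 1) * uSing n k p r ^ p) r) := by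
  have hkR : (1:ℝ) < k := by exact_mod_cast hk1
  have hk0 : (0:ℝ) < k := by linarith
  have hnk : 2*(k:ℝ) < n := by exact_mod_cast hk2
  have hkn : k ≤ n := by omega
  have hd : (0:ℝ) < (n:ℝ) - 2*k := by linarith
  have hpk : (k:ℝ) < p := by
    have h1 : (k:ℝ) < (n:ℝ)*k/((n:ℝ)-2*k) := by
      rw [lt_div_iff₀ hd]; nlinarith
    linarith
  have hpk0 : (0:ℝ) < p - k := by linarith
  set A : ℝ := Aconst n k p with hAdef
  set α : ℝ := 2*(k:ℝ)/(p-k) with hαdef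
  have hα : 0 < α := by positivity
  have hB : 0 < (n:ℝ) - 2*p*k/(p-k) := by
    have h2 : (n:ℝ)*k < p*((n:ℝ)-2*k) := by
      rw [div_lt_iff₀ hd] at hp; linarith
    rw [sub_pos, div_lt_iff₀ hpk0]; nlinarith
  have hC : 0 < binomC n k := by
    unfold binomC
    exact_mod_cast Nat.choose_pos (by omega : k-1 ≤ n-1)
  have hA : 0 < A := by
    rw [hAdef]; unfold Aconst
    have h1 : (0:ℝ) < 1/(k:ℝ) * binomC n k := by positivity
    have h2 : (0:ℝ) < 2*(k:ℝ)/(p-k) := by positivity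
    exact mul_pos (mul_pos (Real.rpow_pos_of_pos h1 _) (Real.rpow_pos_of_pos h2 _))
      (Real.rpow_pos_of_pos hB _)
  have hupos : ∀ r : ℝ, 0 < r → 0 < uSing n k p r := by
    intro r hr
    unfold uSing
    exact mul_pos hA (Real.rpow_pos_of_pos hr _)
  refine ⟨hupos, ?_⟩
  -- derivative of uSing
  have hu : ∀ s : ℝ, 0 < s →
      HasDerivAt (uSing n k p) (-(A * α) * s ^ (-α - 1)) s := by
    intro s hs
    have h := (Real.hasDerivAt_rpow_const (p := -α) (Or.inl hs.ne')).const_mul A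
    have : uSing n k p = fun s : ℝ => A * s ^ (-α) := by
      funext t; rw [uSing, hAdef, hαdef]
    rw [this]
    convert h using 1
    · rfl
    · rfl
    ring
  have hud : ∀ s : ℝ, 0 < s → deriv (uSing n k p) s = -(A * α) * s ^ (-α - 1) :=
    fun s hs => (hu s hs).deriv
  -- flux equals a power function on Ioi 0
  have hfluxeq : ∀ s : ℝ, 0 < s → flux n k (uSing n k p) s
      = -((A * α)^k) * s ^ ((n:ℝ) - 2*k - α*k) := by
    intro s hs
    have hsp : (0:ℝ) < s ^ (-α - 1) := Real.rpow_pos_of_pos hs _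
    unfold flux
    rw [hud s hs, abs_mul, abs_neg, abs_of_pos (mul_pos hA hα), abs_of_pos hsp,
      mul_pow]
    rw [← Real.rpow_natCast s (n - k), ← Real.rpow_natCast (s ^ (-α-1)) (k-1),
      ← Real.rpow_mul hs.le]
    rw [show s ^ (((n-k:ℕ)):ℝ) * ((A*α)^(k-1) * s ^ ((-α-1)*((k-1:ℕ):ℝ)))
        * (-(A*α) * s ^ (-α-1))
      = -((A*α)^(k-1) * (A*α)) * (s ^ (((n-k:ℕ)):ℝ) * s ^ ((-α-1)*((k-1:ℕ):ℝ))
        * s ^ (-α-1)) by ring]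
    rw [← Real.rpow_add hs, ← Real.rpow_add hs, ← pow_succ,
      show k - 1 + 1 = k by omega]
    congr 1
    have h1 : ((n-k:ℕ):ℝ) = (n:ℝ) - k := by
      push_cast [Nat.cast_sub hkn]; ring
    have h2 : ((k-1:ℕ):ℝ) = (k:ℝ) - 1 := by
      push_cast [Nat.cast_sub (by omega : 1 ≤ k)]; ring
    rw [h1, h2]; ring
  -- derivative of the power function
  intro r hr
  have hg : HasDerivAt (fun s : ℝ => -((A * α)^k) * s ^ ((n:ℝ)-2*k-α*k))
      (-((A * α)^k) * (((n:ℝ)-2*k-α*k) * r ^ ((n:ℝ)-2*k-α*k-1))) r :=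
    (Real.hasDerivAt_rpow_const (Or.inl hr.ne')).const_mul _
  have heq : flux n k (uSing n k p)
      =ᶠ[nhds r] fun s : ℝ => -((A * α)^k) * s ^ ((n:ℝ)-2*k-α*k) := by
    filter_upwards [Ioi_mem_nhds hr] with s hs using hfluxeq s hs
  have hmain := hg.congr_of_eventuallyEq heq
  -- identify the derivative value
  have hApk : A ^ (p - k) = (1/(k:ℝ)) * binomC n k * α^k * ((n:ℝ) - 2*p*k/(p-k)) := by
    rw [hAdef]; unfold Aconst
    have h1 : (0:ℝ) ≤ 1/(k:ℝ) * binomC n k := by positivity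
    have h2 : (0:ℝ) ≤ 2*(k:ℝ)/(p-k) := by positivity
    rw [Real.mul_rpow (by positivity) (Real.rpow_nonneg hB.le _),
      Real.mul_rpow (Real.rpow_nonneg h1 _) (Real.rpow_nonneg h2 _),
      ← Real.rpow_mul h1, ← Real.rpow_mul h2, ← Real.rpow_mul hB.le,
      one_div_mul_cancel hpk0.ne', Real.rpow_one, Real.rpow_one,
      div_mul_cancel₀ _ hpk0.ne', Real.rpow_natCast, ← hαdef]
  have hBeq : (n:ℝ) - 2*k - α*k = (n:ℝ) - 2*p*k/(p-k) := by
    rw [hαdef]; field_simp; ring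
  have hexp : (n:ℝ)-2*k-α*k-1 = ((n:ℝ)-1) + (-α*p) := by
    have : α * (p - k) = 2*k := by rw [hαdef]; field_simp
    nlinarith [this]
  have hval : -((k : ℝ) / binomC n k) * r ^ (n - 1) * uSing n k p r ^ p
      = -((A * α)^k) * (((n:ℝ)-2*k-α*k) * r ^ ((n:ℝ)-2*k-α*k-1)) := by
    have hru : uSing n k p r = A * r ^ (-α) := by rw [uSing, hAdef, hαdef]
    rw [hru, Real.mul_rpow hA.le (Real.rpow_nonneg hr.le _),
      ← Real.rpow_natCast r (n-1), ← Real.rpow_mul hr.le, hexp, Real.rpow_add hr]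
    have hn1 : ((n-1:ℕ):ℝ) = (n:ℝ) - 1 := by
      push_cast [Nat.cast_sub (by omega : 1 ≤ n)]; ring
    rw [hn1]
    have hAp : A ^ p = A ^ (p - k) * A ^ k := by
      rw [← Real.rpow_natCast A k, ← Real.rpow_add hA]; ring_nf
    rw [hAp, hApk, hBeq, mul_pow]
    field_simp
  rw [hval]
  exact hmain

end KHessianPaper
end
end

section
/- Let n ≥ 3, k an integer with 1 < k < n/2, and p = (n+2)k/(n-2k). Then for every ρ > 0 the function u_ρ(r) = ((1/k)·C(n-1,k-1))^{1/(p-k)}·ρ·(1 + (k/(n^{1/k}(n-2k)))·(ρ^{(k+1)/(n-2k)}·r)²)^{-(n-2k)/(2k)} is a regular solution of the initial value problem -(1/k)·C(n-1,k-1)·(r^{n-k}|u'|^{k-1}u')' = r^{n-1}u^p, u > 0, u'(0) = 0, with u_ρ(0) = ((1/k)·C(n-1,k-1))^{1/(p-k)}·ρ. -/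
open MeasureTheory Real Set Filter Asymptotics

noncomputable section

namespace KHessianPaper

lemma hasDerivAt_base (B c r : ℝ) (hpos : 0 < 1 + B*r^2) :
    HasDerivAt (fun t : ℝ => (1 + B*t^2) ^ c) ((2*B*r) * c * (1+B*r^2)^(c-1)) r := by
  have h1 : HasDerivAt (fun t : ℝ => 1 + B*t^2) (2*B*r) r := by
    have h := ((hasDerivAt_pow 2 r).const_mul B).const_add 1
    exact h.congr_deriv (by push_cast; ring)
  exact h1.rpow_const (p := c) (Or.inl hpos.ne')

lemma master (n k : ℕ) (p a B α γ D : ℝ) (u : ℝ → ℝ)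
    (hk : 1 ≤ k) (hkn : k ≤ n)
    (ha : 0 < a) (hB : 0 < B) (hC : 0 < binomC n k) (hD0 : 0 < D)
    (hD' : a * α * (2*B) = -D)
    (h2γ : 2*γ = -(n:ℝ))
    (hαk : (α-1)*(k:ℝ) = γ)
    (hαp : α*p = γ-1)
    (hconst : D^k * (n:ℝ) = ((k:ℝ)/binomC n k) * a^p)
    (hu : u = fun r => a * (1+B*r^2)^α) :
    IsRegularSolution n k p a u := by
  have hs : ∀ t : ℝ, 0 < 1 + B*t^2 := fun t => by positivity
  have hder : ∀ t : ℝ, HasDerivAt u (-D * t * (1+B*t^2)^(α-1)) t := by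
    intro t
    rw [hu]
    have h := (hasDerivAt_base B α t (hs t)).const_mul a
    exact h.congr_deriv (by rw [← hD']; ring)
  have hderiv_eq : ∀ t : ℝ, deriv u t = -D * t * (1+B*t^2)^(α-1) := fun t => (hder t).deriv
  have hsmooth : ∀ (m : ℕ∞), ContDiff ℝ m u := by
    intro m
    rw [hu]
    refine contDiff_const.mul (contDiff_iff_contDiffAt.mpr fun x => ?_)
    exact (ContDiffAt.rpow_const_of_ne (by fun_prop) (hs x).ne')
  constructor
  · exact (hsmooth 1).contDiffOn
  · have h0 := ((hder 0).hasDerivWithinAt (s := Ici 0)).derivWithin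
      (uniqueDiffOn_Ici 0 0 self_mem_Ici)
    rw [h0]; ring
  · rw [hu]; norm_num
  · intro r _; rw [hu]; exact mul_pos ha (rpow_pos_of_pos (hs r) α)
  · intro r hr
    set F : ℝ → ℝ := fun t => -(D^k) * (t^n * (1+B*t^2)^γ) with hF
    have hFd : HasDerivAt F
        (-(D^k) * (((n:ℝ)*r^(n-1)) * (1+B*r^2)^γ + r^n * ((2*B*r)*γ*(1+B*r^2)^(γ-1)))) r := by
      exact (((hasDerivAt_pow n r).mul (hasDerivAt_base B γ r (hs r))).const_mul (-(D^k)))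
    have heq : flux n k u =ᶠ[nhds r] F := by
      filter_upwards [Ioi_mem_nhds hr] with t ht
      have ht0 : (0:ℝ) < t := ht
      have hX : 0 < (1+B*t^2)^(α-1) := rpow_pos_of_pos (hs t) _
      have habs : |deriv u t| = D * t * (1+B*t^2)^(α-1) := by
        rw [hderiv_eq t, show -D * t * (1+B*t^2)^(α-1) = -(D * t * (1+B*t^2)^(α-1)) by ring,
          abs_neg, abs_of_pos (by positivity)]
      have hpowk : (D * t * (1+B*t^2)^(α-1))^(k-1) * (D * t * (1+B*t^2)^(α-1))
          = (D * t * (1+B*t^2)^(α-1))^k := by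
        rw [← pow_succ, Nat.sub_add_cancel hk]
      have hXk : ((1+B*t^2)^(α-1))^k = (1+B*t^2)^γ := by
        rw [← Real.rpow_natCast ((1+B*t^2)^(α-1)) k, ← Real.rpow_mul (hs t).le, hαk]
      have htk : t^(n-k) * t^k = t^n := by
        rw [← pow_add, Nat.sub_add_cancel hkn]
      calc flux n k u t = t^(n-k) * (D * t * (1+B*t^2)^(α-1))^(k-1)
            * (-(D * t * (1+B*t^2)^(α-1))) := by
            rw [flux, habs, hderiv_eq t]; ring
        _ = -(t^(n-k) * (D * t * (1+B*t^2)^(α-1))^k) := by rw [← hpowk]; ring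
        _ = -(t^(n-k) * (D^k * t^k * ((1+B*t^2)^(α-1))^k)) := by rw [mul_pow, mul_pow]
        _ = -(D^k) * ((t^(n-k) * t^k) * (1+B*t^2)^γ) := by rw [hXk]; ring
        _ = F t := by rw [htk]
    refine HasDerivAt.congr_of_eventuallyEq ?_ heq
    refine hFd.congr_deriv (Eq.symm ?_)
    simp only [hu]
    have hrn : r^n = r^(n-1)*r := by rw [← pow_succ, Nat.sub_add_cancel (hk.trans hkn)]
    have hup : (a * (1+B*r^2)^α)^p = a^p * (1+B*r^2)^(γ-1) := by
      rw [Real.mul_rpow ha.le (rpow_pos_of_pos (hs r) α).le, ← Real.rpow_mul (hs r).le, hαp]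
    have hSg : (1+B*r^2)^γ = (1+B*r^2)^(γ-1) * (1+B*r^2) := by
      have h := Real.rpow_add_one (hs r).ne' (γ-1)
      rw [show γ-1+1 = γ by ring] at h
      exact h
    rw [hup, hrn, hSg]
    linear_combination (r^(n-1)*(1+B*r^2)^(γ-1)) * hconst
      + (D^k*r^(n-1)*(1+B*r^2)^(γ-1)*B*r^2) * h2γ
  · rw [hu]
    have h1 : ContDiff ℝ 2 (fun x : EuclideanSpace ℝ (Fin n) => 1 + B*‖x‖^2) :=
      contDiff_const.add (contDiff_const.mul (contDiff_norm_sq ℝ))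
    have h2 : ContDiff ℝ 2 (fun x : EuclideanSpace ℝ (Fin n) => (1+B*‖x‖^2)^α) :=
      contDiff_iff_contDiffAt.mpr fun x => (h1.contDiffAt).rpow_const_of_ne (hs _).ne'
    exact (contDiff_const.mul h2).neg

/-- in the critical case, the explicit function `u_ρ` is a regular solution
of the initial value problem. -/
theorem explicit_regular_solution (n k : ℕ) (p ρ : ℝ)
    (hn : 3 ≤ n) (hk1 : 1 < k) (hk2 : 2 * k < n) (hρ : 0 < ρ)
    (hp : p = ((n : ℝ) + 2) * k / ((n : ℝ) - 2 * k)) :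
    IsRegularSolution n k p (((1 / (k : ℝ)) * binomC n k) ^ (1 / (p - k)) * ρ)
      (fun r => ((1 / (k : ℝ)) * binomC n k) ^ (1 / (p - k)) * ρ *
        (1 + (k : ℝ) / ((n : ℝ) ^ (1 / (k : ℝ)) * ((n : ℝ) - 2 * k)) *
            (ρ ^ (((k : ℝ) + 1) / ((n : ℝ) - 2 * k)) * r) ^ 2)
          ^ (-((n : ℝ) - 2 * k) / (2 * k))) := by
  set ν := (n : ℝ) with hνdef
  set κ := (k : ℝ) with hκdef
  set C := binomC n k with hCdef
  set c := (1 / κ * C) ^ (1 / (p - κ)) with hcdef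
  set m := ρ ^ ((κ + 1) / (ν - 2 * κ)) with hmdef
  set K := κ / (ν ^ (1 / κ) * (ν - 2 * κ)) with hKdef
  set α := -(ν - 2 * κ) / (2 * κ) with hαdef

  have hκ : (0:ℝ) < κ := by rw [hκdef]; exact_mod_cast (by omega : 0 < k)
  have hν : (0:ℝ) < ν := by rw [hνdef]; exact_mod_cast (by omega : 0 < n)
  have hν2κ : (0:ℝ) < ν - 2 * κ := by
    rw [hνdef, hκdef]
    have : ((2*k:ℕ):ℝ) < (n:ℝ) := Nat.cast_lt.mpr hk2
    push_cast at this; linarith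
  have hC : 0 < C := by
    rw [hCdef]; unfold binomC
    exact_mod_cast Nat.choose_pos (by omega : k - 1 ≤ n - 1)
  have hX : (0:ℝ) < 1 / κ * C := by positivity
  have hc : 0 < c := by rw [hcdef]; exact Real.rpow_pos_of_pos hX _
  have hm : 0 < m := by rw [hmdef]; exact Real.rpow_pos_of_pos hρ _
  have hνκ : (0:ℝ) < ν ^ (1/κ) := Real.rpow_pos_of_pos hν _
  have hK : 0 < K := by rw [hKdef]; exact div_pos hκ (mul_pos hνκ hν2κ)
  have ha : 0 < c * ρ := mul_pos hc hρ
  have hB : 0 < K * m ^ 2 := by positivity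
  have hD0 : 0 < c * ρ * (K * m ^ 2) * (ν - 2 * κ) / κ := by positivity
  have hpκ : p - κ = 2 * κ * (κ + 1) / (ν - 2 * κ) := by
    rw [hp]; field_simp; ring
  have hpκ0 : 0 < p - κ := by rw [hpκ]; positivity
  have hu : (fun r : ℝ => c * ρ * (1 + K * (m * r) ^ 2) ^ α)
      = fun r : ℝ => c * ρ * (1 + K * m ^ 2 * r ^ 2) ^ α := by
    funext r
    rw [show 1 + K * (m * r) ^ 2 = 1 + K * m ^ 2 * r ^ 2 from by ring]
  rw [hu]
  have hD' : c * ρ * α * (2 * (K * m ^ 2)) = -(c * ρ * (K * m ^ 2) * (ν - 2 * κ) / κ) := by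
    rw [hαdef]; field_simp
  have h2γ : 2 * (-(ν/2)) = -(n:ℝ) := by rw [← hνdef]; ring
  have hαk : (α - 1) * (k:ℝ) = -(ν/2) := by
    rw [hαdef, ← hκdef]; field_simp; ring
  have hαp : α * p = -(ν/2) - 1 := by
    rw [hαdef, hp]; field_simp; ring
  -- the constant identity
  have hνk : (ν ^ (1/κ)) ^ k = ν := by
    rw [← Real.rpow_natCast (ν ^ (1/κ)) k, ← Real.rpow_mul hν.le, ← hκdef,
      one_div_mul_cancel hκ.ne', Real.rpow_one]
  have hck : c ^ k = c ^ κ := by rw [← Real.rpow_natCast c k, ← hκdef]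
  have hρk : ρ ^ k = ρ ^ κ := by rw [← Real.rpow_natCast ρ k, ← hκdef]
  have hmk : (m ^ 2) ^ k = ρ ^ (p - κ) := by
    rw [← pow_mul, ← Real.rpow_natCast m (2*k), hmdef, ← Real.rpow_mul hρ.le]
    congr 1
    rw [hpκ]
    push_cast
    rw [← hκdef]
    field_simp
  have hcsplit : c ^ p = c ^ κ * (C / κ) := by
    rw [hcdef, ← Real.rpow_mul hX.le, ← Real.rpow_mul hX.le,
      show 1 / (p - κ) * p = 1 / (p - κ) * κ + 1 from by field_simp; ring,
      Real.rpow_add hX, Real.rpow_one, one_div_mul_eq_div]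
  have hDval : c * ρ * (K * m ^ 2) * (ν - 2 * κ) / κ = c * ρ * m ^ 2 / ν ^ (1/κ) := by
    rw [hKdef]; field_simp
    exact div_self (show ν - κ * 2 ≠ 0 from ne_of_gt (by linarith))
  have hconst : (c * ρ * (K * m ^ 2) * (ν - 2 * κ) / κ) ^ k * (n:ℝ)
      = ((k:ℝ) / binomC n k) * (c * ρ) ^ p := by
    rw [hDval, ← hνdef, ← hκdef, ← hCdef]
    calc (c * ρ * m ^ 2 / ν ^ (1/κ)) ^ k * ν
        = (c * ρ * m ^ 2) ^ k / ((ν ^ (1/κ)) ^ k) * ν := by rw [div_pow]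
      _ = (c * ρ * m ^ 2) ^ k := by rw [hνk]; field_simp
      _ = c ^ κ * ρ ^ p := by
          rw [mul_pow, mul_pow, hck, hρk, hmk, mul_assoc, ← Real.rpow_add hρ,
            show κ + (p - κ) = p from by ring]
      _ = κ / C * (c * ρ) ^ p := by
          rw [Real.mul_rpow hc.le hρ.le, hcsplit]
          field_simp
  exact master n k p (c * ρ) (K * m ^ 2) α (-(ν/2)) (c * ρ * (K * m ^ 2) * (ν - 2 * κ) / κ) _
    (by omega) (by omega) ha hB hC hD0 hD' h2γ hαk hαp hconst rfl


end KHessianPaper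
end
end
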